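/- arXiv:2305.01745 — 8 statements merged into one kernel-verified Lean document; each statement's English description precedes it below -/
import Mathlib

section
/- Let r ∈ ℕ₀ and let λ ∈ (-1,1). Set r̃ := 2⌊r/2⌋ (so r̃ = r if r is even and r̃ = r-1 if r is odd). Then there exists a function f ∈ C^r with f ≡ 0 on [-1, λ] such that there is NO function g ∈ C^{r+1} satisfying both (a) g^(i)(λ) = f^(i)(λ) for all 0 ≤ i ≤ r̃, and (b) g(x) ≥ f(x) for all x in (λ-ε, λ+ε) for some ε > 0. That is, onesided approximation by C^{r+1}-smooth functions with Hermite interpolation of order r̃ at an interior point is impossible in general. -/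
open Set

lemma aux_cont {q : ℝ} (hq : 0 < q) : Continuous fun x : ℝ => max x 0 ^ q := by
  rw [continuous_iff_continuousAt]
  intro x
  exact (Real.continuousAt_rpow_const _ _ (Or.inr hq.le)).comp
    ((continuous_id.max continuous_const).continuousAt)

lemma aux_deriv {q : ℝ} (hq : 1 < q) (x : ℝ) :
    HasDerivAt (fun y : ℝ => max y 0 ^ q) (q * max x 0 ^ (q - 1)) x := by
  rcases lt_trichotomy x 0 with hx | hx | hx
  · have hmax : max x 0 = 0 := max_eq_right hx.le
    have hev : (fun y : ℝ => max y 0 ^ q) =ᶠ[nhds x] fun _ => (0:ℝ) := by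
      filter_upwards [Iio_mem_nhds hx] with y hy
      rw [max_eq_right (le_of_lt hy), Real.zero_rpow (by positivity)]
    have : HasDerivAt (fun _ : ℝ => (0:ℝ)) 0 x := hasDerivAt_const x 0
    have h2 := this.congr_of_eventuallyEq hev
    rw [hmax, Real.zero_rpow (by linarith), mul_zero]; exact h2
  · subst hx
    have hval : q * max (0:ℝ) 0 ^ (q - 1) = 0 := by
      rw [max_self, Real.zero_rpow (by linarith), mul_zero]
    rw [hval, hasDerivAt_iff_tendsto_slope]
    have hb : ∀ y : ℝ, ‖slope (fun y : ℝ => max y 0 ^ q) 0 y‖ ≤ |y| ^ (q - 1) := by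
      intro y
      have h0 : max (0:ℝ) 0 ^ q = 0 := by rw [max_self, Real.zero_rpow (by positivity)]
      rcases le_or_gt y 0 with hy | hy
      · have : max y 0 = 0 := max_eq_right hy
        simp [slope, this, h0, Real.zero_rpow (show q ≠ 0 by positivity)]
        positivity
      · have hm : max y 0 = y := max_eq_left hy.le
        have : slope (fun y : ℝ => max y 0 ^ q) 0 y = y ^ (q - 1) := by
          rw [slope_def_field, hm, h0, sub_zero, sub_zero, div_eq_iff hy.ne',
            ← Real.rpow_add_one hy.ne', sub_add_cancel]
        rw [this, Real.norm_eq_abs, abs_of_nonneg (Real.rpow_nonneg hy.le _),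
          abs_of_pos hy]
    have hten : Filter.Tendsto (fun y : ℝ => |y| ^ (q - 1)) (nhds 0) (nhds 0) := by
      have hc : ContinuousAt (fun y : ℝ => |y| ^ (q - 1)) 0 :=
        (Real.continuousAt_rpow_const _ _ (Or.inr (by linarith))).comp
          continuous_abs.continuousAt
      have h00 : |(0:ℝ)| ^ (q - 1) = 0 := by
        rw [abs_zero, Real.zero_rpow (by linarith)]
      have := hc.tendsto
      rwa [h00] at this
    exact squeeze_zero_norm hb (hten.mono_left nhdsWithin_le_nhds)
  · have hev : (fun y : ℝ => max y 0 ^ q) =ᶠ[nhds x] fun y => y ^ q := by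
      filter_upwards [Ioi_mem_nhds hx] with y hy
      rw [max_eq_left (le_of_lt hy)]
    have h1 : HasDerivAt (fun y : ℝ => y ^ q) (q * x ^ (q - 1)) x :=
      Real.hasDerivAt_rpow_const (Or.inl hx.ne')
    have h2 := h1.congr_of_eventuallyEq hev
    rw [max_eq_left hx.le]; exact h2

lemma aux_contDiff : ∀ (n : ℕ) (q : ℝ), (n : ℝ) < q → ContDiff ℝ n fun x : ℝ => max x 0 ^ q := by
  intro n
  induction n with
  | zero => intro q hq; exact contDiff_zero.mpr (aux_cont (by exact_mod_cast hq))
  | succ n ih =>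
    intro q hq
    have hq1 : 1 < q := by
      have : (0:ℝ) ≤ (n:ℝ) := Nat.cast_nonneg n
      push_cast at hq; linarith
    have hdiff : Differentiable ℝ fun x : ℝ => max x 0 ^ q :=
      fun x => (aux_deriv hq1 x).differentiableAt
    have hder : (deriv fun x : ℝ => max x 0 ^ q) = fun x => q * max x 0 ^ (q - 1) := by
      funext x; exact (aux_deriv hq1 x).deriv
    have : ContDiff ℝ n (deriv fun x : ℝ => max x 0 ^ q) := by
      rw [hder]
      exact contDiff_const.mul (ih (q - 1) (by push_cast at hq ⊢; linarith))
    rw [show ((n+1 : ℕ) : WithTop ℕ∞) = (n : WithTop ℕ∞) + 1 by push_cast; rfl,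
      contDiff_succ_iff_deriv]
    exact ⟨hdiff, by simp, this⟩

lemma auxB (lam : ℝ) (hlam : lam ∈ Set.Icc (-1:ℝ) 1) :
    ∀ (k : ℕ) (h : ℝ → ℝ),
    ContDiffOn ℝ (k+1 : ℕ) h (Set.Icc (-1:ℝ) 1) →
    (∀ i ≤ k, iteratedDerivWithin i h (Set.Icc (-1:ℝ) 1) lam = 0) →
    ∃ C, 0 ≤ C ∧ ∀ x ∈ Set.Icc (-1:ℝ) 1, |h x| ≤ C * |x - lam| ^ (k+1) := by
  have hs : UniqueDiffOn ℝ (Set.Icc (-1:ℝ) 1) := uniqueDiffOn_Icc (by norm_num)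
  intro k
  induction k with
  | zero =>
    intro h hh hz
    have hd' : ContinuousOn (derivWithin h (Set.Icc (-1:ℝ) 1)) (Set.Icc (-1:ℝ) 1) :=
      hh.continuousOn_derivWithin hs (by norm_num)
    obtain ⟨C, hC⟩ := (isCompact_Icc).exists_bound_of_continuousOn hd'
    refine ⟨max C 0, le_max_right _ _, fun x hx => ?_⟩
    have h0 : h lam = 0 := by simpa using hz 0 le_rfl
    have hdiff : DifferentiableOn ℝ h (Set.Icc (-1:ℝ) 1) :=
      hh.differentiableOn (by norm_num)
    have hmvt := (convex_Icc (-1:ℝ) 1).norm_image_sub_le_of_norm_hasDerivWithin_le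
      (C := max C 0) (f' := derivWithin h (Set.Icc (-1:ℝ) 1))
      (fun y hy => (hdiff y hy).hasDerivWithinAt)
      (fun y hy => (hC y hy).trans (le_max_left _ _)) hlam hx
    simpa [h0, Real.norm_eq_abs] using hmvt
  | succ k ih =>
    intro h hh hz
    set s := Set.Icc (-1:ℝ) 1
    set h' := derivWithin h s with hh'def
    have hh' : ContDiffOn ℝ (k+1 : ℕ) h' s := by
      apply hh.derivWithin hs
      exact_mod_cast le_refl ((k:WithTop ℕ∞) + 2)
    have hz' : ∀ i ≤ k, iteratedDerivWithin i h' s lam = 0 := by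
      intro i hi
      rw [← iteratedDerivWithin_succ']
      exact hz (i+1) (by omega)
    obtain ⟨C, hC0, hC⟩ := ih h' hh' hz'
    refine ⟨C, hC0, fun x hx => ?_⟩
    set t := Set.Icc (min lam x) (max lam x) with ht
    have hts : t ⊆ s := Set.Icc_subset_Icc (le_min hlam.1 hx.1) (max_le hlam.2 hx.2)
    have hbd : ∀ y ∈ t, ‖h' y‖ ≤ C * |x - lam| ^ (k+1) := by
      intro y hy
      have h1 : |y - lam| ≤ |x - lam| := by
        have hy1 := hy.1
        have hy2 := hy.2
        rcases le_total lam x with hc | hc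
        · have e1 : lam ⊓ x = lam := inf_eq_left.mpr hc
          have e2 : lam ⊔ x = x := sup_eq_right.mpr hc
          rw [ht, Set.mem_Icc, e1, e2] at hy
          exact abs_le.mpr ⟨by linarith [abs_nonneg (x - lam), hy.1],
            by linarith [le_abs_self (x - lam), hy.2]⟩
        · have e1 : lam ⊓ x = x := inf_eq_right.mpr hc
          have e2 : lam ⊔ x = lam := sup_eq_left.mpr hc
          rw [ht, Set.mem_Icc, e1, e2] at hy
          exact abs_le.mpr ⟨by linarith [neg_abs_le (x - lam), hy.1],
            by linarith [abs_nonneg (x - lam), hy.2]⟩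
      calc ‖h' y‖ ≤ C * |y - lam| ^ (k+1) := hC y (hts hy)
        _ ≤ C * |x - lam| ^ (k+1) :=
          mul_le_mul_of_nonneg_left (pow_le_pow_left₀ (abs_nonneg _) h1 _) hC0
    have hdiff : DifferentiableOn ℝ h s := hh.differentiableOn (by
      simp)
    have hmvt := (convex_Icc (min lam x) (max lam x)).norm_image_sub_le_of_norm_hasDerivWithin_le
      (f' := h')
      (fun y hy => ((hdiff y (hts hy)).hasDerivWithinAt).mono hts)
      hbd (Set.mem_Icc.mpr ⟨min_le_left _ _, le_max_left _ _⟩)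
      (Set.mem_Icc.mpr ⟨min_le_right _ _, le_max_right _ _⟩)
    have h0 : h lam = 0 := by simpa using hz 0 (by omega)
    rw [h0, sub_zero] at hmvt
    calc |h x| ≤ C * |x - lam| ^ (k+1) * ‖x - lam‖ := hmvt
      _ = C * |x - lam| ^ (k+2) := by rw [Real.norm_eq_abs]; ring

lemma aux_mono (lam : ℝ) (k : ℕ) :
    ∀ (i : ℕ), ∀ x ∈ Set.Icc (-1:ℝ) 1,
      iteratedDerivWithin i (fun y => (y - lam)^k) (Set.Icc (-1:ℝ) 1) x
        = (k.descFactorial i : ℝ) * (x - lam)^(k - i) := by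
  have hs : UniqueDiffOn ℝ (Set.Icc (-1:ℝ) 1) := uniqueDiffOn_Icc (by norm_num)
  intro i
  induction i with
  | zero => intro x hx; simp
  | succ i ih =>
    intro x hx
    rw [iteratedDerivWithin_succ]
    rw [derivWithin_congr (fun y hy => ih y hy) (ih x hx)]
    have hd : HasDerivAt (fun y : ℝ => (k.descFactorial i : ℝ) * (y - lam)^(k - i))
        ((k.descFactorial i : ℝ) * (((k - i : ℕ) : ℝ) * (x - lam)^(k - i - 1) * 1)) x :=
      (((hasDerivAt_id x).sub_const lam).pow (k - i)).const_mul _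
    rw [hd.hasDerivWithinAt.derivWithin (hs.uniqueDiffWithinAt hx)]
    rw [Nat.descFactorial_succ, Nat.sub_sub]
    push_cast
    ring

/-- Local onesided approximation with interpolatory constraints, negative result at an
interior point: for `r ∈ ℕ₀`, `λ ∈ (-1,1)` and `r̃ := 2⌊r/2⌋`, there is `f ∈ C^r[-1,1]`
vanishing on `[-1,λ]` such that no `g ∈ C^{r+1}[-1,1]` satisfies both
`g^{(i)}(λ) = f^{(i)}(λ)` for `0 ≤ i ≤ r̃` and `g ≥ f` on `(λ-ε, λ+ε) ∩ [-1,1]`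
for some `ε > 0`. -/
theorem statement5 (r : ℕ) (lam : ℝ) (hlam : lam ∈ Set.Ioo (-1 : ℝ) 1) :
    ∃ f : ℝ → ℝ, ContDiffOn ℝ r f (Set.Icc (-1 : ℝ) 1) ∧
      (∀ x ∈ Set.Icc (-1 : ℝ) lam, f x = 0) ∧
      ¬ ∃ g : ℝ → ℝ, ContDiffOn ℝ (r + 1 : ℕ) g (Set.Icc (-1 : ℝ) 1) ∧
        (∀ i : ℕ, i ≤ 2 * (r / 2) →
          iteratedDerivWithin i g (Set.Icc (-1 : ℝ) 1) lam
            = iteratedDerivWithin i f (Set.Icc (-1 : ℝ) 1) lam) ∧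
        (∃ ε : ℝ, 0 < ε ∧
          ∀ x ∈ Set.Ioo (lam - ε) (lam + ε) ∩ Set.Icc (-1 : ℝ) 1, f x ≤ g x) := by
  have hs : UniqueDiffOn ℝ (Set.Icc (-1:ℝ) 1) := uniqueDiffOn_Icc (by norm_num)
  have hlam' : lam ∈ Set.Icc (-1:ℝ) 1 := ⟨hlam.1.le, hlam.2.le⟩
  set p : ℝ := (r : ℝ) + 1/2 with hp
  have hrn : (0:ℝ) ≤ (r:ℝ) := Nat.cast_nonneg r
  have hp0 : (0:ℝ) < p := by rw [hp]; linarith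
  set f : ℝ → ℝ := fun x => max (x - lam) 0 ^ p with hfdef
  have hfC : ∀ n : ℕ, (n:ℝ) < p → ContDiff ℝ n f := by
    intro n hn
    have h2 := (aux_contDiff n p hn).comp (contDiff_id.sub (contDiff_const (c := lam)))
    exact h2
  refine ⟨f, (hfC r (by rw [hp]; linarith)).contDiffOn, ?_, ?_⟩
  · intro x hx
    rw [hfdef]
    simp only
    rw [max_eq_right (sub_nonpos.mpr hx.2), Real.zero_rpow hp0.ne']
  · rintro ⟨g, hg, hint, ε, hε, hge⟩
    set s := Set.Icc (-1:ℝ) 1 with hsdef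
    -- derivatives of f within s
    have key : ∀ i, i ≤ r → ∀ x ∈ s, iteratedDerivWithin i f s x
        = (∏ j ∈ Finset.range i, (p - j)) * max (x - lam) 0 ^ (p - i) := by
      intro i
      induction i with
      | zero => intro _ x hx; simp [hfdef]
      | succ i ih =>
        intro hir x hx
        have hi' : (i:ℝ) + 1 ≤ (r:ℝ) := by exact_mod_cast hir
        have hq : 1 < p - i := by rw [hp]; push_cast; linarith
        rw [iteratedDerivWithin_succ,
          derivWithin_congr (fun y hy => ih (by omega) y hy) (ih (by omega) x hx)]
        have hd : HasDerivAt
            (fun y : ℝ => (∏ j ∈ Finset.range i, (p - j)) * max (y - lam) 0 ^ (p - i))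
            ((∏ j ∈ Finset.range i, (p - j)) *
              ((p - i) * max (x - lam) 0 ^ (p - i - 1) * 1)) x := by
          refine HasDerivAt.const_mul _ ?_
          exact (aux_deriv hq (x - lam)).comp x ((hasDerivAt_id x).sub_const lam)
        rw [hd.hasDerivWithinAt.derivWithin (hs.uniqueDiffWithinAt hx)]
        rw [Finset.prod_range_succ]
        rw [show p - ((i:ℕ)+1 : ℕ) = p - i - 1 by push_cast; ring]
        ring
    have hfz : ∀ i, i ≤ r → iteratedDerivWithin i f s lam = 0 := by
      intro i hi
      rw [key i hi lam hlam']
      have h1 : max (lam - lam) 0 = 0 := by simp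
      have h2 : p - (i:ℝ) ≠ 0 := by
        have : (i:ℝ) ≤ (r:ℝ) := by exact_mod_cast hi
        rw [hp]; intro h; linarith [sub_eq_zero.mp h]
      rw [h1, Real.zero_rpow h2, mul_zero]
    have hm : 2 * (r / 2) ≤ r := by omega
    have gz : ∀ i, i ≤ 2*(r/2) → iteratedDerivWithin i g s lam = 0 :=
      fun i hi => (hint i hi).trans (hfz i (hi.trans hm))
    -- uniform right-side bound
    obtain ⟨C, hC0, H⟩ : ∃ C, 0 ≤ C ∧
        ∀ t : ℝ, 0 < t → lam + t ≤ 1 → g (lam + t) ≤ C * t ^ (r+1) := by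
      rcases Nat.even_or_odd r with he | ho
      · have heq : 2 * (r / 2) = r := by have := Nat.even_iff.mp he; omega
        obtain ⟨C, hC0, hC⟩ := auxB lam hlam' r g hg (fun i hi => gz i (by omega))
        refine ⟨C, hC0, fun t ht h1 => ?_⟩
        have hmem : lam + t ∈ s := ⟨by linarith [hlam.1], h1⟩
        calc g (lam+t) ≤ |g (lam+t)| := le_abs_self _
          _ ≤ C * |lam + t - lam| ^ (r+1) := hC (lam+t) hmem
          _ = C * t^(r+1) := by rw [show lam + t - lam = t by ring, abs_of_pos ht]
      · have hro : r % 2 = 1 := Nat.odd_iff.mp ho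
        have hfact : (0:ℝ) < (r.factorial : ℝ) := by exact_mod_cast r.factorial_pos
        set a := iteratedDerivWithin r g s lam with ha
        set P : ℝ → ℝ := fun y => a / (r.factorial : ℝ) * (y - lam)^r with hPdef
        have hPc : ContDiff ℝ (r+1 : ℕ) P :=
          contDiff_const.mul ((contDiff_id.sub contDiff_const).pow r)
        have hPval : ∀ i : ℕ, ∀ x ∈ s, iteratedDerivWithin i P s x
            = a / (r.factorial : ℝ) * ((r.descFactorial i : ℝ) * (x - lam)^(r - i)) := by
          intro i x hx
          rw [hPdef]
          rw [iteratedDerivWithin_const_mul hx hs (a / (r.factorial : ℝ))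
            (by exact ((contDiff_id.sub contDiff_const).pow r).contDiffWithinAt)]
          rw [aux_mono lam r i x hx]
        have h1cd : ContDiffOn ℝ (r+1:ℕ) (g - P) s := hg.sub hPc.contDiffOn
        have h1z : ∀ i, i ≤ r → iteratedDerivWithin i (g - P) s lam = 0 := by
          intro i hi
          have hgle : ContDiffOn ℝ i g s := hg.of_le (by exact_mod_cast Nat.le_succ_of_le hi)
          have hPle : ContDiffOn ℝ i P s := hPc.contDiffOn.of_le
            (by exact_mod_cast Nat.le_succ_of_le hi)
          rw [iteratedDerivWithin_sub hlam' hs (hgle lam hlam') (hPle lam hlam')]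
          rcases Nat.lt_or_ge i r with hir | hir
          · rw [gz i (by omega), hPval i lam hlam']
            rw [show lam - lam = 0 by ring, zero_pow (by omega : r - i ≠ 0)]
            ring
          · have hieq : i = r := le_antisymm hi hir
            subst hieq
            rw [hPval i lam hlam', Nat.descFactorial_self, Nat.sub_self, pow_zero, ← ha]
            field_simp
            ring
        obtain ⟨C, hC0, hC⟩ := auxB lam hlam' r (g - P) h1cd h1z
        have ha0 : a ≤ 0 := by
          by_contra hlt
          push_neg at hlt
          set t := min (min ((lam+1)/2) (ε/2)) (a / (2*(C * r.factorial + 1))) with htdef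
          have ht1 : (0:ℝ) < (lam+1)/2 := by linarith [hlam.1]
          have ht2 : (0:ℝ) < ε/2 := by linarith
          have ht3 : (0:ℝ) < a / (2*(C * r.factorial + 1)) := by positivity
          have ht0 : 0 < t := lt_min (lt_min ht1 ht2) ht3
          have hta : t ≤ (lam+1)/2 := le_trans (min_le_left _ _) (min_le_left _ _)
          have htb : t ≤ ε/2 := le_trans (min_le_left _ _) (min_le_right _ _)
          have htc : t ≤ a / (2*(C * r.factorial + 1)) := min_le_right _ _
          have hmem : lam - t ∈ s := ⟨by linarith [hlam.1], by linarith [hlam.2]⟩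
          have hgef : f (lam - t) ≤ g (lam - t) :=
            hge _ ⟨⟨by linarith, by linarith⟩, hmem⟩
          have hf0 : f (lam - t) = 0 := by
            rw [hfdef]
            simp only
            rw [max_eq_right (by linarith), Real.zero_rpow hp0.ne']
          have hbd := hC (lam - t) hmem
          have habs : |lam - t - lam| = t := by
            rw [show lam - t - lam = -t by ring, abs_neg, abs_of_pos ht0]
          rw [habs] at hbd
          have hsub : (g - P) (lam - t) = g (lam - t) - P (lam - t) := rfl
          have hPv : P (lam - t) = -(a / (r.factorial : ℝ) * t^r) := by
            rw [hPdef]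
            simp only
            rw [show lam - t - lam = -t by ring, Odd.neg_pow ho]
            ring
          have habs2 : g (lam - t) - P (lam - t) ≤ C * t^(r+1) := by
            calc g (lam - t) - P (lam - t) ≤ |(g - P) (lam - t)| := by
                  rw [hsub] at *; exact le_abs_self _
              _ ≤ C * t^(r+1) := hbd
          have hkey : a / (r.factorial : ℝ) * t^r ≤ C * t^(r+1) := by
            rw [hPv] at habs2
            rw [hf0] at hgef
            linarith
          have htr : (0:ℝ) < t^r := pow_pos ht0 r
          have hale : a ≤ C * (r.factorial : ℝ) * t := by
            have h2 : a * t^r ≤ C * (r.factorial : ℝ) * t * t^r := by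
              have e : t^(r+1) = t * t^r := by ring
              rw [e] at hkey
              have := mul_le_mul_of_nonneg_left hkey hfact.le
              calc a * t^r = (r.factorial : ℝ) * (a / (r.factorial : ℝ) * t^r) := by
                    field_simp
                _ ≤ (r.factorial : ℝ) * (C * (t * t^r)) := this
                _ = C * (r.factorial : ℝ) * t * t^r := by ring
            exact le_of_mul_le_mul_right h2 htr
          have hd0 : (0:ℝ) < 2*(C * r.factorial + 1) := by positivity
          have hD : (0:ℝ) ≤ C * r.factorial := by positivity
          have h8 : a ≤ C * (r.factorial : ℝ) * (a / (2*(C * r.factorial + 1))) :=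
            le_trans hale (mul_le_mul_of_nonneg_left htc hD)
          have h6 : a * (2*(C * r.factorial + 1)) ≤ C * (r.factorial : ℝ) * a :=
            (le_div_iff₀ hd0).mp (by rwa [← mul_div_assoc] at h8)
          nlinarith [mul_nonneg hD hlt.le]
        refine ⟨C, hC0, fun t ht h1 => ?_⟩
        have hmem : lam + t ∈ s := ⟨by linarith [hlam.1], h1⟩
        have hbd := hC (lam + t) hmem
        have habs : |lam + t - lam| = t := by
          rw [show lam + t - lam = t by ring, abs_of_pos ht]
        rw [habs] at hbd
        have hPv : P (lam + t) = a / (r.factorial : ℝ) * t^r := by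
          rw [hPdef]; simp only; rw [show lam + t - lam = t by ring]
        have htr : (0:ℝ) < t^r := pow_pos ht r
        have hPneg : P (lam + t) ≤ 0 := by
          rw [hPv]
          apply mul_nonpos_of_nonpos_of_nonneg
          · exact div_nonpos_of_nonpos_of_nonneg ha0 hfact.le
          · exact htr.le
        have hsub : (g - P) (lam + t) = g (lam + t) - P (lam + t) := rfl
        have h2 : g (lam + t) - P (lam + t) ≤ C * t^(r+1) := by
          rw [← hsub]; exact le_trans (le_abs_self _) hbd
        linarith
    -- final contradiction
    set t := min (min ((1-lam)/2) (ε/2)) ((1/(C+1))^2) with htdef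
    have ht1 : (0:ℝ) < (1-lam)/2 := by linarith [hlam.2]
    have ht2 : (0:ℝ) < ε/2 := by linarith
    have ht3 : (0:ℝ) < (1/(C+1))^2 := by positivity
    have ht0 : 0 < t := lt_min (lt_min ht1 ht2) ht3
    have hta : t ≤ (1-lam)/2 := le_trans (min_le_left _ _) (min_le_left _ _)
    have htb : t ≤ ε/2 := le_trans (min_le_left _ _) (min_le_right _ _)
    have htc : t ≤ (1/(C+1))^2 := min_le_right _ _
    have hts : lam + t ≤ 1 := by linarith
    have hmem : lam + t ∈ s := ⟨by linarith [hlam.1], hts⟩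
    have hgef : f (lam + t) ≤ g (lam + t) :=
      hge _ ⟨⟨by linarith, by linarith⟩, hmem⟩
    have hfv : f (lam + t) = t ^ p := by
      rw [hfdef]; simp only
      rw [show lam + t - lam = t by ring, max_eq_left ht0.le]
    have hH := H t ht0 hts
    have hcomb : t ^ p ≤ C * t ^ (r+1) := by rw [← hfv]; linarith
    have e1 : C * t^(r+1) = C * t^p * t^(1/2 : ℝ) := by
      rw [← Real.rpow_natCast t (r+1)]
      rw [show ((r+1:ℕ):ℝ) = p + 1/2 by rw [hp]; push_cast; ring]
      rw [Real.rpow_add ht0]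
      ring
    have h2 : t ^ (1/2:ℝ) = Real.sqrt t := (Real.sqrt_eq_rpow t).symm
    have h3 : Real.sqrt t ≤ 1/(C+1) := by
      calc Real.sqrt t ≤ Real.sqrt ((1/(C+1))^2) := Real.sqrt_le_sqrt htc
        _ = 1/(C+1) := Real.sqrt_sq (by positivity)
    have h4 : C * t^(1/2:ℝ) < 1 := by
      rw [h2]
      have hC1 : (0:ℝ) < C + 1 := by linarith
      calc C * Real.sqrt t ≤ C * (1/(C+1)) :=
            mul_le_mul_of_nonneg_left h3 hC0
        _ < 1 := by rw [mul_one_div, div_lt_one hC1]; linarith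
    have hppos : 0 < t ^ p := Real.rpow_pos_of_pos ht0 p
    rw [e1] at hcomb
    have h5 : C * t ^ p * t ^ (1/2:ℝ) < t ^ p := by
      calc C * t ^ p * t ^ (1/2:ℝ) = (C * t ^ (1/2:ℝ)) * t ^ p := by ring
        _ < 1 * t ^ p := mul_lt_mul_of_pos_right h4 hppos
        _ = t ^ p := one_mul _
    linarith
end

section
/- Let r ∈ ℕ₀ and let λ ∈ {-1, 1} be an endpoint of I. Then there exists a function f ∈ C^r such that there is NO function g ∈ C^{r+1} satisfying both (a) g^(i)(λ) = f^(i)(λ) for all 0 ≤ i ≤ r, and (b) g(x) ≥ f(x) for all x in (λ-ε, λ+ε) ∩ I for some ε > 0. That is, onesided approximation by C^{r+1}-smooth functions with Hermite interpolation of full order r at an endpoint is impossible in general. -/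
open Set

/-- If all derivatives of `g` up to order `r` vanish at `lam ∈ [-1,1]` and `g` is `C^{r+1}`,
then `|g x| ≤ M |x - lam|^{r+1}` on `[-1,1]`. -/
lemma aux_taylor_bound (r : ℕ) (g : ℝ → ℝ) (lam : ℝ) (hlamI : lam ∈ Icc (-1:ℝ) 1)
    (hg : ContDiffOn ℝ (r + 1 : ℕ) g (Icc (-1:ℝ) 1))
    (h0 : ∀ i ≤ r, iteratedDerivWithin i g (Icc (-1:ℝ) 1) lam = 0) :
    ∃ M : ℝ, 0 ≤ M ∧ ∀ x ∈ Icc (-1:ℝ) 1, |g x| ≤ M * |x - lam| ^ (r + 1) := by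
  set s : Set ℝ := Icc (-1:ℝ) 1 with hsdef
  have hs : UniqueDiffOn ℝ s := uniqueDiffOn_Icc (by norm_num)
  have hcont : ContinuousOn (iteratedDerivWithin (r+1) g s) s :=
    hg.continuousOn_iteratedDerivWithin (le_refl _) hs
  obtain ⟨M₀, hM₀⟩ := isCompact_Icc.exists_bound_of_continuousOn hcont
  set M := max M₀ 0 with hMdef
  have hMnn : 0 ≤ M := le_max_right _ _
  have hMb : ∀ x ∈ s, |iteratedDerivWithin (r+1) g s x| ≤ M := by
    intro x hx
    calc |iteratedDerivWithin (r+1) g s x| ≤ M₀ := by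
          simpa [Real.norm_eq_abs] using hM₀ x hx
      _ ≤ M := le_max_left _ _
  have key : ∀ j, j ≤ r + 1 → ∀ x ∈ s,
      |iteratedDerivWithin (r + 1 - j) g s x| ≤ M * |x - lam| ^ j := by
    intro j
    induction j with
    | zero => intro _ x hx; simpa using hMb x hx
    | succ j ih =>
      intro hj x hx
      have hjr : j ≤ r := by omega
      have hihj := ih (by omega)
      have hsub : r + 1 - j = (r - j) + 1 := by omega
      -- the function under consideration
      set h := iteratedDerivWithin (r + 1 - (j+1)) g s with hhdef
      have hrw : r + 1 - (j+1) = r - j := by omega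
      have hdiff : DifferentiableOn ℝ h s := by
        rw [hhdef, hrw]
        refine hg.differentiableOn_iteratedDerivWithin ?_ hs
        exact_mod_cast (by omega : r - j < r + 1)
      have husub : uIcc lam x ⊆ s := (ordConnected_Icc).uIcc_subset hlamI hx
      have hcvx : Convex ℝ (uIcc lam x) := convex_uIcc _ _
      have hder : ∀ t ∈ uIcc lam x,
          HasDerivWithinAt h (iteratedDerivWithin (r + 1 - j) g s t) (uIcc lam x) t := by
        intro t ht
        have hts : t ∈ s := husub ht
        have h1 : HasDerivWithinAt h (derivWithin h s t) s t :=
          (hdiff t hts).hasDerivWithinAt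
        have h2 : derivWithin h s t = iteratedDerivWithin (r + 1 - j) g s t := by
          rw [hhdef, hrw, hsub]
          exact (congrFun iteratedDerivWithin_succ t).symm
        rw [← h2]
        exact h1.mono husub
      have hbound : ∀ t ∈ uIcc lam x,
          ‖iteratedDerivWithin (r + 1 - j) g s t‖ ≤ M * |x - lam| ^ j := by
        intro t ht
        have hts : t ∈ s := husub ht
        have h1 := hihj t hts
        have h2 : |t - lam| ≤ |x - lam| := by
          rcases Set.mem_uIcc.mp ht with ⟨h3, h4⟩ | ⟨h3, h4⟩ <;>
          · rw [abs_le]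
            constructor <;> [nlinarith [le_abs_self (x - lam), neg_abs_le (x - lam)];
              nlinarith [le_abs_self (x - lam), neg_abs_le (x - lam)]]
        calc ‖iteratedDerivWithin (r + 1 - j) g s t‖ ≤ M * |t - lam| ^ j := by
              simpa [Real.norm_eq_abs] using h1
          _ ≤ M * |x - lam| ^ j := by
              gcongr
      have hmvt := hcvx.norm_image_sub_le_of_norm_hasDerivWithin_le hder hbound
        (left_mem_uIcc) (right_mem_uIcc)
      have hzero : h lam = 0 := by
        rw [hhdef, hrw]; exact h0 (r - j) (by omega)
      have : ‖h x - h lam‖ ≤ M * |x - lam| ^ j * ‖x - lam‖ := hmvt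
      rw [hzero, sub_zero, Real.norm_eq_abs, Real.norm_eq_abs] at this
      calc |h x| ≤ M * |x - lam| ^ j * |x - lam| := this
        _ = M * |x - lam| ^ (j + 1) := by ring

  refine ⟨M, hMnn, fun x hx => ?_⟩
  have := key (r+1) le_rfl x hx
  simpa using this

/-- Iterated derivatives (within `[-1,1]`) of `x ↦ (1 - lam x)^(r + 1/2)`. -/
lemma aux_f_formula (r : ℕ) (lam : ℝ) :
    ∀ i, i ≤ r → ∃ c : ℝ, ∀ x ∈ Icc (-1:ℝ) 1,
      iteratedDerivWithin i (fun x : ℝ => (1 - lam * x) ^ ((r:ℝ) + 1/2)) (Icc (-1:ℝ) 1) x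
        = c * (1 - lam * x) ^ ((r:ℝ) + 1/2 - i) := by
  have hs : UniqueDiffOn ℝ (Icc (-1:ℝ) 1) := uniqueDiffOn_Icc (by norm_num)
  intro i
  induction i with
  | zero =>
    intro _
    exact ⟨1, fun x _ => by simp⟩
  | succ i ih =>
    intro hi
    obtain ⟨c, hc⟩ := ih (by omega)
    set q : ℝ := (r:ℝ) + 1/2 - i with hq
    have hq1 : 1 ≤ q := by
      rw [hq]
      have : (i:ℝ) + 1 ≤ (r:ℝ) := by exact_mod_cast hi
      linarith
    refine ⟨c * (q * -lam), fun x hx => ?_⟩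
    have hstep : iteratedDerivWithin (i+1)
        (fun x : ℝ => (1 - lam * x) ^ ((r:ℝ) + 1/2)) (Icc (-1:ℝ) 1) x
        = derivWithin (fun x : ℝ => c * (1 - lam * x) ^ q) (Icc (-1:ℝ) 1) x := by
      rw [iteratedDerivWithin_succ]
      exact derivWithin_congr (fun y hy => hc y hy) (hc x hx)
    have hinner : HasDerivAt (fun x : ℝ => 1 - lam * x) (-lam) x := by
      simpa using ((hasDerivAt_id x).const_mul lam).const_sub 1
    have houter : HasDerivAt (fun y : ℝ => y ^ q) (q * (1 - lam * x) ^ (q - 1)) (1 - lam * x) :=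
      Real.hasDerivAt_rpow_const (Or.inr hq1)
    have hcomp : HasDerivAt (fun x : ℝ => c * (1 - lam * x) ^ q)
        (c * (q * (1 - lam * x) ^ (q - 1) * -lam)) x :=
      by have := (houter.comp x hinner).const_mul c; exact this
    rw [hstep, hcomp.hasDerivWithinAt.derivWithin (hs x hx)]
    have : (r:ℝ) + 1/2 - (i + 1 : ℕ) = q - 1 := by push_cast [hq]; ring
    rw [this]; ring

/-- Local onesided approximation with interpolatory constraints, negative result at an
endpoint: for `r ∈ ℕ₀` and `λ ∈ {-1, 1}`, there is `f ∈ C^r[-1,1]` such that no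
`g ∈ C^{r+1}[-1,1]` satisfies both `g^{(i)}(λ) = f^{(i)}(λ)` for `0 ≤ i ≤ r` and
`g ≥ f` on `(λ-ε, λ+ε) ∩ [-1,1]` for some `ε > 0`. -/
theorem statement6 (r : ℕ) (lam : ℝ) (hlam : lam = -1 ∨ lam = 1) :
    ∃ f : ℝ → ℝ, ContDiffOn ℝ r f (Set.Icc (-1 : ℝ) 1) ∧
      ¬ ∃ g : ℝ → ℝ, ContDiffOn ℝ (r + 1 : ℕ) g (Set.Icc (-1 : ℝ) 1) ∧
        (∀ i : ℕ, i ≤ r →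
          iteratedDerivWithin i g (Set.Icc (-1 : ℝ) 1) lam
            = iteratedDerivWithin i f (Set.Icc (-1 : ℝ) 1) lam) ∧
        (∃ ε : ℝ, 0 < ε ∧
          ∀ x ∈ Set.Ioo (lam - ε) (lam + ε) ∩ Set.Icc (-1 : ℝ) 1, f x ≤ g x) := by
  have hlam2 : lam * lam = 1 := by rcases hlam with h | h <;> rw [h] <;> norm_num
  have hlamI : lam ∈ Icc (-1:ℝ) 1 := by rcases hlam with h | h <;> rw [h] <;> norm_num
  set p : ℝ := (r:ℝ) + 1/2 with hpdef
  refine ⟨fun x => (1 - lam * x) ^ p, ?_, ?_⟩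
  · have h1 : ContDiff ℝ r (fun y : ℝ => y ^ p) :=
      Real.contDiff_rpow_const_of_le (by rw [hpdef]; linarith)
    have h2 : ContDiff ℝ r (fun x : ℝ => 1 - lam * x) := by fun_prop
    exact (h1.comp h2).contDiffOn
  rintro ⟨g, hg, hint, ε, hε, hge⟩
  -- all derivatives of f (hence g) up to order r vanish at lam
  have hfzero : ∀ i ≤ r,
      iteratedDerivWithin i (fun x : ℝ => (1 - lam * x) ^ p) (Icc (-1:ℝ) 1) lam = 0 := by
    intro i hi
    obtain ⟨c, hc⟩ := aux_f_formula r lam i hi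
    rw [hc lam hlamI, show 1 - lam * lam = 0 by rw [hlam2]; ring,
      Real.zero_rpow (by
        have : (i:ℝ) ≤ (r:ℝ) := by exact_mod_cast hi
        intro h; nlinarith)]
    ring
  have h0 : ∀ i ≤ r, iteratedDerivWithin i g (Icc (-1:ℝ) 1) lam = 0 := by
    intro i hi; rw [hint i hi]; exact hfzero i hi
  obtain ⟨M, hM0, hMb⟩ := aux_taylor_bound r g lam hlamI hg h0
  -- choose a point x close to lam
  set t : ℝ := min ε (min 1 (1/(M+1)^2)) / 2 with htdef
  have hMpos : (0:ℝ) < M + 1 := by linarith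
  have ht : 0 < t := by
    rw [htdef]; positivity
  have htε : t < ε := by
    rw [htdef]
    have := min_le_left ε (min 1 (1/(M+1)^2))
    linarith
  have ht1 : t ≤ 1 := by
    rw [htdef]
    have h1 := min_le_right ε (min 1 (1/(M+1)^2))
    have h2 := min_le_left (1:ℝ) (1/(M+1)^2)
    linarith
  have htM : t < 1/(M+1)^2 := by
    rw [htdef]
    have h1 := min_le_right ε (min 1 (1/(M+1)^2))
    have h2 := min_le_right (1:ℝ) (1/(M+1)^2)
    have h3 : (0:ℝ) < 1/(M+1)^2 := by positivity
    linarith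
  set x : ℝ := lam - lam * t with hxdef
  have hxI : x ∈ Icc (-1:ℝ) 1 := by
    rw [hxdef]; rcases hlam with h | h <;> rw [h] <;> constructor <;> simp <;> linarith
  have hxIoo : x ∈ Ioo (lam - ε) (lam + ε) := by
    rw [hxdef]; rcases hlam with h | h <;> rw [h] <;> constructor <;> simp <;> linarith
  have hu : 1 - lam * x = t := by
    rw [hxdef]; linear_combination (t - 1) * hlam2
  have habs : |x - lam| = t := by
    rw [hxdef]
    have : lam - lam * t - lam = -(lam * t) := by ring
    rw [this, abs_neg, abs_mul]
    rcases hlam with h | h <;> rw [h] <;> simp [abs_of_pos ht]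
  -- the contradiction
  have hfg : (1 - lam * x) ^ p ≤ g x := hge x ⟨hxIoo, hxI⟩
  have hgb : g x ≤ M * t ^ (r + 1) := by
    have := hMb x hxI
    rw [habs] at this
    calc g x ≤ |g x| := le_abs_self _
      _ ≤ M * t ^ (r + 1) := this
  have hsq : Real.sqrt t < 1 / (M + 1) := by
    rw [show (1:ℝ)/(M+1)^2 = (1/(M+1))^2 by rw [div_pow, one_pow]] at htM
    exact (Real.sqrt_lt' (by positivity)).mpr htM
  have hsq2 : (M + 1) * Real.sqrt t < 1 := by
    rw [lt_div_iff₀ hMpos] at hsq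
    linarith
  have hMsqrt : M * Real.sqrt t < 1 := by
    have := Real.sqrt_nonneg t
    nlinarith
  have hkey : t ^ p * Real.sqrt t = t ^ (r + 1) := by
    rw [Real.sqrt_eq_rpow, ← Real.rpow_add ht, ← Real.rpow_natCast t (r + 1)]
    congr 1
    push_cast [hpdef]; ring
  have htp : (0:ℝ) < t ^ p := Real.rpow_pos_of_pos ht p
  have hlt : M * t ^ (r + 1) < t ^ p := by
    rw [← hkey]
    calc M * (t ^ p * Real.sqrt t) = (M * Real.sqrt t) * t ^ p := by ring
      _ < 1 * t ^ p := by exact mul_lt_mul_of_pos_right hMsqrt htp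
      _ = t ^ p := one_mul _
  rw [hu] at hfg
  linarith
end

section
/- Let r ∈ ℕ and let λ ∈ (-1,1). Set r̂ := 2⌈r/2⌉ - 1 (so r̂ = r if r is odd and r̂ = r-1 if r is even). Then there exists a function f ∈ C^r with f ≡ 0 on [-1, λ] such that there is NO function g ∈ C^{r+1} satisfying all of: (a) g^(i)(λ) = f^(i)(λ) for all 0 ≤ i ≤ r̂; (b) g(x) ≤ f(x) for all x ∈ (λ-ε, λ]; and (c) g(x) ≥ f(x) for all x ∈ [λ, λ+ε), for some ε > 0. That is, intertwining approximation by C^{r+1}-smooth functions with Hermite interpolation of order r̂ at the sign-change point is impossible in general. -/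
set_option maxHeartbeats 1000000

open Set Real Filter

section Aux

noncomputable def phi (α : ℝ) (x : ℝ) : ℝ := (max x 0) ^ α

lemma phi_of_nonpos {α x : ℝ} (hα : α ≠ 0) (hx : x ≤ 0) : phi α x = 0 := by
  simp [phi, max_eq_right hx, Real.zero_rpow hα]

lemma phi_of_nonneg {α x : ℝ} (hx : 0 ≤ x) : phi α x = x ^ α := by
  simp [phi, max_eq_left hx]

lemma phi_nonneg (α x : ℝ) : 0 ≤ phi α x := Real.rpow_nonneg (le_max_right _ _) _

lemma continuous_phi {α : ℝ} (hα : 0 < α) : Continuous (phi α) := by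
  have h1 : Continuous (fun x : ℝ => max x 0) := continuous_id.max continuous_const
  rw [continuous_iff_continuousAt]
  intro x
  exact (Real.continuousAt_rpow_const _ _ (Or.inr hα.le)).comp h1.continuousAt

lemma hasDerivAt_phi {α : ℝ} (hα : 1 < α) (x : ℝ) :
    HasDerivAt (phi α) (α * phi (α - 1) x) x := by
  rcases lt_trichotomy x 0 with hx | hx | hx
  · have h0 : phi α =ᶠ[nhds x] (fun _ => (0:ℝ)) := by
      filter_upwards [Iio_mem_nhds hx] with y hy
      exact phi_of_nonpos (by positivity) (le_of_lt hy)
    have h2 := (hasDerivAt_const x (0:ℝ)).congr_of_eventuallyEq h0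
    rw [phi_of_nonpos (by linarith) hx.le, mul_zero]
    exact h2
  · subst hx
    have hb : phi (α-1) 0 = 0 := phi_of_nonpos (by linarith) le_rfl
    rw [hb, mul_zero]
    rw [hasDerivAt_iff_tendsto_slope]
    have hsq : ∀ y : ℝ, y ≠ 0 → |slope (phi α) 0 y| ≤ |y| ^ (α - 1) := by
      intro y hy
      rcases le_or_gt y 0 with h | h
      · rw [slope_def_field, phi_of_nonpos (by linarith) h, phi_of_nonpos (by linarith) le_rfl]
        simp
        positivity
      · rw [slope_def_field, phi_of_nonneg h.le, phi_of_nonpos (by linarith) le_rfl,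
          abs_of_pos h]
        rw [sub_zero, sub_zero, div_eq_mul_inv, ← Real.rpow_neg_one y,
          ← Real.rpow_add h, ← sub_eq_add_neg]
        rw [abs_of_nonneg (Real.rpow_nonneg h.le _)]
    have hb2 : Tendsto (fun y : ℝ => |y| ^ (α - 1)) (nhds 0) (nhds 0) := by
      have h1 : Tendsto (fun y : ℝ => y ^ (α - 1)) (nhds 0) (nhds 0) := by
        have := (Real.continuousAt_rpow_const 0 (α-1) (Or.inr (by linarith))).tendsto
        simpa [Real.zero_rpow (show α - 1 ≠ 0 by linarith)] using this
      have h2 : Tendsto (fun y : ℝ => |y|) (nhds (0:ℝ)) (nhds 0) := by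
        simpa using continuous_abs.tendsto (0:ℝ)
      exact h1.comp h2
    apply squeeze_zero_norm' _ (hb2.mono_left nhdsWithin_le_nhds)
    filter_upwards [self_mem_nhdsWithin] with y hy
    exact hsq y hy
  · have h0 : phi α =ᶠ[nhds x] (fun y => y ^ α) := by
      filter_upwards [Ioi_mem_nhds hx] with y hy
      exact phi_of_nonneg (le_of_lt hy)
    have h1 : HasDerivAt (fun y : ℝ => y ^ α) (α * x ^ (α - 1)) x :=
      Real.hasDerivAt_rpow_const (Or.inl (ne_of_gt hx))
    have h2 := h1.congr_of_eventuallyEq h0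
    rw [phi_of_nonneg hx.le]
    exact h2

lemma contDiff_phi : ∀ (n : ℕ) (α : ℝ), (n : ℝ) < α → ContDiff ℝ n (phi α) := by
  intro n
  induction n with
  | zero =>
    intro α hα
    rw [show ((0:ℕ) : WithTop ℕ∞) = 0 from rfl, contDiff_zero]
    exact continuous_phi (by exact_mod_cast hα)
  | succ n IH =>
    intro α hα
    push_cast at hα
    have hn0 : (0:ℝ) ≤ n := Nat.cast_nonneg n
    have hα1 : 1 < α := by linarith
    have hd : deriv (phi α) = fun x => α * phi (α - 1) x := by
      funext x; exact (hasDerivAt_phi hα1 x).deriv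
    rw [show ((n+1 : ℕ) : WithTop ℕ∞) = (n : WithTop ℕ∞) + 1 by norm_cast]
    rw [contDiff_succ_iff_deriv]
    refine ⟨fun x => (hasDerivAt_phi hα1 x).differentiableAt, by simp, ?_⟩
    rw [hd]
    exact contDiff_const.mul (IH (α - 1) (by push_cast; linarith))

/-- iterated derivative of shifted phi -/
lemma iteratedDeriv_phi (lam α : ℝ) :
    ∀ (i : ℕ), (i : ℝ) < α →
      iteratedDeriv i (fun x => phi α (x - lam)) =
        fun x => (∏ j ∈ Finset.range i, (α - j)) * phi (α - i) (x - lam) := by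
  intro i
  induction i with
  | zero => intro _; simp [iteratedDeriv_zero]
  | succ n IH =>
    intro hα
    push_cast at hα
    have hn0 : (0:ℝ) ≤ n := Nat.cast_nonneg n
    have IH' := IH (by linarith)
    rw [iteratedDeriv_succ, IH']
    funext x
    have h1 : HasDerivAt (fun y : ℝ => phi (α - n) (y - lam))
        ((α - n) * phi (α - n - 1) (x - lam)) x := by
      have := (hasDerivAt_phi (by linarith : 1 < α - n) (x - lam)).comp x
        ((hasDerivAt_id x).sub_const lam)
      exact this.congr_deriv (mul_one _)
    have h2 := (h1.const_mul (∏ j ∈ Finset.range n, (α - j))).deriv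
    rw [h2]
    rw [Finset.prod_range_succ]
    push_cast
    rw [show α - (n:ℝ) - 1 = α - ((n:ℝ)+1) by ring] at h2 ⊢
    rw [mul_assoc]


lemma idw_eq {f : ℝ → ℝ} {n : ℕ} (hf : ContDiff ℝ (n:ℕ∞) f) {s : Set ℝ}
    (hs : UniqueDiffOn ℝ s) :
    ∀ i ≤ n, ∀ x ∈ s, iteratedDerivWithin i f s x = iteratedDeriv i f x := by
  intro i
  induction i with
  | zero => intro _ x _; simp
  | succ i IH =>
    intro hi x hx
    rw [iteratedDerivWithin_succ, iteratedDeriv_succ]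
    rw [derivWithin_congr (fun y hy => IH (by omega) y hy) (IH (by omega) x hx)]
    exact DifferentiableAt.derivWithin
      (hf.differentiable_iteratedDeriv i (by exact_mod_cast hi) x) (hs x hx)


lemma key_bound {g : ℝ → ℝ} {r : ℕ} {lam M : ℝ}
    (hg : ContDiffOn ℝ ((r:ℕ∞)+1) g (Icc (-1:ℝ) 1))
    (hlam : lam ∈ Icc (-1:ℝ) 1)
    (hM : ∀ y ∈ Icc (-1:ℝ) 1, |iteratedDerivWithin (r+1) g (Icc (-1:ℝ) 1) y| ≤ M)
    (hzero : ∀ i, i < r → iteratedDerivWithin i g (Icc (-1:ℝ) 1) lam = 0) :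
    ∀ x ∈ Icc (-1:ℝ) 1,
      |g x - (iteratedDerivWithin r g (Icc (-1:ℝ) 1) lam) / r.factorial * (x - lam) ^ r|
        ≤ M * |x - lam| ^ (r + 1) := by
  set s : Set ℝ := Icc (-1:ℝ) 1 with hs_def
  have hs : UniqueDiffOn ℝ s := uniqueDiffOn_Icc (by norm_num)
  set G : ℕ → ℝ → ℝ := fun i => iteratedDerivWithin i g s with hG
  set b : ℝ := G r lam with hb
  -- derivative facts
  have hder : ∀ i, i ≤ r → ∀ y ∈ s, HasDerivWithinAt (G i) (G (i+1) y) s y := by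
    intro i hi y hy
    have hdiff : DifferentiableWithinAt ℝ (G i) s y :=
      hg.differentiableOn_iteratedDerivWithin
        (by exact_mod_cast Nat.lt_succ_of_le hi) hs y hy
    have h1 := hdiff.hasDerivWithinAt
    rwa [show derivWithin (G i) s y = G (i+1) y from
      (congrFun (iteratedDerivWithin_succ (n := i) (f := g) (s := s)) y).symm] at h1
  -- main chain
  have main : ∀ j, j ≤ r → ∀ x ∈ s,
      |G (r - j) x - b / (j.factorial) * (x - lam) ^ j| ≤ M * |x - lam| ^ (j + 1) := by
    intro j
    induction j with
    | zero =>
      intro _ x hx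
      have h1 : ∀ y ∈ uIcc lam x, HasDerivWithinAt (G r) (G (r+1) y) (uIcc lam x) y :=
        fun y hy => (hder r le_rfl y (uIcc_subset_Icc hlam hx hy)).mono
          (uIcc_subset_Icc hlam hx)
      have h2 : ∀ y ∈ uIcc lam x, ‖G (r+1) y‖ ≤ M :=
        fun y hy => hM y (uIcc_subset_Icc hlam hx hy)
      have := (convex_uIcc lam x).norm_image_sub_le_of_norm_hasDerivWithin_le h1 h2
        left_mem_uIcc right_mem_uIcc
      simp only [Nat.sub_zero, Nat.factorial_zero, Nat.cast_one, div_one, pow_zero, mul_one,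
        pow_one]
      simpa [Real.norm_eq_abs] using this
    | succ j IH =>
      intro hj x hx
      have hj' : j ≤ r := by omega
      have IH' := IH hj'
      -- the auxiliary function
      set h : ℝ → ℝ := fun y => G (r - (j+1)) y - b / ((j+1).factorial) * (y - lam) ^ (j+1)
        with hh
      have hsub : r - (j+1) + 1 = r - j := by omega
      have hderh : ∀ y ∈ uIcc lam x,
          HasDerivWithinAt h (G (r - j) y - b / (j.factorial) * (y - lam) ^ j)
            (uIcc lam x) y := by
        intro y hy
        have hy' : y ∈ s := uIcc_subset_Icc hlam hx hy
        have h1 : HasDerivWithinAt (G (r - (j+1))) (G (r - j) y) (uIcc lam x) y := by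
          have := (hder (r - (j+1)) (by omega) y hy').mono (uIcc_subset_Icc hlam hx)
          rwa [hsub] at this
        have h2 : HasDerivAt (fun y : ℝ => b / ((j+1).factorial) * (y - lam) ^ (j+1))
            (b / (j.factorial) * (y - lam) ^ j) y := by
          have hp : HasDerivAt (fun y : ℝ => (y - lam) ^ (j+1))
              ((j+1) * (y - lam) ^ j) y := by
            have := ((hasDerivAt_id y).sub_const lam).fun_pow (j+1)
            simpa using this
          have := hp.const_mul (b / ((j+1).factorial))
          refine this.congr_deriv ?_
          rw [Nat.factorial_succ]
          push_cast
          field_simp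
        exact h1.sub h2.hasDerivWithinAt
      have hbound : ∀ y ∈ uIcc lam x,
          ‖G (r - j) y - b / (j.factorial) * (y - lam) ^ j‖ ≤ M * |x - lam| ^ (j + 1) := by
        intro y hy
        have hy' : y ∈ s := uIcc_subset_Icc hlam hx hy
        have h1 := IH' y hy'
        have h2 : |y - lam| ≤ |x - lam| := by
          exact abs_sub_left_of_mem_uIcc hy
        calc ‖G (r - j) y - b / (j.factorial) * (y - lam) ^ j‖
            ≤ M * |y - lam| ^ (j+1) := h1
          _ ≤ M * |x - lam| ^ (j+1) := by
              apply mul_le_mul_of_nonneg_left (pow_le_pow_left₀ (abs_nonneg _) h2 _)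
              -- need 0 ≤ M
              have := (abs_nonneg (G (r+1) lam)).trans (hM lam hlam)
              exact this
      have hMVT := (convex_uIcc lam x).norm_image_sub_le_of_norm_hasDerivWithin_le
        hderh hbound left_mem_uIcc right_mem_uIcc
      have hzero' : h lam = 0 := by
        have hz := hzero (r - (j+1)) (by omega)
        simp only [hh, hG] at hz ⊢
        rw [hz]
        simp
      rw [Real.norm_eq_abs] at hMVT
      rw [hzero', sub_zero, Real.norm_eq_abs] at hMVT
      calc |G (r - (j+1)) x - b / ((j+1).factorial) * (x - lam) ^ (j+1)|
          = |h x| := rfl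
        _ ≤ M * |x - lam| ^ (j+1) * |x - lam| := hMVT
        _ = M * |x - lam| ^ (j+1+1) := by ring
  have := main r le_rfl
  simpa [hG, hb] using this

end Aux

/-- Local intertwining approximation with interpolation at a sign-change point, negative
result: for `r ∈ ℕ`, `λ ∈ (-1,1)` and `r̂ := 2⌈r/2⌉ - 1`, there is `f ∈ C^r[-1,1]`
vanishing on `[-1,λ]` such that no `g ∈ C^{r+1}[-1,1]` satisfies all of
`g^{(i)}(λ) = f^{(i)}(λ)` for `0 ≤ i ≤ r̂`, `g ≤ f` on `(λ-ε, λ] ∩ [-1,1]` and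
`g ≥ f` on `[λ, λ+ε) ∩ [-1,1]` for some `ε > 0`. -/
theorem statement7 (r : ℕ) (hr : 1 ≤ r) (lam : ℝ) (hlam : lam ∈ Set.Ioo (-1 : ℝ) 1) :
    ∃ f : ℝ → ℝ, ContDiffOn ℝ r f (Set.Icc (-1 : ℝ) 1) ∧
      (∀ x ∈ Set.Icc (-1 : ℝ) lam, f x = 0) ∧
      ¬ ∃ g : ℝ → ℝ, ContDiffOn ℝ (r + 1 : ℕ) g (Set.Icc (-1 : ℝ) 1) ∧
        (∀ i : ℕ, i ≤ 2 * ((r + 1) / 2) - 1 →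
          iteratedDerivWithin i g (Set.Icc (-1 : ℝ) 1) lam
            = iteratedDerivWithin i f (Set.Icc (-1 : ℝ) 1) lam) ∧
        (∃ ε : ℝ, 0 < ε ∧
          (∀ x ∈ Set.Ioc (lam - ε) lam ∩ Set.Icc (-1 : ℝ) 1, g x ≤ f x) ∧
          (∀ x ∈ Set.Ico lam (lam + ε) ∩ Set.Icc (-1 : ℝ) 1, f x ≤ g x)) := by
  obtain ⟨hlam1, hlam2⟩ := hlam
  set α : ℝ := (r : ℝ) + 1/2 with hα_def
  have hα_pos : (0:ℝ) < α := by positivity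
  have hrα : (r : ℝ) < α := by simp [hα_def]
  set f : ℝ → ℝ := fun x => phi α (x - lam) with hf_def
  have hf_smooth : ContDiff ℝ r f :=
    (contDiff_phi r α hrα).comp (contDiff_id.sub contDiff_const)
  have hf_zero : ∀ x ≤ lam, f x = 0 := fun x hx =>
    phi_of_nonpos (ne_of_gt hα_pos) (by linarith)
  set s : Set ℝ := Icc (-1:ℝ) 1 with hs_def
  have hsU : UniqueDiffOn ℝ s := uniqueDiffOn_Icc (by norm_num)
  have hlam_mem : lam ∈ s := ⟨hlam1.le, hlam2.le⟩
  -- iterated derivatives of f vanish at lam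
  have hfW : ∀ i ≤ r, iteratedDerivWithin i f s lam = 0 := by
    intro i hi
    rw [idw_eq hf_smooth hsU i hi lam hlam_mem]
    rw [iteratedDeriv_phi lam α i (lt_of_le_of_lt (by exact_mod_cast hi) hrα)]
    have : phi (α - i) (lam - lam) = 0 := by
      apply phi_of_nonpos _ (by simp)
      have : (i:ℝ) < α := lt_of_le_of_lt (by exact_mod_cast hi) hrα
      intro h; rw [sub_eq_zero] at h; exact absurd h.symm (ne_of_lt this)
    have h0 : lam - lam = 0 := by ring
    rw [h0] at this
    simp only []
    rw [h0, this, mul_zero]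
  refine ⟨f, hf_smooth.contDiffOn, fun x hx => hf_zero x hx.2, ?_⟩
  rintro ⟨g, hg, hint, ε, hε, hleft, hright⟩
  set rh : ℕ := 2 * ((r + 1) / 2) - 1 with hrh_def
  have hrh1 : r - 1 ≤ rh := by omega
  have hrh2 : rh ≤ r := by omega
  -- g's iterated derivatives vanish at lam below r
  have hgzero : ∀ i, i < r → iteratedDerivWithin i g s lam = 0 := by
    intro i hi
    rw [hint i (by omega)]
    exact hfW i (by omega)
  -- bound on top derivative
  have hg' : ContDiffOn ℝ ((r:ℕ∞)+1) g s := by exact_mod_cast hg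
  have hcont : ContinuousOn (iteratedDerivWithin (r+1) g s) s :=
    hg'.continuousOn_iteratedDerivWithin (by exact_mod_cast le_refl ((r:WithTop ℕ∞)+1)) hsU
  obtain ⟨M, hM⟩ := (isCompact_Icc (a := (-1:ℝ)) (b := 1)).exists_bound_of_continuousOn hcont
  have hM' : ∀ y ∈ s, |iteratedDerivWithin (r+1) g s y| ≤ M := hM
  have hM0 : 0 ≤ M := le_trans (abs_nonneg _) (hM' lam hlam_mem)
  set b : ℝ := iteratedDerivWithin r g s lam with hb_def
  have hkey := key_bound hg' hlam_mem hM' hgzero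
  have hfact : (0:ℝ) < r.factorial := by exact_mod_cast r.factorial_pos
  -- step 1 : b ≤ 0
  have hb_le : b ≤ 0 := by
    rcases Nat.even_or_odd r with hre | hro
    · -- r even : use left inequality
      obtain ⟨k, hk⟩ := hre
      by_contra hb
      push_neg at hb
      set t : ℝ := min (min (ε/2) ((lam+1)/2)) (b / (r.factorial * M + 1)) with ht_def
      have ht_pos : 0 < t := by
        apply lt_min (lt_min (by linarith) (by linarith))
        positivity
      have ht1 : t ≤ ε/2 := le_trans (min_le_left _ _) (min_le_left _ _)
      have ht2 : t ≤ (lam+1)/2 := le_trans (min_le_left _ _) (min_le_right _ _)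
      have ht3 : t ≤ b / (r.factorial * M + 1) := min_le_right _ _
      set x : ℝ := lam - t with hx_def
      have hx_mem : x ∈ s := ⟨by simp only [hx_def]; linarith, by simp only [hx_def]; linarith⟩
      have hgx_le : g x ≤ 0 := by
        have := hleft x ⟨⟨by simp only [hx_def]; linarith, by simp only [hx_def]; linarith⟩, hx_mem⟩
        rwa [hf_zero x (by simp only [hx_def]; linarith)] at this
      have hk1 := hkey x hx_mem
      have hxl : x - lam = -t := by rw [hx_def]; ring
      rw [hxl] at hk1
      have hev : Even r := ⟨k, hk⟩
      rw [hev.neg_pow] at hk1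
      rw [abs_neg, abs_of_pos ht_pos] at hk1
      have h2 : b / r.factorial * t ^ r - g x ≤ M * t ^ (r+1) := by
        have := abs_le.1 hk1
        linarith [this.2, neg_abs_le (g x - b / r.factorial * t ^ r)]
      have h3 : b / r.factorial * t ^ r ≤ M * t ^ (r+1) := by linarith
      have htr : (0:ℝ) < t ^ r := pow_pos ht_pos r
      have h4 : b ≤ r.factorial * M * t := by
        rw [pow_succ] at h3
        have h3' : b * t ^ r ≤ (r.factorial * M * t) * t ^ r := by
          have hmul := mul_le_mul_of_nonneg_left h3 hfact.le
          calc b * t ^ r = r.factorial * (b / r.factorial * t ^ r) := by field_simp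
            _ ≤ r.factorial * (M * (t ^ r * t)) := hmul
            _ = (r.factorial * M * t) * t ^ r := by ring
        exact le_of_mul_le_mul_right h3' htr
      have h5 : r.factorial * M * t ≤ r.factorial * M * (b / (r.factorial * M + 1)) := by
        apply mul_le_mul_of_nonneg_left ht3
        positivity
      have h6 : (r.factorial : ℝ) * M * (b / (r.factorial * M + 1)) < b := by
        have hpos : (0:ℝ) < r.factorial * M + 1 := by positivity
        have hd : b / (r.factorial * M + 1) * (r.factorial * M + 1) = b :=
          div_mul_cancel₀ _ (ne_of_gt hpos)
        have hq : 0 < b / (r.factorial * M + 1) := div_pos hb hpos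
        nlinarith
      linarith
    · -- r odd : b = 0 from interpolation
      have : r ≤ rh := by
        obtain ⟨k, hk⟩ := hro
        omega
      rw [hb_def, hint r this, hfW r le_rfl]
  -- step 2 : right side contradiction
  set t : ℝ := min (min (ε/2) ((1-lam)/2)) ((1/(M+1))^2) with ht_def
  have hM1 : (0:ℝ) < M + 1 := by linarith
  have ht_pos : 0 < t := by
    apply lt_min (lt_min (by linarith) (by linarith))
    positivity
  have ht1 : t ≤ ε/2 := le_trans (min_le_left _ _) (min_le_left _ _)
  have ht2 : t ≤ (1-lam)/2 := le_trans (min_le_left _ _) (min_le_right _ _)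
  have ht3 : t ≤ (1/(M+1))^2 := min_le_right _ _
  set x : ℝ := lam + t with hx_def
  have hx_mem : x ∈ s := ⟨by simp only [hx_def]; linarith, by simp only [hx_def]; linarith⟩
  have hfx : f x = t ^ α := by
    rw [hf_def]
    simp only [hx_def, add_sub_cancel_left]
    exact phi_of_nonneg ht_pos.le
  have hge : t ^ α ≤ g x := by
    rw [← hfx]
    exact hright x ⟨⟨by simp only [hx_def]; linarith, by simp only [hx_def]; linarith⟩, hx_mem⟩
  have hk1 := hkey x hx_mem
  have hxl : x - lam = t := by simp [hx_def]
  rw [hxl, abs_of_pos ht_pos] at hk1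
  have hup : g x ≤ b / r.factorial * t ^ r + M * t ^ (r+1) := by
    have := (abs_le.1 hk1).2
    linarith
  have hbneg : b / r.factorial * t ^ r ≤ 0 := by
    apply mul_nonpos_of_nonpos_of_nonneg
    · exact div_nonpos_of_nonpos_of_nonneg hb_le hfact.le
    · positivity
  have hfinal : t ^ α ≤ M * t ^ (r+1) := by linarith
  -- rpow comparison
  have h1 : (t:ℝ) ^ (r+1 : ℕ) = t ^ α * t ^ (1/2 : ℝ) := by
    rw [← Real.rpow_natCast t (r+1), ← Real.rpow_add ht_pos]
    congr 1
    push_cast [hα_def]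
    ring
  have h2 : t ^ (1/2 : ℝ) ≤ 1/(M+1) := by
    have := Real.rpow_le_rpow ht_pos.le ht3 (by norm_num : (0:ℝ) ≤ 1/2)
    rwa [show ((1/(M+1))^2 : ℝ) ^ (1/2:ℝ) = 1/(M+1) by
      rw [← Real.rpow_natCast (1/(M+1)) 2, ← Real.rpow_mul (by positivity)]
      norm_num] at this
  have htα : (0:ℝ) < t ^ α := Real.rpow_pos_of_pos ht_pos α
  have h3 : M * t ^ (r+1:ℕ) ≤ t ^ α * (M / (M+1)) := by
    rw [h1]
    calc M * (t ^ α * t ^ (1/2:ℝ)) = t ^ α * (M * t ^ (1/2:ℝ)) := by ring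
      _ ≤ t ^ α * (M * (1/(M+1))) := by
          apply mul_le_mul_of_nonneg_left _ htα.le
          exact mul_le_mul_of_nonneg_left h2 hM0
      _ = t ^ α * (M / (M+1)) := by ring
  have h4 : M / (M+1) < 1 := by
    rw [div_lt_one hM1]; linarith
  have h5 : t ^ α * (M / (M+1)) < t ^ α := by nlinarith [mul_lt_mul_of_pos_left h4 htα]
  exact absurd (lt_of_le_of_lt (hfinal.trans h3) h5) (lt_irrefl _)
end

section
/- For any n ∈ ℕ, any A > 0 and any λ ∈ I, there exists a continuous function f on I with f ≥ 0 on I such that, for every polynomial P_n of degree ≤ n which is nonnegative on I and satisfies P_n(λ) = f(λ), one has ‖f - P_n‖ > A ω₃(f, 1). Hence the error of positive polynomial approximation with interpolation at λ cannot be bounded by a constant multiple of the third modulus of smoothness ω₃(f, 1). -/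
open Polynomial Finset Set Filter Topology
set_option maxHeartbeats 1000000

lemma lagDeriv (s : Finset ℕ) (v : ℕ → ℝ) (hinj : Set.InjOn v s) (p : ℝ[X])
    (hdeg : p.degree < s.card) (y : ℝ) :
    p.derivative.eval y = ∑ i ∈ s, p.eval (v i) * ((Lagrange.basis s v i).derivative.eval y) := by
  conv_lhs => rw [Lagrange.eq_interpolate hinj hdeg, Lagrange.interpolate_apply]
  rw [Polynomial.derivative_sum, Polynomial.eval_finset_sum]
  exact Finset.sum_congr rfl fun i _ => by rw [Polynomial.derivative_C_mul, eval_mul, eval_C]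



/-- The `k`-th modulus of smoothness of `g` with step bound `t` on `[a,b]`. -/
noncomputable def omegaK (g : ℝ → ℝ) (k : ℕ) (t a b : ℝ) : ℝ :=
  sSup {v : ℝ | ∃ h x : ℝ, 0 < h ∧ h ≤ t ∧ a ≤ x ∧ x + (k : ℝ) * h ≤ b ∧
    v = |∑ i ∈ Finset.range (k + 1),
      (-1 : ℝ) ^ (k - i) * (k.choose i : ℝ) * g (x + (i : ℝ) * h)|}

/-- The sup norm of `g` on `[a,b]`. -/
noncomputable def supNorm (g : ℝ → ℝ) (a b : ℝ) : ℝ :=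
  sSup ((fun x => |g x|) '' Set.Icc a b)

/-- Positive approximation with interpolatory constraints, negative result for `f ∈ C`:
for any `n ∈ ℕ`, `A > 0`, and `λ ∈ [-1,1]`, there is a nonnegative `f ∈ C[-1,1]` such
that any polynomial `P_n` of degree ≤ n, nonnegative on `[-1,1]`, with `P_n(λ) = f(λ)`,
satisfies `‖f - P_n‖ > A ω₃(f,1)`. -/
theorem statement8 (n : ℕ) (hn : 1 ≤ n) (A : ℝ) (hA : 0 < A)
    (lam : ℝ) (hlam : lam ∈ Set.Icc (-1 : ℝ) 1) :
    ∃ f : ℝ → ℝ, ContinuousOn f (Set.Icc (-1 : ℝ) 1) ∧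
      (∀ x ∈ Set.Icc (-1 : ℝ) 1, 0 ≤ f x) ∧
      ∀ P : Polynomial ℝ, P.natDegree ≤ n →
        (∀ x ∈ Set.Icc (-1 : ℝ) 1, 0 ≤ P.eval x) →
        P.eval lam = f lam →
        A * omegaK f 3 1 (-1) 1 < supNorm (fun x => f x - P.eval x) (-1) 1 := by
  classical
  set m : ℕ := max n 2 with hm_def
  have hm2 : 2 ≤ m := le_max_right _ _
  have hnm : n ≤ m := le_max_left _ _
  have hmne : (m:ℝ) ≠ 0 := Nat.cast_ne_zero.mpr (by omega)
  have hmpos : (0:ℝ) < m := by positivity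
  set s : Finset ℕ := Finset.range (m+1) with hs_def
  set v : ℕ → ℝ := fun i => -1 + 2*(i:ℝ)/m with hv_def
  have hinj : Set.InjOn v s := by
    intro i _ j _ h
    simp only [hv_def] at h
    have : (i:ℝ) = j := by
      have h2 : 2*(i:ℝ)/m = 2*(j:ℝ)/m := by linarith
      rw [div_left_inj' hmne] at h2; linarith
    exact_mod_cast this
  have hvmem : ∀ i ∈ s, v i ∈ Set.Icc (-1:ℝ) 1 := by
    intro i hi
    have hi' : (i:ℝ) ≤ m := Nat.cast_le.mpr (by simp [hs_def] at hi; omega)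
    have hi0 : (0:ℝ) ≤ i := Nat.cast_nonneg i
    constructor
    · simp only [hv_def]; have : 0 ≤ 2*(i:ℝ)/m := by positivity
      linarith
    · simp only [hv_def]
      have : 2*(i:ℝ)/m ≤ 2 := by rw [div_le_iff₀ hmpos]; nlinarith
      linarith
  have hv0 : v 0 = -1 := by simp [hv_def]
  have hvm : v m = 1 := by simp only [hv_def]; field_simp; linarith
  -- distance to nodes
  set t : Finset ℕ := s.filter (fun i => v i ≠ lam) with ht_def
  have ht : t.Nonempty := by
    by_cases hc : v 0 = lam
    · refine ⟨m, Finset.mem_filter.mpr ⟨?_, ?_⟩⟩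
      · simp [hs_def]
      · rw [hvm]; rw [hv0] at hc; intro h; rw [← h] at hc; norm_num at hc
    · exact ⟨0, Finset.mem_filter.mpr ⟨by simp [hs_def], hc⟩⟩
  set δ : ℝ := t.inf' ht (fun i => |v i - lam|) with hδ_def
  have hδpos : 0 < δ := by
    rw [hδ_def, Finset.lt_inf'_iff]
    intro i hi
    exact abs_pos.mpr (sub_ne_zero.mpr ((Finset.mem_filter.mp hi).2))
  set c : ℕ → ℝ := fun i => ((Lagrange.basis s v i).derivative.eval lam) with hc_def
  set Cc : ℝ := ∑ i ∈ s, |c i| with hCc_def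
  have hCc0 : 0 ≤ Cc := Finset.sum_nonneg fun i _ => abs_nonneg _
  set K : ℝ := 1 + max (2*A*Cc) (1/δ) with hK_def
  have hK0 : 0 < K := by
    have : (0:ℝ) ≤ max (2*A*Cc) (1/δ) := le_trans (by positivity) (le_max_right _ _)
    rw [hK_def]; linarith
  have hK1 : 2*A*Cc < K := by
    have := le_max_left (2*A*Cc) (1/δ); rw [hK_def]; linarith
  have hKδ : 1 < K*δ := by
    have h1 : 1/δ ≤ max (2*A*Cc) (1/δ) := le_max_right _ _
    have : 1/δ < K := by rw [hK_def]; linarith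
    calc 1 = (1/δ)*δ := by field_simp
    _ < K*δ := by exact mul_lt_mul_of_pos_right this hδpos
  set σ : ℝ := if 0 ≤ lam then 1 else -1 with hσ_def
  have hσ : σ = 1 ∨ σ = -1 := by rw [hσ_def]; split <;> simp
  have hσsq : σ^2 = 1 := by rcases hσ with h | h <;> rw [h] <;> norm_num
  set q : ℝ → ℝ := fun x => K*(x-lam)^2 + σ*(x-lam) with hq_def
  set f : ℝ → ℝ := fun x => max (q x) 0 with hf_def
  have hqlam : q lam = 0 := by simp [hq_def]
  have hflam : f lam = 0 := by simp [hf_def, hqlam]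
  have hqnode : ∀ i ∈ s, 0 ≤ q (v i) := by
    intro i hi
    by_cases hvi : v i = lam
    · rw [hq_def]; simp [hvi]
    · have hdist : δ ≤ |v i - lam| :=
        Finset.inf'_le _ (Finset.mem_filter.mpr ⟨hi, hvi⟩)
      rw [hq_def]; simp only
      set u := v i - lam with hu_def
      have hσu : -|u| ≤ σ*u := by
        rcases hσ with h | h <;> rw [h] <;> simp [neg_abs_le, le_abs_self]
      have habs2 : |u| * |u| = u^2 := by rw [← sq_abs]; ring
      have h1 : K*δ*|u| ≤ K*(|u| * |u|) := by
        have := mul_le_mul_of_nonneg_left hdist hK0.le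
        calc K*δ*|u| ≤ K*|u| * |u| := mul_le_mul_of_nonneg_right this (abs_nonneg u)
        _ = K*(|u| * |u|) := by ring
      have h2 : |u| ≤ K*δ*|u| := by
        have := mul_le_mul_of_nonneg_right hKδ.le (abs_nonneg u)
        linarith
      nlinarith [h1, h2, hσu, habs2]
  -- bump bound
  have hbump : ∀ y : ℝ, 0 ≤ f y - q y ∧ f y - q y ≤ 1/(4*K) := by
    intro y
    constructor
    · simp [hf_def, le_max_left]
    · have h4K : (0:ℝ) < 4*K := by linarith
      have hinv : 4*K*(1/(4*K)) = 1 := by field_simp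
      have h4 : 0 ≤ 4*K*(K*(y-lam)^2 + σ*(y-lam)) + 1 := by
        nlinarith [sq_nonneg (2*K*(y-lam)+σ), hσsq]
      have hpos : (0:ℝ) < 1/(4*K) := by positivity
      have h2 : 0 ≤ q y + 1/(4*K) := by
        rw [hq_def]
        show 0 ≤ K*(y-lam)^2 + σ*(y-lam) + 1/(4*K)
        have heq : K*(y-lam)^2 + σ*(y-lam) + 1/(4*K)
            = (4*K*(K*(y-lam)^2 + σ*(y-lam)) + 1)/(4*K) := by field_simp
        rw [heq]
        exact div_nonneg h4 h4K.le
      have : f y ≤ q y + 1/(4*K) := by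
        rw [hf_def]; simp only [max_le_iff]
        exact ⟨by linarith, h2⟩
      linarith
  have hqcont : Continuous q := by rw [hq_def]; fun_prop
  have hfcont : Continuous f := by rw [hf_def]; exact hqcont.max continuous_const
  -- the quadratic as a polynomial
  set Q : ℝ[X] := Polynomial.C K * X^2 + Polynomial.C (σ - 2*K*lam) * X
      + Polynomial.C (K*lam^2 - σ*lam) with hQ_def
  have hQeval : ∀ x : ℝ, Q.eval x = q x := by
    intro x; rw [hQ_def, hq_def]; simp; ring
  have hQnd : Q.natDegree ≤ 2 := by rw [hQ_def]; compute_degree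
  have hQdeg : Q.degree < (s.card : ℕ) := by
    have h1 : Q.degree ≤ (Q.natDegree : WithBot ℕ) := Polynomial.degree_le_natDegree
    have hcard : s.card = m + 1 := by rw [hs_def, Finset.card_range]
    rw [hcard]
    refine lt_of_le_of_lt h1 ?_
    exact_mod_cast Nat.lt_succ_of_le (le_trans hQnd hm2)
  have hQd : Q.derivative.eval lam = σ := by
    rw [hQ_def]
    simp only [Polynomial.derivative_add, Polynomial.derivative_C_mul,
      Polynomial.derivative_X_pow, Polynomial.derivative_X, Polynomial.derivative_C,
      Polynomial.eval_add, Polynomial.eval_mul, Polynomial.eval_C, Polynomial.eval_X,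
      Polynomial.eval_pow, Polynomial.eval_natCast, mul_one, add_zero]
    push_cast
    ring
  have hσlag : σ = ∑ i ∈ s, f (v i) * c i := by
    rw [← hQd, lagDeriv s v hinj Q hQdeg lam]
    refine Finset.sum_congr rfl fun i hi => ?_
    rw [hQeval, hc_def]
    have : f (v i) = q (v i) := by
      rw [hf_def]; exact max_eq_left (hqnode i hi)
    rw [this]
  refine ⟨f, hfcont.continuousOn, fun x _ => by rw [hf_def]; exact le_max_right _ _, ?_⟩
  intro P hPdeg hPpos hPint
  have hPlam : P.eval lam = 0 := by rw [hPint, hflam]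
  have hPdeg' : P.degree < (s.card : ℕ) := by
    have hcard : s.card = m + 1 := by rw [hs_def, Finset.card_range]
    rw [hcard]
    refine lt_of_le_of_lt Polynomial.degree_le_natDegree ?_
    exact_mod_cast Nat.lt_succ_of_le (le_trans hPdeg hnm)
  set d : ℝ := P.derivative.eval lam with hd_def
  have hdlag : d = ∑ i ∈ s, P.eval (v i) * c i := by
    rw [hd_def, lagDeriv s v hinj P hPdeg' lam]
  -- one-sided derivative sign
  have hsd : σ * d ≤ 0 := by
    have hder : HasDerivAt (fun x => P.eval x) d lam := Polynomial.hasDerivAt P lam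
    have hslope := hasDerivAt_iff_tendsto_slope.mp hder
    rcases le_or_gt 0 lam with hl | hl
    · have hσ1 : σ = 1 := by rw [hσ_def, if_pos hl]
      rw [hσ1, one_mul]
      have htend : Tendsto (slope (fun x => P.eval x) lam) (𝓝[<] lam) (𝓝 d) :=
        hslope.mono_left (nhdsWithin_mono _ fun y hy => ne_of_lt hy)
      refine le_of_tendsto htend ?_
      have hmem : Set.Ioo (lam - 1) lam ∈ 𝓝[<] lam :=
        Ioo_mem_nhdsLT (by linarith)
      filter_upwards [hmem] with y hy
      have hyI : y ∈ Set.Icc (-1:ℝ) 1 := ⟨by linarith [hy.1], le_trans hy.2.le hlam.2⟩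
      have hP0 : 0 ≤ P.eval y := hPpos y hyI
      have heq : slope (fun x => P.eval x) lam y = P.eval y / (y - lam) := by
        simp only [slope_def_field, hPlam, sub_zero]
      rw [heq]
      exact div_nonpos_of_nonneg_of_nonpos hP0 (by linarith [hy.2])
    · have hσ1 : σ = -1 := by rw [hσ_def, if_neg (not_le.mpr hl)]
      rw [hσ1]
      have htend : Tendsto (slope (fun x => P.eval x) lam) (𝓝[>] lam) (𝓝 d) :=
        hslope.mono_left (nhdsWithin_mono _ fun y hy => ne_of_gt hy)
      have hd0 : 0 ≤ d := by
        refine ge_of_tendsto htend ?_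
        have hmem : Set.Ioo lam (lam + 1) ∈ 𝓝[>] lam :=
          Ioo_mem_nhdsGT (by linarith)
        filter_upwards [hmem] with y hy
        have hyI : y ∈ Set.Icc (-1:ℝ) 1 := ⟨le_trans hlam.1 hy.1.le, by linarith [hy.2]⟩
        have hP0 : 0 ≤ P.eval y := hPpos y hyI
        have heq : slope (fun x => P.eval x) lam y = P.eval y / (y - lam) := by
          simp only [slope_def_field, hPlam, sub_zero]
        rw [heq]
        exact div_nonneg hP0 (by linarith [hy.1])
      nlinarith
  -- sup norm lower bound
  set S : ℝ := supNorm (fun x => f x - P.eval x) (-1) 1 with hS_def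
  have hbdd : BddAbove ((fun x => |f x - P.eval x|) '' Set.Icc (-1:ℝ) 1) := by
    apply IsCompact.bddAbove_image isCompact_Icc
    exact ((hfcont.sub P.continuous).abs).continuousOn
  have hSge : ∀ i ∈ s, |f (v i) - P.eval (v i)| ≤ S := by
    intro i hi
    exact le_csSup hbdd ⟨v i, hvmem i hi, rfl⟩
  have hS0 : 0 ≤ S := le_trans (abs_nonneg _) (hSge 0 (by simp [hs_def]))
  have hkey : 1 ≤ S * Cc := by
    have h1 : 1 ≤ σ * (σ - d) := by nlinarith [hσsq]
    have h2 : σ * (σ - d) ≤ |σ - d| := by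
      calc σ * (σ - d) ≤ |σ * (σ - d)| := le_abs_self _
      _ = |σ| * |σ - d| := abs_mul _ _
      _ = |σ - d| := by rcases hσ with h | h <;> rw [h] <;> simp
    have h3 : σ - d = ∑ i ∈ s, (f (v i) - P.eval (v i)) * c i := by
      rw [hσlag, hdlag, ← Finset.sum_sub_distrib]
      exact Finset.sum_congr rfl fun i _ => by ring
    have h4 : |σ - d| ≤ S * Cc := by
      rw [h3]
      calc |∑ i ∈ s, (f (v i) - P.eval (v i)) * c i|
          ≤ ∑ i ∈ s, |(f (v i) - P.eval (v i)) * c i| := Finset.abs_sum_le_sum_abs _ _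
      _ ≤ ∑ i ∈ s, S * |c i| := by
          refine Finset.sum_le_sum fun i hi => ?_
          rw [abs_mul]
          exact mul_le_mul_of_nonneg_right (hSge i hi) (abs_nonneg _)
      _ = S * Cc := by rw [hCc_def, Finset.mul_sum]
    linarith
  have hCcpos : 0 < Cc := by nlinarith
  -- omega bound
  have homega : omegaK f 3 1 (-1) 1 ≤ 2/K := by
    apply Real.sSup_le
    · rintro w ⟨h, x, hh0, hh1, hx1, hx2, rfl⟩
      have hsum : ∑ i ∈ Finset.range 4,
          (-1 : ℝ) ^ (3 - i) * ((Nat.choose 3 i : ℕ) : ℝ) * f (x + (i:ℝ) * h)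
          = -(f x) + 3 * f (x + h) - 3 * f (x + 2*h) + f (x + 3*h) := by
        simp [Finset.sum_range_succ]
        ring
      have hq3 : -(q x) + 3 * q (x + h) - 3 * q (x + 2*h) + q (x + 3*h) = 0 := by
        rw [hq_def]; simp only; ring
      set B : ℝ := 1/(4*K) with hB_def
      have hBK : 2/K = 8*B := by rw [hB_def]; field_simp; ring
      obtain ⟨ha1, ha2⟩ := hbump x
      obtain ⟨hb1, hb2⟩ := hbump (x + h)
      obtain ⟨hc1, hc2⟩ := hbump (x + 2*h)
      obtain ⟨hd1, hd2⟩ := hbump (x + 3*h)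
      have e : -(f x) + 3 * f (x + h) - 3 * f (x + 2*h) + f (x + 3*h)
          = -(f x - q x) + 3*(f (x+h) - q (x+h)) - 3*(f (x+2*h) - q (x+2*h))
            + (f (x+3*h) - q (x+3*h)) := by linear_combination hq3
      rw [hsum, e, hBK, abs_le]
      constructor
      · linarith
      · linarith
    · exact div_nonneg (by norm_num) hK0.le
  -- conclusion
  have hfin : A * (2/K) < 1/Cc := by
    have h : A * (2/K) = (2*A)/K := by ring
    rw [h, div_lt_div_iff₀ hK0 hCcpos]
    linarith
  calc A * omegaK f 3 1 (-1) 1 ≤ A * (2/K) :=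
        mul_le_mul_of_nonneg_left homega hA.le
  _ < 1/Cc := hfin
  _ ≤ S := by rw [div_le_iff₀ hCcpos]; linarith
end

section
/- Let r ≥ 3 be an ODD integer. Then for any n ≥ r-1 and any A > 0, there exists f ∈ C^r which is identically 0 on [-1, -1/2] and nonnegative on I, such that for every polynomial P_n of degree ≤ n which is nonnegative on [-1/2, 1/2] and satisfies P_n^(i)(0) = f^(i)(0) for all 0 ≤ i ≤ r-1, one has ‖f - P_n‖ > A ‖f^(r)‖. Hence positive polynomial approximation with Hermite interpolation of order r-1 at an interior point is impossible for odd r ≥ 3. -/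
open Polynomial Set ContDiff


section helpers

lemma polyCoeff_bound (n : ℕ) : ∃ C : ℝ, 0 < C ∧ ∀ P : Polynomial ℝ, P.natDegree ≤ n →
    ∀ M : ℝ, (∀ x ∈ Set.Icc (1/4:ℝ) (1/2:ℝ), |P.eval x| ≤ M) → ∀ i, |P.coeff i| ≤ C * M := by
  classical
  set K := Set.Icc (1/4:ℝ) (1/2:ℝ) with hK
  haveI : Nonempty K := ⟨⟨1/4, by constructor <;> norm_num⟩⟩
  have hL : ∀ a : Fin (n+1) → ℝ, Continuous fun x : K => ∑ j : Fin (n+1), a j * (x:ℝ)^(j:ℕ) := by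
    intro a
    exact continuous_finset_sum _ fun j _ => continuous_const.mul (continuous_subtype_val.pow _)
  let L : (Fin (n+1) → ℝ) →ₗ[ℝ] C(K, ℝ) :=
    { toFun := fun a => ⟨fun x => ∑ j : Fin (n+1), a j * (x:ℝ)^(j:ℕ), hL a⟩
      map_add' := by
        intro a b; ext x; simp [add_mul, Finset.sum_add_distrib]
      map_smul' := by
        intro c a; ext x; simp [Finset.mul_sum, mul_assoc] }
  have hinj : Function.Injective L := by
    rw [← LinearMap.ker_eq_bot, LinearMap.ker_eq_bot']
    intro a ha
    have hpoly : (∑ j : Fin (n+1), C (a j) * X ^ (j:ℕ)) = 0 := by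
      apply Polynomial.eq_zero_of_infinite_isRoot
      apply (Set.Icc_infinite (a := (1/4:ℝ)) (b := 1/2) (by norm_num)).mono
      intro x hx
      have := congrArg (fun φ => φ ⟨x, hx⟩) ha
      simp only [ContinuousMap.zero_apply] at this
      simpa [IsRoot, Polynomial.eval_finset_sum, L] using this
    funext j
    have := congrArg (fun p => Polynomial.coeff p (j:ℕ)) hpoly
    simp only [Polynomial.finset_sum_coeff, Polynomial.coeff_C_mul, Polynomial.coeff_X_pow,
      Polynomial.coeff_zero] at this
    rw [Finset.sum_eq_single j] at this
    · simpa using this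
    · intro b _ hbj
      simp only [Fin.val_eq_val]
      rw [if_neg (Ne.symm hbj), mul_zero]
    · simp
  let e := LinearEquiv.ofInjective L hinj
  haveI : FiniteDimensional ℝ (LinearMap.range L) := inferInstance
  have cont : Continuous (e.symm.toLinearMap) :=
    LinearMap.continuous_of_finiteDimensional _
  letI i1 : SeminormedAddCommGroup C(K, ℝ) := inferInstance
  letI i2 : SeminormedAddCommGroup (LinearMap.range L) := inferInstance
  letI i3 : NormedSpace ℝ (LinearMap.range L) := inferInstance
  let G : LinearMap.range L →L[ℝ] (Fin (n+1) → ℝ) := ⟨e.symm.toLinearMap, cont⟩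
  refine ⟨‖G‖ + 1, by positivity, ?_⟩
  intro P hP M hM i
  have hM0 : 0 ≤ M := le_trans (abs_nonneg _) (hM (1/4) (by constructor <;> norm_num))
  by_cases hi : i ≤ n
  · set a : Fin (n+1) → ℝ := fun j => P.coeff j with ha
    have hLa : ∀ x : K, (L a) x = P.eval (x:ℝ) := by
      intro x
      have : P.eval (x:ℝ) = ∑ j ∈ Finset.range (n+1), P.coeff j * (x:ℝ)^j :=
        Polynomial.eval_eq_sum_range' (lt_of_le_of_lt hP (Nat.lt_succ_self n)) _
      rw [this]
      simp only [L, LinearMap.coe_mk, AddHom.coe_mk, ContinuousMap.coe_mk]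
      rw [Finset.sum_range fun j => P.coeff j * (x:ℝ)^j]
    have hnorm : ‖L a‖ ≤ M := by
      rw [ContinuousMap.norm_le _ hM0]
      intro x
      rw [hLa x]
      exact hM _ x.2
    have haeq : G (e a) = a := e.symm_apply_apply a
    have hcoe : ((e a : LinearMap.range L) : C(K, ℝ)) = L a :=
      LinearEquiv.ofInjective_apply L a
    have hea : ‖e a‖ ≤ M := by
      rw [Submodule.coe_norm, hcoe]
      exact hnorm
    have hnorml : ‖a‖ ≤ ‖G‖ * M := by
      rw [← haeq]
      calc ‖G (e a)‖ ≤ ‖G‖ * ‖e a‖ := G.le_opNorm _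
        _ ≤ ‖G‖ * M := mul_le_mul_of_nonneg_left hea (norm_nonneg G)
    have : |P.coeff i| = ‖a ⟨i, Nat.lt_succ_of_le hi⟩‖ := by simp [ha]
    rw [this]
    calc ‖a ⟨i, Nat.lt_succ_of_le hi⟩‖ ≤ ‖a‖ := norm_le_pi_norm a _
      _ ≤ ‖G‖ * M := hnorml
      _ ≤ (‖G‖ + 1) * M := by nlinarith [norm_nonneg G]
  · rw [Polynomial.coeff_eq_zero_of_natDegree_lt (lt_of_le_of_lt hP (Nat.lt_of_not_le hi)), abs_zero]
    positivity



lemma iterWithin_eq {f : ℝ → ℝ} (hf : ContDiff ℝ ∞ f) (k : ℕ) {x : ℝ}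
    (hx : x ∈ Set.Icc (-1:ℝ) 1) :
    iteratedDerivWithin k f (Set.Icc (-1:ℝ) 1) x = iteratedDeriv k f x := by
  have h := contDiff_iff_ftaylorSeries.mp hf
  rw [iteratedDerivWithin_eq_iteratedFDerivWithin, iteratedDeriv_eq_iteratedFDeriv]
  congr 1
  have h1 := (h.hasFTaylorSeriesUpToOn (Set.Icc (-1:ℝ) 1)).eq_iteratedFDerivWithin_of_uniqueDiffOn
    (by exact_mod_cast le_top : (k : WithTop ℕ∞) ≤ ∞) (uniqueDiffOn_Icc (by norm_num : (-1:ℝ) < 1)) hx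
  have h2 := h.eq_iteratedFDeriv (by exact_mod_cast le_top : (k : WithTop ℕ∞) ≤ ∞) x
  rw [← h1, h2]

lemma iteratedDeriv_polyEval (Q : Polynomial ℝ) (k : ℕ) :
    iteratedDeriv k (fun x => Q.eval x) = fun x => (Polynomial.derivative^[k] Q).eval x := by
  induction k with
  | zero => simp
  | succ k ih =>
    rw [iteratedDeriv_succ, ih]
    funext x
    rw [Function.iterate_succ_apply']
    exact Polynomial.deriv (derivative^[k] Q)

lemma iterderiv_eval_zero (Q : Polynomial ℝ) (i : ℕ) :
    (Polynomial.derivative^[i] Q).eval 0 = (Nat.factorial i : ℝ) * Q.coeff i := by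
  rw [← Polynomial.coeff_zero_eq_eval_zero, Polynomial.coeff_iterate_derivative]
  rw [Nat.zero_add, Nat.descFactorial_self, nsmul_eq_mul]

end helpers

set_option maxHeartbeats 1000000 in
/-- Copositive approximation with interpolatory constraints, negative result for
`f ∈ C^r` with odd `r ≥ 3`: for any `n ≥ r - 1` and `A > 0`, there is `f ∈ C^r[-1,1]`,
vanishing on `[-1,-1/2]` and nonnegative on `[-1,1]`, such that any polynomial of
degree ≤ n, nonnegative on `[-1/2,1/2]`, with `P_n^{(i)}(0) = f^{(i)}(0)` for
`0 ≤ i ≤ r - 1`, satisfies `‖f - P_n‖ > A ‖f^{(r)}‖`. -/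
theorem statement12 (r : ℕ) (hr : 3 ≤ r) (hro : Odd r) (n : ℕ) (hn : r - 1 ≤ n)
    (A : ℝ) (hA : 0 < A) :
    ∃ f : ℝ → ℝ, ContDiffOn ℝ r f (Set.Icc (-1 : ℝ) 1) ∧
      (∀ x ∈ Set.Icc (-1 : ℝ) (-1/2 : ℝ), f x = 0) ∧
      (∀ x ∈ Set.Icc (-1 : ℝ) 1, 0 ≤ f x) ∧
      ∀ P : Polynomial ℝ, P.natDegree ≤ n →
        (∀ x ∈ Set.Icc (-1/2 : ℝ) (1/2 : ℝ), 0 ≤ P.eval x) →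
        (∀ i : ℕ, i ≤ r - 1 → (Polynomial.derivative^[i] P).eval 0
            = iteratedDerivWithin i f (Set.Icc (-1 : ℝ) 1) 0) →
        A * supNorm (iteratedDerivWithin r f (Set.Icc (-1 : ℝ) 1)) (-1) 1
          < supNorm (fun x => f x - P.eval x) (-1) 1 := by
  classical
  obtain ⟨Cn, hCnpos, hcoef⟩ := polyCoeff_bound n
  obtain ⟨m, hm2⟩ := hro
  have hm1 : 1 ≤ m := by omega
  have h2m : 2*m = r - 1 := by omega
  -- bump function
  let χ : ContDiffBump (0:ℝ) := ⟨1/2, 1, by norm_num, by norm_num⟩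
  let g : ℝ → ℝ := fun t => (1 - t^(2*m)) * χ t
  have hg : ContDiff ℝ ∞ g := (contDiff_const.sub (contDiff_id.pow _)).mul χ.contDiff
  -- bound for r-th derivative of g
  obtain ⟨C₀', hC₀'⟩ := (isCompact_Icc (a := (-1:ℝ)) (b := 1)).exists_bound_of_continuousOn
    (hg.continuous_iteratedDeriv r (by exact_mod_cast le_top)).continuousOn
  set C₀ : ℝ := max C₀' 1 with hC₀
  have hC₀pos : 0 < C₀ := lt_of_lt_of_le one_pos (le_max_right _ _)
  have hgr_zero : ∀ t : ℝ, 1 < |t| → iteratedDeriv r g t = 0 := by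
    intro t ht
    have hopen : IsOpen {s : ℝ | 1 < |s|} := isOpen_lt continuous_const continuous_abs
    have hev : g =ᶠ[nhds t] (fun _ => (0:ℝ)) := by
      filter_upwards [hopen.mem_nhds ht] with s hs
      have : χ s = 0 := χ.zero_of_le_dist (by simpa [Real.dist_eq] using (le_of_lt hs))
      simp [g, this]
    rw [hev.iteratedDeriv_eq]
    have hzero : (fun _ : ℝ => (0:ℝ)) = fun x => (0 : Polynomial ℝ).eval x := by
      funext x; simp
    rw [hzero, iteratedDeriv_polyEval]
    simp
  have hgbound : ∀ t : ℝ, |iteratedDeriv r g t| ≤ C₀ := by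
    intro t
    rcases le_or_gt |t| 1 with ht | ht
    · have := hC₀' t (abs_le.mp ht)
      calc |iteratedDeriv r g t| ≤ C₀' := by simpa [Real.norm_eq_abs] using this
        _ ≤ C₀ := le_max_left _ _
    · rw [hgr_zero t ht, abs_zero]; exact hC₀pos.le
  -- scale
  set D : ℝ := (n+1 : ℝ) * Cn * 2^(r+1) with hD
  have hDpos : 0 < D := by positivity
  set h : ℝ := min (1/8) (3 / (2 * D * A * C₀)) with hh
  have hh0 : 0 < h := lt_min (by norm_num) (by positivity)
  have hh8 : h ≤ 1/8 := min_le_left _ _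
  have hhb : 2*D*A*C₀*h ≤ 3 := by
    have h1 : h ≤ 3 / (2 * D * A * C₀) := min_le_right _ _
    have h2 : 0 < 2 * D * A * C₀ := by positivity
    calc 2*D*A*C₀*h ≤ 2*D*A*C₀*(3 / (2 * D * A * C₀)) := by
          exact mul_le_mul_of_nonneg_left h1 h2.le
      _ = 3 := by field_simp
  set f : ℝ → ℝ := fun x => h^2 * g (h⁻¹ * x) with hf
  have hfC : ContDiff ℝ ∞ f := contDiff_const.mul (hg.comp (contDiff_const.mul contDiff_id))
  have hf0 : ∀ x : ℝ, h ≤ |x| → f x = 0 := by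
    intro x hx
    have hxh : (1:ℝ) ≤ |h⁻¹ * x| := by
      rw [abs_mul, abs_inv, abs_of_pos hh0, ← div_eq_inv_mul]
      exact (one_le_div hh0).mpr hx
    have hχ : χ (h⁻¹ * x) = 0 := χ.zero_of_le_dist (by rw [Real.dist_eq, sub_zero]; exact hxh)
    simp [hf, g, hχ]
  have hgnn : ∀ t : ℝ, 0 ≤ g t := by
    intro t
    rcases le_or_gt |t| 1 with ht | ht
    · apply mul_nonneg _ χ.nonneg
      have h1 : |t|^(2*m) ≤ 1 := pow_le_one₀ (abs_nonneg t) ht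
      have ht2 : t^(2*m) ≤ 1 := by
        calc t^(2*m) ≤ |t^(2*m)| := le_abs_self _
          _ = |t|^(2*m) := abs_pow t _
          _ ≤ 1 := h1
      linarith
    · have : χ t = 0 := χ.zero_of_le_dist (by simpa [Real.dist_eq] using ht.le)
      simp [g, this]
  refine ⟨f, ?_, ?_, ?_, ?_⟩
  · exact (hfC.of_le (by exact_mod_cast le_top)).contDiffOn
  · intro x hx
    apply hf0
    rw [abs_of_nonpos (by linarith [hx.2] : x ≤ 0)]
    have : x ≤ -1/2 := hx.2
    linarith
  · intro x _
    exact mul_nonneg (by positivity) (hgnn _)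
  -- main part
  intro P hPdeg hPpos hPjet
  set Q : Polynomial ℝ := Polynomial.C (h^2) - Polynomial.C (h^2 / h^(2*m)) * Polynomial.X^(2*m)
    with hQ
  have hQcoeff0 : Q.coeff 0 = h^2 := by
    rw [hQ, coeff_sub, coeff_C_mul, coeff_X_pow, if_neg (by omega : ¬ (0 = 2*m)), mul_zero,
      sub_zero, coeff_C_zero]
  have hQcoeff2m : Q.coeff (2*m) = -(h^2 / h^(2*m)) := by
    rw [hQ, coeff_sub, coeff_C_mul, coeff_X_pow, if_pos rfl, mul_one, coeff_C,
      if_neg (by omega : ¬ (2*m = 0)), zero_sub]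
  have hQcoeffother : ∀ i, i ≠ 0 → i ≠ 2*m → Q.coeff i = 0 := by
    intro i hi0 him
    rw [hQ, coeff_sub, coeff_C_mul, coeff_X_pow, if_neg him, mul_zero, coeff_C, if_neg hi0,
      sub_zero]
  have hfeqQ : ∀ x : ℝ, |x| < h/2 → f x = Q.eval x := by
    intro x hx
    have hmem : h⁻¹ * x ∈ Metric.closedBall (0:ℝ) (1/2) := by
      rw [Metric.mem_closedBall, Real.dist_eq, sub_zero, abs_mul, abs_inv, abs_of_pos hh0,
        ← div_eq_inv_mul]
      rw [div_le_iff₀ hh0]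
      calc |x| ≤ h/2 := hx.le
        _ = 1/2 * h := by ring
    have hχ1 : χ (h⁻¹ * x) = 1 := χ.one_of_mem_closedBall hmem
    simp only [hf, g, hχ1, mul_one, hQ, Polynomial.eval_sub, Polynomial.eval_mul,
      Polynomial.eval_C, Polynomial.eval_pow, Polynomial.eval_X]
    rw [mul_pow, inv_pow]
    field_simp
  have hjet' : ∀ i, i ≤ r - 1 → P.coeff i = Q.coeff i := by
    intro i hi
    have h1 := hPjet i hi
    have h2 : iteratedDerivWithin i f (Set.Icc (-1:ℝ) 1) 0 = iteratedDeriv i f 0 :=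
      iterWithin_eq hfC i (by norm_num)
    have h3 : iteratedDeriv i f 0 = iteratedDeriv i (fun x => Q.eval x) 0 := by
      apply Filter.EventuallyEq.iteratedDeriv_eq
      have hb : Metric.ball (0:ℝ) (h/2) ∈ nhds (0:ℝ) := Metric.ball_mem_nhds _ (by positivity)
      filter_upwards [hb] with y hy
      apply hfeqQ
      simpa [Real.dist_eq] using hy
    rw [h2, h3] at h1
    rw [iteratedDeriv_polyEval Q i] at h1
    simp only [] at h1
    rw [iterderiv_eval_zero, iterderiv_eval_zero] at h1
    have hfact : (Nat.factorial i : ℝ) ≠ 0 := by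
      exact_mod_cast (Nat.factorial_pos i).ne'
    exact mul_left_cancel₀ hfact h1
  set M : ℝ := supNorm (fun x => f x - P.eval x) (-1) 1 with hM
  have hcont : Continuous fun x => f x - P.eval x := hfC.continuous.sub P.continuous
  have hMub : ∀ x ∈ Set.Icc (-1:ℝ) 1, |f x - P.eval x| ≤ M := by
    intro x hx
    apply le_csSup
    · exact ((isCompact_Icc).image_of_continuousOn hcont.abs.continuousOn).bddAbove
    · exact ⟨x, hx, rfl⟩
  have hM0 : 0 ≤ M := le_trans (abs_nonneg _) (hMub 1 (by norm_num))
  have hPsmall : ∀ x ∈ Set.Icc (1/4:ℝ) (1/2:ℝ), |P.eval x| ≤ M := by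
    intro x hx
    have hxI : x ∈ Set.Icc (-1:ℝ) 1 := ⟨by linarith [hx.1], by linarith [hx.2]⟩
    have hfx : f x = 0 := by
      apply hf0
      rw [abs_of_nonneg (by linarith [hx.1] : (0:ℝ) ≤ x)]
      linarith [hx.1]
    have := hMub x hxI
    rwa [hfx, zero_sub, abs_neg] at this
  have hPcoeffb : ∀ i, |P.coeff i| ≤ Cn * M := hcoef P hPdeg M hPsmall
  have h2h0 : (0:ℝ) < 2*h := by linarith
  have h2h4 : 2*h ≤ 1/4 := by linarith
  have hP2 : 0 ≤ P.eval (2*h) := hPpos _ ⟨by linarith, by linarith⟩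
  have hP2' : 0 ≤ P.eval (-(2*h)) := hPpos _ ⟨by linarith, by linarith⟩
  set u : ℕ → ℝ := fun i => P.coeff i * ((2*h)^i + (-(2*h))^i) with hu
  have husum : P.eval (2*h) + P.eval (-(2*h)) = ∑ i ∈ Finset.range (n+1), u i := by
    rw [Polynomial.eval_eq_sum_range' (lt_of_le_of_lt hPdeg (Nat.lt_succ_self n)),
      Polynomial.eval_eq_sum_range' (lt_of_le_of_lt hPdeg (Nat.lt_succ_self n)),
      ← Finset.sum_add_distrib]
    exact Finset.sum_congr rfl fun i _ => by simp [hu]; ring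
  set t : Finset ℕ := (Finset.range (n+1)).filter (fun i => r < i) with ht
  have hsplit : ∑ i ∈ Finset.range (n+1), u i = (∑ i ∈ t, u i) + (u 0 + u (2*m)) := by
    have hsub : t ∪ {0, 2*m} ⊆ Finset.range (n+1) := by
      intro i hi
      rcases Finset.mem_union.mp hi with hi | hi
      · exact Finset.mem_of_mem_filter i hi
      · rcases Finset.mem_insert.mp hi with rfl | hi
        · exact Finset.mem_range.mpr (by omega)
        · rw [Finset.mem_singleton.mp hi]
          exact Finset.mem_range.mpr (by omega)
    have hvanish : ∀ i ∈ Finset.range (n+1), i ∉ t ∪ {0, 2*m} → u i = 0 := by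
      intro i hir hi
      rw [Finset.mem_union, Finset.mem_insert, Finset.mem_singleton] at hi
      push_neg at hi
      obtain ⟨hit, hi0, him⟩ := hi
      have hile : ¬ (r < i) := fun hc => hit (Finset.mem_filter.mpr ⟨hir, hc⟩)
      rcases Nat.lt_or_ge i r with hlt | hge
      · have : P.coeff i = Q.coeff i := hjet' i (by omega)
        rw [hu]
        simp only
        rw [this, hQcoeffother i hi0 him, zero_mul]
      · have hir2 : i = r := by omega
        subst hir2
        have : (-(2*h))^i = -((2*h)^i) := Odd.neg_pow ⟨m, by omega⟩ _
        rw [hu]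
        simp only
        rw [this]
        ring
    have hdisj : Disjoint t ({0, 2*m} : Finset ℕ) := by
      rw [Finset.disjoint_left]
      intro i hi hi2
      have := (Finset.mem_filter.mp hi).2
      rcases Finset.mem_insert.mp hi2 with rfl | hi2
      · omega
      · rw [Finset.mem_singleton.mp hi2] at this; omega
    rw [← Finset.sum_subset hsub hvanish, Finset.sum_union hdisj,
      Finset.sum_pair (by omega : (0:ℕ) ≠ 2*m)]
  have hu0 : u 0 = 2*h^2 := by
    have := hjet' 0 (by omega)
    rw [hu]; simp only
    rw [this, hQcoeff0]
    simp only [pow_zero]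
    ring
  have hhpow : h^(2*m) ≠ 0 := pow_ne_zero _ hh0.ne'
  have hu2m : u (2*m) = -(2*h^2*2^(2*m)) := by
    have hc := hjet' (2*m) (by omega)
    have heven : (-(2*h))^(2*m) = (2*h)^(2*m) := Even.neg_pow ⟨m, by ring⟩ _
    rw [hu]; simp only
    rw [hc, hQcoeff2m, heven, mul_pow]
    field_simp
    ring
  have hut : ∀ i ∈ t, |u i| ≤ Cn * M * (2*(2*h)^(r+1)) := by
    intro i hi
    obtain ⟨hirange, hri⟩ := Finset.mem_filter.mp hi
    have h1 : |u i| ≤ |P.coeff i| * (2*(2*h)^i) := by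
      rw [hu]; simp only
      rw [abs_mul]
      apply mul_le_mul_of_nonneg_left _ (abs_nonneg _)
      calc |(2*h)^i + (-(2*h))^i| ≤ |(2*h)^i| + |(-(2*h))^i| := abs_add_le _ _
        _ = (2*h)^i + (2*h)^i := by
            rw [abs_pow, abs_pow, abs_neg, abs_of_pos h2h0]
        _ = 2*(2*h)^i := by ring
    have h2 : (2*h)^i ≤ (2*h)^(r+1) :=
      pow_le_pow_of_le_one h2h0.le (by linarith) (by omega)
    calc |u i| ≤ |P.coeff i| * (2*(2*h)^i) := h1
      _ ≤ (Cn * M) * (2*(2*h)^(r+1)) := by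
          apply mul_le_mul (hPcoeffb i) (by linarith) (by positivity)
          positivity
      _ = Cn * M * (2*(2*h)^(r+1)) := by ring
  have htsum : ∑ i ∈ t, u i ≤ (n+1 : ℝ) * (Cn * M * (2*(2*h)^(r+1))) := by
    calc ∑ i ∈ t, u i ≤ |∑ i ∈ t, u i| := le_abs_self _
      _ ≤ ∑ i ∈ t, |u i| := Finset.abs_sum_le_sum_abs _ _
      _ ≤ ∑ _i ∈ t, (Cn * M * (2*(2*h)^(r+1))) := Finset.sum_le_sum hut
      _ = (t.card : ℝ) * (Cn * M * (2*(2*h)^(r+1))) := by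
          rw [Finset.sum_const, nsmul_eq_mul]
      _ ≤ (n+1 : ℝ) * (Cn * M * (2*(2*h)^(r+1))) := by
          apply mul_le_mul_of_nonneg_right _ (by positivity)
          have : t.card ≤ n+1 := le_trans (Finset.card_filter_le _ _) (by simp)
          exact_mod_cast this
  have h4m : (4:ℝ) ≤ 2^(2*m) := by
    calc (4:ℝ) = 2^2 := by norm_num
      _ ≤ 2^(2*m) := pow_le_pow_right₀ (by norm_num) (by omega)
  have hmain : 3*h^2 ≤ D * M * h^(r+1) := by
    have e0 : 0 ≤ (∑ i ∈ t, u i) + (u 0 + u (2*m)) := by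
      rw [← hsplit, ← husum]; linarith
    rw [hu0, hu2m] at e0
    have e1 : 2*h^2*2^(2*m) - 2*h^2 ≤ ∑ i ∈ t, u i := by linarith
    have e2 : 6*h^2 ≤ 2*h^2*2^(2*m) - 2*h^2 := by nlinarith [sq_nonneg h, hh0]
    have e3 : (6:ℝ)*h^2 ≤ (n+1 : ℝ) * (Cn * M * (2*(2*h)^(r+1))) := by linarith
    have e4 : (2*h)^(r+1) = 2^(r+1) * h^(r+1) := mul_pow 2 h (r+1)
    rw [e4] at e3
    have e5 : (n+1:ℝ)*(Cn*M*(2*(2^(r+1)*h^(r+1)))) = 2 * (D * M * h^(r+1)) := by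
      rw [hD]; ring
    rw [e5] at e3
    linarith
  -- derivative bound
  have hcomp : ContDiff ℝ ∞ (fun y : ℝ => g (h⁻¹ * y)) :=
    hg.comp (contDiff_const.mul contDiff_id)
  have hfr : ∀ x ∈ Set.Icc (-1:ℝ) 1,
      |iteratedDerivWithin r f (Set.Icc (-1:ℝ) 1) x| ≤ C₀ * h^2 * (h⁻¹)^r := by
    intro x hx
    rw [iterWithin_eq hfC r hx]
    have hcomp' : ContDiffOn ℝ r (fun y : ℝ => g (h⁻¹ * y)) Set.univ :=
      (hcomp.of_le (by exact_mod_cast le_top)).contDiffOn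
    have hg' : ContDiff ℝ r g := hg.of_le (by exact_mod_cast le_top)
    have e1 : iteratedDeriv r f x = h^2 * iteratedDeriv r (fun y => g (h⁻¹ * y)) x := by
      have := iteratedDerivWithin_const_mul (Set.mem_univ x) uniqueDiffOn_univ (h^2) (hcomp' x (Set.mem_univ x))
      rw [iteratedDerivWithin_univ, iteratedDerivWithin_univ] at this
      exact this
    have e2 : iteratedDeriv r (fun y => g (h⁻¹ * y))
        = fun y => (h⁻¹)^r * iteratedDeriv r g (h⁻¹*y) :=
      iteratedDeriv_comp_const_mul hg' h⁻¹
    rw [e1, e2, abs_mul, abs_mul]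
    rw [abs_of_nonneg (by positivity : (0:ℝ) ≤ h^2), abs_of_nonneg (by positivity : (0:ℝ) ≤ (h⁻¹)^r)]
    calc h^2 * ((h⁻¹)^r * |iteratedDeriv r g (h⁻¹*x)|) ≤ h^2 * ((h⁻¹)^r * C₀) := by
          apply mul_le_mul_of_nonneg_left _ (by positivity)
          exact mul_le_mul_of_nonneg_left (hgbound _) (by positivity)
      _ = C₀ * h^2 * (h⁻¹)^r := by ring
  have hS : supNorm (iteratedDerivWithin r f (Set.Icc (-1:ℝ) 1)) (-1) 1 ≤ C₀ * h^2 * (h⁻¹)^r := by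
    apply Real.sSup_le
    · rintro y ⟨x, hx, rfl⟩
      exact hfr x hx
    · positivity
  -- final arithmetic
  have hhr : (0:ℝ) < h^r := pow_pos hh0 r
  calc A * supNorm (iteratedDerivWithin r f (Set.Icc (-1:ℝ) 1)) (-1) 1
      ≤ A * (C₀ * h^2 * (h⁻¹)^r) := mul_le_mul_of_nonneg_left hS hA.le
    _ < M := by
        rw [← mul_lt_mul_iff_of_pos_right hhr]
        have hid : (h⁻¹)^r * h^r = 1 := by
          rw [← mul_pow, inv_mul_cancel₀ hh0.ne', one_pow]
        have hlhs : A * (C₀ * h^2 * (h⁻¹)^r) * h^r = A*C₀*h^2 := by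
          calc A * (C₀ * h^2 * (h⁻¹)^r) * h^r = A*C₀*h^2*((h⁻¹)^r * h^r) := by ring
            _ = A*C₀*h^2 := by rw [hid, mul_one]
        rw [hlhs]
        have hp1 : h^(r+1) = h^r * h := pow_succ h r
        rw [hp1] at hmain
        -- hmain : 3*h^2 ≤ D * M * (h^r * h);  hhb : 2*D*A*C₀*h ≤ 3
        have hac : 0 < A*C₀*h^2 := by positivity
        have hDh : 0 < D*h := by positivity
        have e5 : (D*h)*(2*(A*C₀*h^2)) ≤ 3*h^2 := by
          have := mul_le_mul_of_nonneg_right hhb (by positivity : (0:ℝ) ≤ h^2)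
          calc (D*h)*(2*(A*C₀*h^2)) = (2*D*A*C₀*h)*h^2 := by ring
            _ ≤ 3*h^2 := this
        have e6 : 3*h^2 ≤ (D*h) * (M*h^r) := by
          have heq : D * M * (h^r * h) = (D*h)*(M*h^r) := by ring
          linarith [hmain, heq.symm.le, heq.le]
        have e8 : 2*(A*C₀*h^2) ≤ M*h^r :=
          le_of_mul_le_mul_left (le_trans e5 e6) hDh
        linarith
end

section
/- Let r ≥ 1 be an ODD integer. Then for any n ≥ r, any A > 0 and any λ ∈ [0,1], there exists f ∈ C^r which is identically 0 on [-1, -1/2] and nonnegative on I, such that for every polynomial P_n of degree ≤ n which is nonnegative on (λ - 1/n, λ) and satisfies P_n^(i)(λ) = f^(i)(λ) for all 0 ≤ i ≤ r, one has ‖f - P_n‖ > A ‖f^(r)‖. Hence positive polynomial approximation with Hermite interpolation of full order r at λ is impossible for odd r. -/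
open Set Polynomial Finset

/-- truncated power -/
noncomputable def tp (k : ℕ) (t : ℝ) : ℝ := (max t 0) ^ k

lemma tp_cont (k : ℕ) : Continuous (tp k) := by
  unfold tp; fun_prop

lemma tp_nonneg (k : ℕ) (t : ℝ) : 0 ≤ tp k t := pow_nonneg (le_max_right _ _) _

lemma tp_of_nonpos {k : ℕ} (hk : 1 ≤ k) {t : ℝ} (ht : t ≤ 0) : tp k t = 0 := by
  unfold tp
  rw [max_eq_right ht, zero_pow (by omega)]

lemma tp_of_nonneg (k : ℕ) {t : ℝ} (ht : 0 ≤ t) : tp k t = t ^ k := by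
  unfold tp; rw [max_eq_left ht]

lemma tp_mono (k : ℕ) : Monotone (tp k) := fun a b hab =>
  pow_le_pow_left₀ (le_max_right _ _) (max_le_max hab le_rfl) _

lemma tp_hasDerivAt (k : ℕ) (hk : 1 ≤ k) (t : ℝ) :
    HasDerivAt (tp (k + 1)) ((k + 1) * tp k t) t := by
  rcases lt_trichotomy t 0 with h | h | h
  · have : tp k t = 0 := tp_of_nonpos hk h.le
    rw [this, mul_zero]
    have h0 : HasDerivAt (fun _ : ℝ => (0:ℝ)) 0 t := hasDerivAt_const t 0
    apply h0.congr_of_eventuallyEq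
    filter_upwards [Iio_mem_nhds h] with y hy
    exact tp_of_nonpos (by omega) (le_of_lt hy)
  · subst h
    rw [tp_of_nonpos hk le_rfl, mul_zero]
    rw [hasDerivAt_iff_tendsto_slope]
    have hb : ∀ y : ℝ, ‖slope (tp (k+1)) 0 y‖ ≤ |y| ^ k := by
      intro y
      rw [slope_def_field, tp_of_nonpos (by omega) le_rfl]
      rcases le_or_gt y 0 with hy | hy
      · rw [tp_of_nonpos (by omega) hy]
        simp
      · rw [tp_of_nonneg _ hy.le, sub_zero, sub_zero, pow_succ, mul_div_assoc,
          div_self hy.ne', mul_one, Real.norm_eq_abs, abs_pow]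
    have hlim : Filter.Tendsto (fun y : ℝ => |y| ^ k) (nhdsWithin 0 {(0:ℝ)}ᶜ) (nhds 0) := by
      have : Filter.Tendsto (fun y : ℝ => |y| ^ k) (nhds 0) (nhds 0) := by
        have h0 : Filter.Tendsto (fun y : ℝ => |y| ^ k) (nhds 0) (nhds (|(0:ℝ)| ^ k)) :=
          ((continuous_abs.pow k).tendsto (0:ℝ))
        rw [abs_zero, zero_pow (by omega : k ≠ 0)] at h0; exact h0
      exact this.mono_left nhdsWithin_le_nhds
    exact squeeze_zero_norm hb hlim
  · have hpow : HasDerivAt (fun y : ℝ => y ^ (k+1)) ((k+1) * t ^ k) t := by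
      simpa using hasDerivAt_pow (k+1) t
    rw [tp_of_nonneg k h.le]
    apply hpow.congr_of_eventuallyEq
    filter_upwards [Ioi_mem_nhds h] with y hy
    exact tp_of_nonneg _ (le_of_lt hy)

lemma tp_contDiff (m : ℕ) : ∀ k : ℕ, 1 ≤ k → ContDiff ℝ (m : ℕ∞) (tp (k + m)) := by
  induction m with
  | zero => intro k hk; simpa [CharP.cast_eq_zero, contDiff_zero] using (tp_cont k)
  | succ m ih =>
    intro k hk
    have hcast : ((m + 1 : ℕ) : ℕ∞) = (m : ℕ∞) + 1 := by push_cast; ring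
    rw [show k + (m + 1) = (k + m) + 1 by ring]
    have hdiff : Differentiable ℝ (tp (k + m + 1)) := fun x =>
      (tp_hasDerivAt (k + m) (by omega) x).differentiableAt
    have hderiv : deriv (tp (k + m + 1)) = fun t => ((k + m + 1 : ℕ) : ℝ) * tp (k + m) t := by
      funext x
      have := (tp_hasDerivAt (k + m) (by omega) x).deriv
      rw [this]; push_cast; ring
    have key : ContDiff ℝ ((m : WithTop ℕ∞) + 1) (tp (k + m + 1)) := by
      rw [contDiff_succ_iff_deriv]
      exact ⟨hdiff, by simp, by rw [hderiv]; exact contDiff_const.mul (ih k hk)⟩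
    exact_mod_cast key

lemma natDegree_taylor_sub (m : ℕ) (Q : Polynomial ℝ) (hm : Q.natDegree ≤ m + 1) (h : ℝ) :
    (Polynomial.taylor h Q - Q).natDegree ≤ m := by
  rw [Polynomial.natDegree_le_iff_coeff_eq_zero]
  intro j hj
  rw [Polynomial.coeff_sub]
  rcases eq_or_lt_of_le (Nat.succ_le_of_lt hj) with hj1 | hj1
  · have hj1 : j = m + 1 := hj1.symm
    subst hj1
    rw [Polynomial.taylor_coeff]
    have hh : Polynomial.hasseDeriv (m+1) Q = Polynomial.C (Q.coeff (m+1)) := by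
      ext k
      rw [Polynomial.hasseDeriv_coeff, Polynomial.coeff_C]
      cases k with
      | zero => simp
      | succ k =>
        have hc : Q.coeff (k + 1 + (m+1)) = 0 :=
          Polynomial.coeff_eq_zero_of_natDegree_lt (by omega)
        simp [hc]
    rw [hh, Polynomial.eval_C, sub_self]
  · have h1 : (Polynomial.taylor h Q).coeff j = 0 :=
      Polynomial.coeff_eq_zero_of_natDegree_lt (by rw [Polynomial.natDegree_taylor]; omega)
    have h2 : Q.coeff j = 0 := Polynomial.coeff_eq_zero_of_natDegree_lt (by omega)
    rw [h1, h2, sub_self]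

lemma findiff : ∀ (m : ℕ) (Q : Polynomial ℝ), Q.natDegree ≤ m → ∀ (x h : ℝ),
    ∑ k ∈ Finset.range (m+2), (-1:ℝ)^k * ((m+1).choose k : ℝ) * Q.eval (x + k*h) = 0 := by
  intro m
  induction m with
  | zero =>
    intro Q hQ x h
    rw [Polynomial.eq_C_of_natDegree_le_zero hQ]
    simp [Finset.sum_range_succ]
  | succ m ih =>
    intro Q hQ x h
    set Q1 := Polynomial.taylor h Q - Q with hQ1def
    have hQ1deg : Q1.natDegree ≤ m := natDegree_taylor_sub m Q hQ h
    have hQ1eval : ∀ y : ℝ, Q1.eval y = Q.eval (y + h) - Q.eval y := by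
      intro y; rw [hQ1def, Polynomial.eval_sub, Polynomial.taylor_eval]
    show ∑ k ∈ Finset.range (m+3), (-1:ℝ)^k * ((m+2).choose k : ℝ) * Q.eval (x + k*h) = 0
    have key : (∑ k ∈ Finset.range (m+3), (-1:ℝ)^k * ((m+2).choose k : ℝ) * Q.eval (x + k*h))
        = ((∑ k ∈ Finset.range (m+2), (-1:ℝ)^(k+1) * ((m+1).choose (k+1) : ℝ)
              * Q.eval (x + ((k:ℕ)+1)*h))
            + (-1:ℝ)^0 * ((m+1).choose 0 : ℝ) * Q.eval (x + (0:ℕ)*h))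
          - ∑ k ∈ Finset.range (m+2), (-1:ℝ)^k * ((m+1).choose k : ℝ) * Q.eval (x + k*h + h) := by
      rw [Finset.sum_range_succ'
        (fun k : ℕ => (-1:ℝ)^k * ((m+2).choose k : ℝ) * Q.eval (x + k*h)) (m+2)]
      have h2 : ∀ k ∈ Finset.range (m+2),
          (-1:ℝ)^(k+1) * ((m+2).choose (k+1) : ℝ) * Q.eval (x + ((k+1:ℕ):ℝ)*h)
          = (-1:ℝ)^(k+1) * ((m+1).choose (k+1) : ℝ) * Q.eval (x + ((k:ℕ)+1)*h)
            - (-1:ℝ)^k * ((m+1).choose k : ℝ) * Q.eval (x + k*h + h) := by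
        intro k _
        have hc : ((m+2).choose (k+1) : ℝ)
            = ((m+1).choose k : ℝ) + ((m+1).choose (k+1) : ℝ) := by
          rw [Nat.choose_succ_succ]; push_cast; ring
        have hx : (((k+1:ℕ)):ℝ)*h = ((k:ℕ):ℝ)*h + h := by push_cast; ring
        rw [hc, hx, ← add_assoc]
        ring
      rw [Finset.sum_congr rfl h2, Finset.sum_sub_distrib]
      norm_num
      ring
    have hchoose0 : (-1:ℝ)^0 * ((m+1).choose 0 : ℝ) * Q.eval (x + (0:ℕ)*h)
        = (-1:ℝ)^0 * ((m+1).choose 0 : ℝ) * Q.eval (x + (0:ℕ)*h) := rfl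
    have key2 : (∑ k ∈ Finset.range (m+2), (-1:ℝ)^(k+1) * ((m+1).choose (k+1) : ℝ)
            * Q.eval (x + ((k:ℕ)+1)*h))
          + (-1:ℝ)^0 * ((m+1).choose 0 : ℝ) * Q.eval (x + (0:ℕ)*h)
        = ∑ k ∈ Finset.range (m+3), (-1:ℝ)^k * ((m+1).choose k : ℝ) * Q.eval (x + k*h) := by
      rw [Finset.sum_range_succ'
        (fun k : ℕ => (-1:ℝ)^k * ((m+1).choose k : ℝ) * Q.eval (x + k*h)) (m+2)]
      congr 1
      refine Finset.sum_congr rfl (fun k _ => ?_)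
      push_cast
      ring
    have key3 : ∑ k ∈ Finset.range (m+3), (-1:ℝ)^k * ((m+1).choose k : ℝ) * Q.eval (x + k*h)
        = ∑ k ∈ Finset.range (m+2), (-1:ℝ)^k * ((m+1).choose k : ℝ) * Q.eval (x + k*h) := by
      rw [Finset.sum_range_succ]
      have : ((m+1).choose (m+2) : ℝ) = 0 := by
        rw [Nat.choose_eq_zero_of_lt (by omega)]; norm_num
      rw [this]
      ring
    rw [key, key2, key3, ← Finset.sum_sub_distrib]
    have h3 : ∀ k ∈ Finset.range (m+2),
        (-1:ℝ)^k * ((m+1).choose k : ℝ) * Q.eval (x + k*h)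
          - (-1:ℝ)^k * ((m+1).choose k : ℝ) * Q.eval (x + k*h + h)
        = -((-1:ℝ)^k * ((m+1).choose k : ℝ) * Q1.eval (x + k*h)) := by
      intro k _
      rw [hQ1eval]
      ring
    rw [Finset.sum_congr rfl h3, Finset.sum_neg_distrib, ih Q1 hQ1deg x h, neg_zero]

set_option maxHeartbeats 2000000 in
/-- Copositive approximation with interpolatory constraints, negative result for
`f ∈ C^r` with odd `r ≥ 1`: for any `n ≥ r`, `A > 0` and `λ ∈ [0,1]`, there is
`f ∈ C^r[-1,1]`, vanishing on `[-1,-1/2]` and nonnegative on `[-1,1]`, such that any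
polynomial of degree ≤ n, nonnegative on `(λ - 1/n, λ)`, with
`P_n^{(i)}(λ) = f^{(i)}(λ)` for `0 ≤ i ≤ r`, satisfies `‖f - P_n‖ > A ‖f^{(r)}‖`. -/
theorem statement13 (r : ℕ) (hr : 1 ≤ r) (hro : Odd r) (n : ℕ) (hn : r ≤ n)
    (A : ℝ) (hA : 0 < A) (lam : ℝ) (hlam : lam ∈ Set.Icc (0 : ℝ) 1) :
    ∃ f : ℝ → ℝ, ContDiffOn ℝ r f (Set.Icc (-1 : ℝ) 1) ∧
      (∀ x ∈ Set.Icc (-1 : ℝ) (-1/2 : ℝ), f x = 0) ∧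
      (∀ x ∈ Set.Icc (-1 : ℝ) 1, 0 ≤ f x) ∧
      ∀ P : Polynomial ℝ, P.natDegree ≤ n →
        (∀ x ∈ Set.Ioo (lam - 1 / n) lam, 0 ≤ P.eval x) →
        (∀ i : ℕ, i ≤ r → (Polynomial.derivative^[i] P).eval lam
            = iteratedDerivWithin i f (Set.Icc (-1 : ℝ) 1) lam) →
        A * supNorm (iteratedDerivWithin r f (Set.Icc (-1 : ℝ) 1)) (-1) 1
          < supNorm (fun x => f x - P.eval x) (-1) 1 := by
  obtain ⟨hlam0, hlam1⟩ := hlam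
  have hn1 : 1 ≤ n := le_trans hr hn
  have hN1 : (1:ℝ) ≤ (n:ℝ) := by exact_mod_cast hn1
  have hNpos : (0:ℝ) < (n:ℝ) := by linarith
  have hEven : Even (r+1) := hro.add_one
  set Cr : ℝ := ((r+1).descFactorial r : ℝ) with hCr
  have hCrpos : 0 < Cr := by
    rw [hCr]
    have hne : (r+1).descFactorial r ≠ 0 := by
      rw [Ne, Nat.descFactorial_eq_zero_iff_lt]; omega
    exact_mod_cast Nat.pos_of_ne_zero hne
  clear_value Cr
  set K : ℝ := 2^n * ((2*(n:ℝ))^(r+1) * (A * Cr) + 2*(n:ℝ)*((r:ℝ)+1)) + 1 with hK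
  have hKpos : (0:ℝ) < K := by positivity
  clear_value K
  have hK1 : (1:ℝ) ≤ K := by
    have h0 : (0:ℝ) ≤ 2^n * ((2*(n:ℝ))^(r+1) * (A * Cr) + 2*(n:ℝ)*((r:ℝ)+1)) := by positivity
    rw [hK]; linarith
  set δ : ℝ := min (1/(8*(n:ℝ))) (1/(2*K)) with hδdef
  have hδpos : 0 < δ := lt_min (by positivity) (by positivity)
  have hδ8N : δ ≤ 1/(8*(n:ℝ)) := min_le_left _ _
  have hδK : δ ≤ 1/(2*K) := min_le_right _ _
  have hδ8 : δ ≤ 1/8 := by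
    refine le_trans hδ8N ?_
    rw [div_le_div_iff₀ (by positivity) (by norm_num)]
    nlinarith
  clear_value δ
  clear hδdef
  set s : Set ℝ := Set.Icc (-1:ℝ) 1 with hs
  have hsu : UniqueDiffOn ℝ s := uniqueDiffOn_Icc (by norm_num)
  set f : ℝ → ℝ := fun x => tp (r+1) (x - lam + δ) - tp (r+1) (x - lam) with hf
  have htpc : ContDiff ℝ (r : ℕ∞) (tp (r+1)) := by
    have := tp_contDiff r 1 le_rfl
    rwa [Nat.add_comm] at this
  have hfcd : ContDiff ℝ (r : ℕ∞) f := by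
    apply ContDiff.sub
    · exact htpc.comp ((contDiff_id.sub contDiff_const).add contDiff_const)
    · exact htpc.comp (contDiff_id.sub contDiff_const)
  have hfc : Continuous f := hfcd.continuous
  -- the three easy properties
  have prop1 : ContDiffOn ℝ r f (Set.Icc (-1 : ℝ) 1) := by
    exact_mod_cast hfcd.contDiffOn
  have prop2 : ∀ x ∈ Set.Icc (-1 : ℝ) (-1/2 : ℝ), f x = 0 := by
    intro x hx
    rw [hf]
    have h1 : x - lam + δ ≤ 0 := by
      have := hx.2; linarith
    have h2 : x - lam ≤ 0 := by have := hx.2; linarith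
    simp only
    rw [tp_of_nonpos (by omega) h1, tp_of_nonpos (by omega) h2, sub_zero]
  have prop3 : ∀ x ∈ Set.Icc (-1 : ℝ) 1, 0 ≤ f x := by
    intro x _
    rw [hf]
    simp only [sub_nonneg]
    exact tp_mono (r+1) (by linarith)
  -- the derivative formula
  set F : ℕ → ℝ → ℝ := fun i x => ((r+1).descFactorial i : ℝ) *
      (tp (r+1-i) (x - lam + δ) - tp (r+1-i) (x - lam)) with hF
  have hFd : ∀ i, i < r → ∀ x : ℝ, HasDerivAt (F i) (F (i+1) x) x := by
    intro i hi x
    have hk : 1 ≤ r - i := by omega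
    have e : r + 1 - i = (r - i) + 1 := by omega
    have e2 : r + 1 - (i+1) = r - i := by omega
    have h1 : HasDerivAt (fun y : ℝ => tp ((r-i)+1) (y - lam + δ))
        ((((r-i):ℕ) + 1 : ℝ) * tp (r-i) (x - lam + δ)) x := by
      have hasin : HasDerivAt (fun y : ℝ => y - lam + δ) 1 x := by
        simpa using ((hasDerivAt_id x).sub_const lam).add_const δ
      have h := (tp_hasDerivAt (r-i) hk (x - lam + δ)).comp x hasin
      simp only [mul_one] at h; exact h
    have h2 : HasDerivAt (fun y : ℝ => tp ((r-i)+1) (y - lam))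
        ((((r-i):ℕ) + 1 : ℝ) * tp (r-i) (x - lam)) x := by
      have hasin : HasDerivAt (fun y : ℝ => y - lam) 1 x := by
        simpa using (hasDerivAt_id x).sub_const lam
      have h := (tp_hasDerivAt (r-i) hk (x - lam)).comp x hasin
      simp only [mul_one] at h; exact h
    have h3 := (h1.sub h2).const_mul (((r+1).descFactorial i : ℕ) : ℝ)
    have hFi : F i = fun y => (((r+1).descFactorial i : ℕ):ℝ) *
        (tp ((r-i)+1) (y - lam + δ) - tp ((r-i)+1) (y - lam)) := by
      funext y; rw [hF]; simp only [e]
    rw [hFi]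
    refine h3.congr_deriv ?_
    rw [hF]; simp only [e2, Nat.descFactorial_succ]
    rw [Nat.cast_mul, Nat.cast_sub (by omega : i ≤ r + 1),
      Nat.cast_sub (by omega : i ≤ r)]
    push_cast
    ring
  have hEq : ∀ i, i ≤ r → Set.EqOn (iteratedDerivWithin i f s) (F i) s := by
    intro i
    induction i with
    | zero =>
      intro _ x hx
      rw [iteratedDerivWithin_zero, hF, hf]
      simp
    | succ i ih =>
      intro hi x hx
      rw [iteratedDerivWithin_succ,
        derivWithin_congr (ih (by omega)) (ih (by omega) hx)]
      exact ((hFd i (by omega) x).hasDerivWithinAt).derivWithin (hsu x hx)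
  have hlammem : lam ∈ s := ⟨by linarith, hlam1⟩
  have hval : ∀ i, i ≤ r →
      iteratedDerivWithin i f s lam = ((r+1).descFactorial i : ℝ) * δ^(r+1-i) := by
    intro i hi
    rw [hEq i hi hlammem, hF]
    simp only
    rw [show lam - lam + δ = δ by ring, show lam - lam = (0:ℝ) by ring,
        tp_of_nonneg _ hδpos.le, tp_of_nonpos (by omega) le_rfl, sub_zero]
  have hDerivBound : supNorm (iteratedDerivWithin r f s) (-1) 1 ≤ Cr * δ := by
    apply Real.sSup_le
    · rintro z ⟨x, hx, rfl⟩
      simp only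
      rw [hEq r le_rfl hx, hF]
      simp only [show r + 1 - r = 1 by omega]
      rw [abs_mul, abs_of_nonneg (Nat.cast_nonneg _)]
      have h1 : |tp 1 (x - lam + δ) - tp 1 (x - lam)| ≤ δ := by
        have e1 : ∀ t : ℝ, tp 1 t = max t 0 := by intro t; rw [tp, pow_one]
        rw [e1, e1]
        have := abs_max_sub_max_le_abs (x - lam + δ) (x - lam) 0
        calc |max (x - lam + δ) 0 - max (x - lam) 0| ≤ |x - lam + δ - (x - lam)| := this
          _ = δ := by rw [show x - lam + δ - (x - lam) = δ by ring, abs_of_pos hδpos]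
      calc (((r+1).descFactorial r : ℕ):ℝ) * |tp 1 (x - lam + δ) - tp 1 (x - lam)|
          ≤ (((r+1).descFactorial r : ℕ):ℝ) * δ :=
            mul_le_mul_of_nonneg_left h1 (Nat.cast_nonneg _)
        _ = Cr * δ := by rw [hCr]
    · positivity
  refine ⟨f, prop1, prop2, prop3, ?_⟩
  intro P hPdeg hPpos hPjet
  by_contra hcon
  push_neg at hcon
  set E : ℝ := A * supNorm (iteratedDerivWithin r f (Set.Icc (-1 : ℝ) 1)) (-1) 1 with hE
  clear_value E
  have hsupnn : 0 ≤ supNorm (iteratedDerivWithin r f s) (-1) 1 :=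
    Real.sSup_nonneg (by rintro z ⟨x, _, rfl⟩; exact abs_nonneg _)
  have hE0 : 0 ≤ E := by
    rw [hE]; exact mul_nonneg hA.le (by rw [← hs] at *; exact hsupnn)
  have hEbound : E ≤ A * (Cr * δ) := by
    rw [hE]
    exact mul_le_mul_of_nonneg_left (by rw [← hs]; exact hDerivBound) hA.le
  have hle : supNorm (fun x => f x - P.eval x) (-1) 1 ≤ E := hcon
  have hbdd : BddAbove ((fun x => |f x - P.eval x|) '' Set.Icc (-1:ℝ) 1) := by
    apply IsCompact.bddAbove_image isCompact_Icc
    exact ((hfc.sub P.continuous).abs).continuousOn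
  have hpt : ∀ y ∈ s, |f y - P.eval y| ≤ E := by
    intro y hy
    refine le_trans ?_ hle
    exact le_csSup hbdd ⟨y, hy, rfl⟩
  have hPE : ∀ y ∈ Set.Icc (-1:ℝ) (lam - 1/(2*(n:ℝ))), |P.eval y| ≤ E := by
    rintro y ⟨hy1, hy2⟩
    have hn2 : (0:ℝ) < 1/(2*(n:ℝ)) := by positivity
    have hymem : y ∈ s := ⟨hy1, by linarith⟩
    have hfy : f y = 0 := by
      rw [hf]
      simp only
      have hyl : y - lam + δ ≤ 0 := by
        have : δ ≤ 1/(2*(n:ℝ)) := by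
          refine le_trans hδ8N ?_
          rw [div_le_div_iff₀ (by positivity) (by positivity)]
          nlinarith
        linarith
      rw [tp_of_nonpos (by omega) hyl,
        tp_of_nonpos (by omega) (by linarith : y - lam ≤ 0), sub_zero]
    have := hpt y hymem
    rwa [hfy, zero_sub, abs_neg] at this
  -- polynomial decomposition
  set T : Polynomial ℝ := (X + C (δ - lam))^(r+1) - (X + C (-lam))^(r+1) with hT
  have hTeval : ∀ y : ℝ, T.eval y = (y - lam + δ)^(r+1) - (y - lam)^(r+1) := by
    intro y
    rw [hT]
    simp only [eval_sub, eval_pow, eval_add, eval_X, eval_C]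
    rw [show y + (δ - lam) = y - lam + δ by ring, show y + -lam = y - lam by ring]
  have hTjet : ∀ i, i ≤ r →
      (Polynomial.derivative^[i] T).eval lam = ((r+1).descFactorial i : ℝ) * δ^(r+1-i) := by
    intro i hi
    rw [hT, Polynomial.iterate_derivative_sub, Polynomial.iterate_derivative_X_add_pow,
        Polynomial.iterate_derivative_X_add_pow, Polynomial.eval_sub, Polynomial.eval_smul,
        Polynomial.eval_smul, Polynomial.eval_pow, Polynomial.eval_pow, Polynomial.eval_add,
        Polynomial.eval_add, Polynomial.eval_X, Polynomial.eval_C, Polynomial.eval_C]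
    rw [show lam + (δ - lam) = δ by ring, show lam + -lam = (0:ℝ) by ring,
        zero_pow (by omega : r + 1 - i ≠ 0)]
    simp [nsmul_eq_mul]
  have hTdeg : T.natDegree ≤ r := by
    rw [Polynomial.natDegree_le_iff_coeff_eq_zero]
    intro j hj
    rw [hT, Polynomial.coeff_sub, Polynomial.coeff_X_add_C_pow, Polynomial.coeff_X_add_C_pow]
    rcases eq_or_lt_of_le (Nat.succ_le_of_lt hj) with e | e
    · rw [← e, Nat.sub_self]
      norm_num
    · rw [Nat.choose_eq_zero_of_lt (by omega)]
      norm_num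
  set D : Polynomial ℝ := P - T with hD
  have hDjet : ∀ i, i ≤ r → (Polynomial.derivative^[i] D).eval lam = 0 := by
    intro i hi
    rw [hD, Polynomial.iterate_derivative_sub, Polynomial.eval_sub, hPjet i hi,
      hval i hi, hTjet i hi, sub_self]
  obtain ⟨Q, hQ⟩ : ∃ Q, D = (X - C lam)^(r+1) * Q := by
    by_cases hD0 : D = 0
    · exact ⟨0, by rw [hD0, mul_zero]⟩
    · have hmul : r < D.rootMultiplicity lam :=
        Polynomial.lt_rootMultiplicity_of_isRoot_iterate_derivative hD0
          (fun m hm => hDjet m hm)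
      obtain ⟨Q, hQ⟩ := dvd_trans
        (pow_dvd_pow (X - C lam) (show r+1 ≤ D.rootMultiplicity lam by omega))
        (Polynomial.pow_rootMultiplicity_dvd D lam)
      exact ⟨Q, hQ⟩
  have hPQ : ∀ y : ℝ, P.eval y = T.eval y + (y - lam)^(r+1) * Q.eval y := by
    intro y
    have h1 : P = T + (X - C lam)^(r+1) * Q := by rw [← hQ, hD]; ring
    rw [h1]
    simp [Polynomial.eval_add, Polynomial.eval_mul, Polynomial.eval_pow, Polynomial.eval_sub,
      Polynomial.eval_X, Polynomial.eval_C]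
  have hQdeg : Q.natDegree ≤ n - r - 1 := by
    by_cases hQ0 : Q = 0
    · simp [hQ0]
    · have hD0 : D ≠ 0 := by
        rw [hQ]
        exact mul_ne_zero (pow_ne_zero _ (Polynomial.X_sub_C_ne_zero lam)) hQ0
      have h1 : D.natDegree = (r+1) + Q.natDegree := by
        rw [hQ, Polynomial.natDegree_mul (pow_ne_zero _ (Polynomial.X_sub_C_ne_zero lam)) hQ0,
          Polynomial.natDegree_pow, Polynomial.natDegree_X_sub_C, mul_one]
      have h2 : D.natDegree ≤ n :=
        le_trans (Polynomial.natDegree_sub_le P T) (max_le hPdeg (le_trans hTdeg hn))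
      omega
  -- Claim 1 : Q is at least 1/2 at x₀ = lam - 2δ
  set x₀ : ℝ := lam - 2*δ with hx₀
  have hx0mem : x₀ ∈ Set.Ioo (lam - 1/(n:ℝ)) lam := by
    constructor
    · rw [hx₀]
      have : 2*δ < 1/(n:ℝ) := by
        have h8 : 2*δ ≤ 1/(4*(n:ℝ)) := by
          calc 2*δ ≤ 2*(1/(8*(n:ℝ))) := by linarith
            _ = 1/(4*(n:ℝ)) := by field_simp; ring
        have : 1/(4*(n:ℝ)) < 1/(n:ℝ) := by
          rw [div_lt_div_iff₀ (by positivity) (by positivity)]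
          nlinarith
        linarith
      linarith
    · rw [hx₀]; linarith
  have hq0 : (1:ℝ)/2 ≤ Q.eval x₀ := by
    have hPx0 := hPpos x₀ hx0mem
    rw [hPQ, hTeval, show x₀ - lam + δ = -δ by rw [hx₀]; ring,
      show x₀ - lam = -(2*δ) by rw [hx₀]; ring, hEven.neg_pow, hEven.neg_pow] at hPx0
    have h3 : (0:ℝ) < (2*δ)^(r+1) := by positivity
    have h2 : 2 * δ^(r+1) ≤ (2*δ)^(r+1) := by
      rw [mul_pow]
      have h4 : (2:ℝ) ≤ 2^(r+1) := by
        calc (2:ℝ) = 2^1 := by norm_num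
          _ ≤ 2^(r+1) := pow_le_pow_right₀ (by norm_num) (by omega)
      calc 2 * δ^(r+1) ≤ 2^(r+1) * δ^(r+1) :=
            mul_le_mul_of_nonneg_right h4 (pow_nonneg hδpos.le _)
        _ = 2^(r+1) * δ^(r+1) := rfl
    have h5 : (2*δ)^(r+1) * (1/2) ≤ (2*δ)^(r+1) * Q.eval x₀ := by linarith [hPx0, h2]
    exact (mul_le_mul_iff_right₀ h3).mp h5
  clear hcon hle hbdd hpt hPjet hval hDerivBound hEq hFd prop1 prop2 prop3 hfc hfcd htpc hsupnn hE hDjet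
  clear hF F
  clear hf f
  -- Claim 2 : Q is small on [-1, lam - 1/(2n)]
  set B : ℝ := E * (2*(n:ℝ))^(r+1) + ((r:ℝ)+1)*(2*(n:ℝ))*δ with hB
  clear_value B
  have hBnn : 0 ≤ B := by
    rw [hB]; positivity
  have hQsmall : ∀ y ∈ Set.Icc (-1:ℝ) (lam - 1/(2*(n:ℝ))), |Q.eval y| ≤ B := by
    rintro y ⟨hy1, hy2⟩
    set u : ℝ := lam - y with hu
    have hu1 : 1/(2*(n:ℝ)) ≤ u := by rw [hu]; linarith
    have hupos : 0 < u := lt_of_lt_of_le (by positivity) hu1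
    have hnu : (1:ℝ) ≤ 2*(n:ℝ)*u := by
      rw [div_le_iff₀ (by positivity)] at hu1
      linarith [hu1]
    have hδu : δ ≤ u / 2 := by
      have h1 : 1/(8*(n:ℝ)) ≤ u/2 := by
        rw [div_le_div_iff₀ (by positivity) (by norm_num)]
        nlinarith
      linarith
    have hPy : |P.eval y| ≤ E := hPE y ⟨hy1, hy2⟩
    have hev : P.eval y = (u - δ)^(r+1) - u^(r+1) + u^(r+1) * Q.eval y := by
      rw [hPQ, hTeval, show y - lam + δ = -(u - δ) by rw [hu]; ring,
        show y - lam = -u by rw [hu]; ring, hEven.neg_pow, hEven.neg_pow]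
    -- Bernoulli bound
    have hδu2 : δ/u ≤ 1/2 := by
      rw [div_le_iff₀ hupos]; linarith
    have e1 : (1 : ℝ) - ((r:ℝ)+1)*(δ/u) ≤ ((u-δ)/u)^(r+1) := by
      have hB1 := one_add_mul_le_pow (show (-2:ℝ) ≤ -(δ/u) by linarith) (r+1)
      have e2 : (1:ℝ) + -(δ/u) = (u - δ)/u := by rw [sub_div, div_self (ne_of_gt hupos)]; ring
      rw [e2] at hB1
      push_cast at hB1 ⊢
      linarith
    have hber : u^(r+1) - (u - δ)^(r+1) ≤ ((r:ℝ)+1) * δ * u^r := by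
      have e3 : ((u-δ)/u)^(r+1) = (u-δ)^(r+1)/u^(r+1) := div_pow _ _ _
      rw [e3] at e1
      have hup : (0:ℝ) < u^(r+1) := by positivity
      have e4 := mul_le_mul_of_nonneg_left e1 hup.le
      rw [mul_div_cancel₀ _ (ne_of_gt hup)] at e4
      have e5 : u^(r+1) * (((r:ℝ)+1)*(δ/u)) = ((r:ℝ)+1)*δ*u^r := by
        rw [pow_succ]
        field_simp
      nlinarith [e4, e5]
    have hpow_le : (u - δ)^(r+1) ≤ u^(r+1) :=
      pow_le_pow_left₀ (by linarith) (by linarith) (r+1)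
    have h5 : |u^(r+1) * Q.eval y| ≤ E + ((r:ℝ)+1)*δ*u^r := by
      have e6 : u^(r+1) * Q.eval y = P.eval y - ((u - δ)^(r+1) - u^(r+1)) := by
        rw [hev]; ring
      rw [e6]
      calc |P.eval y - ((u - δ)^(r+1) - u^(r+1))|
          ≤ |P.eval y| + |(u - δ)^(r+1) - u^(r+1)| := abs_sub _ _
        _ ≤ E + ((r:ℝ)+1)*δ*u^r := by
            have e7 : |(u - δ)^(r+1) - u^(r+1)| = u^(r+1) - (u - δ)^(r+1) := by
              rw [abs_sub_comm, abs_of_nonneg (by linarith)]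
            rw [e7]
            linarith
    have hup : (0:ℝ) < u^(r+1) := by positivity
    rw [abs_mul, abs_of_pos hup] at h5
    -- now |Q y| ≤ E/u^{r+1} + (r+1)δ/u ≤ B
    have h6 : |Q.eval y| * u^(r+1) ≤ E + ((r:ℝ)+1)*δ*u^r := by
      rw [mul_comm]; exact h5
    have h7 : E ≤ E * ((2*(n:ℝ))^(r+1) * u^(r+1)) := by
      have : (1:ℝ) ≤ (2*(n:ℝ))^(r+1) * u^(r+1) := by
        rw [← mul_pow]
        exact one_le_pow₀ hnu
      nlinarith
    have h8 : ((r:ℝ)+1)*δ*u^r ≤ (((r:ℝ)+1)*(2*(n:ℝ))*δ) * u^(r+1) := by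
      have : u^(r+1) = u^r * u := pow_succ u r
      rw [this]
      have hur : (0:ℝ) < u^r := by positivity
      nlinarith [hur, hnu, hδpos]
    have h9 : |Q.eval y| * u^(r+1) ≤ B * u^(r+1) := by
      calc |Q.eval y| * u^(r+1) ≤ E + ((r:ℝ)+1)*δ*u^r := h6
        _ ≤ E * ((2*(n:ℝ))^(r+1) * u^(r+1)) + (((r:ℝ)+1)*(2*(n:ℝ))*δ) * u^(r+1) := by
            linarith
        _ = B * u^(r+1) := by rw [hB]; ring
    exact le_of_mul_le_mul_right h9 hup
  -- Claim 3 : finite difference bound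
  set m : ℕ := n - r - 1 with hm
  have hm1 : m + 1 ≤ n := by omega
  set st : ℝ := -(1 + x₀)/((m:ℝ)+1) with hst
  have hmpos : (0:ℝ) < (m:ℝ)+1 := by positivity
  have hx0gt : (-1:ℝ) < x₀ := by rw [hx₀]; linarith
  have h1x0 : (0:ℝ) < 1 + x₀ := by linarith
  have hstneg : st < 0 := by
    rw [hst]
    apply div_neg_of_neg_of_pos (by linarith) hmpos
  have hstle : st ≤ -(1/(2*(n:ℝ))) := by
    rw [hst, neg_div, neg_le_neg_iff, div_le_div_iff₀ (by positivity) hmpos]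
    have hmn : (m:ℝ)+1 ≤ (n:ℝ) := by exact_mod_cast hm1
    have : 1 + x₀ ≥ 1/2 := by rw [hx₀]; linarith
    nlinarith
  have hklem : ∀ k : ℕ, 1 ≤ k → k ≤ m+1 →
      x₀ + (k:ℝ) * st ∈ Set.Icc (-1:ℝ) (lam - 1/(2*(n:ℝ))) := by
    intro k hk1 hk2
    have hkr : (1:ℝ) ≤ (k:ℝ) := by exact_mod_cast hk1
    have hkr2 : (k:ℝ) ≤ (m:ℝ)+1 := by exact_mod_cast hk2
    constructor
    · have hx : x₀ + ((m:ℝ)+1) * st = -1 := by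
        rw [hst]
        field_simp
        ring
      nlinarith [hstneg]
    · have h1 : x₀ + (k:ℝ)*st ≤ x₀ + st := by nlinarith [hstneg]
      have h2 : x₀ + st ≤ lam - 1/(2*(n:ℝ)) := by
        rw [hx₀]
        linarith [hstle, hδpos]
      linarith
  have hfd := findiff m Q hQdeg x₀ st
  rw [show m + 2 = (m+1)+1 from rfl] at hfd
  rw [Finset.sum_range_succ'
    (fun k : ℕ => (-1:ℝ)^k * ((m+1).choose k : ℝ) * Q.eval (x₀ + (k:ℝ)*st)) (m+1)] at hfd
  have hg0 : (-1:ℝ)^(0:ℕ) * ((m+1).choose 0 : ℝ) * Q.eval (x₀ + ((0:ℕ):ℝ)*st) = Q.eval x₀ := by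
    norm_num
  rw [hg0] at hfd
  have habs : |Q.eval x₀| ≤ B * 2^(m+1) := by
    have hQx0 : Q.eval x₀ = -∑ k ∈ Finset.range (m+1),
        (-1:ℝ)^(k+1) * ((m+1).choose (k+1) : ℝ) * Q.eval (x₀ + ((k+1:ℕ):ℝ)*st) := by
      linarith [hfd]
    rw [hQx0, abs_neg]
    calc |∑ k ∈ Finset.range (m+1),
        (-1:ℝ)^(k+1) * ((m+1).choose (k+1) : ℝ) * Q.eval (x₀ + ((k+1:ℕ):ℝ)*st)|
        ≤ ∑ k ∈ Finset.range (m+1),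
          |(-1:ℝ)^(k+1) * ((m+1).choose (k+1) : ℝ) * Q.eval (x₀ + ((k+1:ℕ):ℝ)*st)| :=
          Finset.abs_sum_le_sum_abs _ _
      _ ≤ ∑ k ∈ Finset.range (m+1), ((m+1).choose (k+1) : ℝ) * B := by
          apply Finset.sum_le_sum
          intro k hk
          rw [abs_mul, abs_mul, abs_pow, abs_neg, abs_one, one_pow, one_mul, Nat.abs_cast]
          refine mul_le_mul_of_nonneg_left ?_ (Nat.cast_nonneg _)
          exact hQsmall _ (hklem (k+1) (by omega) (by simp at hk; omega))
      _ ≤ B * 2^(m+1) := by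
          rw [← Finset.sum_mul]
          have hcs : (∑ k ∈ Finset.range (m+1), ((m+1).choose (k+1) : ℝ)) ≤ 2^(m+1) := by
            have h1 : (∑ k ∈ Finset.range (m+1), (m+1).choose (k+1)) ≤
                ∑ k ∈ Finset.range (m+2), (m+1).choose k := by
              rw [Finset.sum_range_succ' (fun k => (m+1).choose k) (m+1)]
              omega
            have h2 : (∑ k ∈ Finset.range (m+2), (m+1).choose k) = 2^(m+1) :=
              Nat.sum_range_choose (m+1)
            calc (∑ k ∈ Finset.range (m+1), ((m+1).choose (k+1) : ℝ))
                = ((∑ k ∈ Finset.range (m+1), (m+1).choose (k+1) : ℕ) : ℝ) := by push_cast; rfl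
              _ ≤ ((2^(m+1) : ℕ) : ℝ) := by exact_mod_cast h1.trans h2.le
              _ = 2^(m+1) := by push_cast; rfl
          calc (∑ k ∈ Finset.range (m+1), ((m+1).choose (k+1) : ℝ)) * B
              ≤ 2^(m+1) * B := mul_le_mul_of_nonneg_right hcs hBnn
            _ = B * 2^(m+1) := by ring
  -- final contradiction
  have hfinal1 : B * 2^(m+1) ≤ B * 2^n :=
    mul_le_mul_of_nonneg_left (pow_le_pow_right₀ (by norm_num) hm1) hBnn
  have hBK : B ≤ δ * ((2*(n:ℝ))^(r+1) * (A * Cr) + 2*(n:ℝ)*((r:ℝ)+1)) := by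
    rw [hB]
    have h1 : E * (2*(n:ℝ))^(r+1) ≤ (A * (Cr * δ)) * (2*(n:ℝ))^(r+1) :=
      mul_le_mul_of_nonneg_right hEbound (by positivity)
    nlinarith
  have hcontr : B * 2^n < 1/2 := by
    have h1 : B * 2^n ≤ δ * (K - 1) := by
      have hp2 : (0:ℝ) < (2:ℝ)^n := by positivity
      calc B * 2^n ≤ (δ * ((2*(n:ℝ))^(r+1) * (A * Cr) + 2*(n:ℝ)*((r:ℝ)+1))) * 2^n :=
            mul_le_mul_of_nonneg_right hBK hp2.le
        _ = δ * (K - 1) := by rw [hK]; ring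
    have h2 : δ * (K - 1) < 1/2 := by
      have h3 : δ * (K-1) ≤ (1/(2*K)) * (K-1) := by
        apply mul_le_mul_of_nonneg_right hδK (by linarith)
      have h4 : (1/(2*K)) * (K-1) < 1/2 := by
        rw [div_mul_eq_mul_div, one_mul, div_lt_div_iff₀ (by positivity) (by norm_num)]
        nlinarith
      linarith
    linarith
  have : (1:ℝ)/2 ≤ B * 2^n := by
    calc (1:ℝ)/2 ≤ Q.eval x₀ := hq0
      _ ≤ |Q.eval x₀| := le_abs_self _
      _ ≤ B * 2^(m+1) := habs
      _ ≤ B * 2^n := hfinal1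
  linarith
end

section
/- For any n ∈ ℕ and any A > 0, there exists f ∈ C^1 ∩ Δ^(0)({0}) such that, for every polynomial P_n of degree ≤ n which is nonnegative on (0, 1/n) and satisfies P_n(0) = f(0) and P_n'(0) = f'(0), one has ‖f - P_n‖ > A ω₃(f', 1). Hence copositive approximation with first-order Hermite interpolation at the sign-change point 0 cannot achieve the rate ω₃(f', 1). -/
/-- `g ∈ Δ^(0)({0})`: `g ≤ 0` on `[-1,0]` and `g ≥ 0` on `[0,1]`. -/
def Delta0Zero (g : ℝ → ℝ) : Prop :=
  (∀ x ∈ Set.Icc (-1 : ℝ) 0, g x ≤ 0) ∧ (∀ x ∈ Set.Icc (0 : ℝ) 1, 0 ≤ g x)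

open Set Filter Polynomial

noncomputable def mfun (x₀ x : ℝ) : ℝ := max (x₀^2/4 - x^2) 0

noncomputable def ffun (x₀ : ℝ) (x : ℝ) : ℝ :=
  x*(x - x₀)^2 - (2/x₀^2)*(x*(mfun x₀ x)^2)

noncomputable def Ffun (x₀ x : ℝ) : ℝ :=
  3*x^2 - 4*x₀*x + x₀^2 - (2/x₀^2)*((mfun x₀ x)^2 - 4*x^2*(mfun x₀ x))


lemma maxsq_hasDerivAt (t : ℝ) :
    HasDerivAt (fun s : ℝ => max s 0 ^ 2) (2 * max t 0) t := by
  rcases lt_trichotomy t 0 with ht | ht | ht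
  · have hev : (fun s : ℝ => max s 0 ^ 2) =ᶠ[nhds t] fun _ => (0 : ℝ) := by
      filter_upwards [Iio_mem_nhds ht] with y hy
      simp [max_eq_right (le_of_lt (mem_Iio.mp hy))]
    have h0 : HasDerivAt (fun _ : ℝ => (0 : ℝ)) 0 t := hasDerivAt_const t 0
    have := h0.congr_of_eventuallyEq hev
    simpa [max_eq_right ht.le] using this
  · subst ht
    rw [hasDerivAt_iff_tendsto_slope]
    have hbound : ∀ y : ℝ, y ≠ 0 → ‖slope (fun s : ℝ => max s 0 ^ 2) 0 y‖ ≤ ‖y‖ := by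
      intro y hy
      have heq : slope (fun s : ℝ => max s 0 ^ 2) 0 y = max y 0 ^ 2 / y := by
        simp [slope_def_field]
      rw [heq]
      rcases le_or_gt y 0 with h | h
      · simp [max_eq_right h]
      · rw [max_eq_left h.le]
        have : y ^ 2 / y = y := by field_simp
        rw [this]
    have habs : Tendsto (fun y : ℝ => ‖y‖) (nhdsWithin 0 {(0:ℝ)}ᶜ) (nhds 0) := by
      have : Tendsto (fun y : ℝ => ‖y‖) (nhds 0) (nhds 0) := by
        simpa using (continuous_norm.tendsto (0:ℝ))
      exact this.mono_left nhdsWithin_le_nhds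
    have : Tendsto (slope (fun s : ℝ => max s 0 ^ 2) 0) (nhdsWithin 0 {(0:ℝ)}ᶜ) (nhds 0) := by
      apply squeeze_zero_norm' _ habs
      filter_upwards [self_mem_nhdsWithin] with y hy
      exact hbound y hy
    simpa using this
  · have hev : (fun s : ℝ => max s 0 ^ 2) =ᶠ[nhds t] fun s => s ^ 2 := by
      filter_upwards [Ioi_mem_nhds ht] with y hy
      simp [max_eq_left (le_of_lt (mem_Ioi.mp hy))]
    have h0 : HasDerivAt (fun s : ℝ => s ^ 2) (2 * t) t := by
      simpa using hasDerivAt_pow 2 t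
    have := h0.congr_of_eventuallyEq hev
    simpa [max_eq_left ht.le] using this

lemma maxsq_contDiff : ContDiff ℝ 1 (fun s : ℝ => max s 0 ^ 2) := by
  rw [contDiff_one_iff_deriv]
  constructor
  · exact fun s => (maxsq_hasDerivAt s).differentiableAt
  · have : deriv (fun s : ℝ => max s 0 ^ 2) = fun s => 2 * max s 0 :=
      funext fun s => (maxsq_hasDerivAt s).deriv
    rw [this]
    exact continuous_const.mul (continuous_id.max continuous_const)

lemma mfun_nonneg (x₀ x : ℝ) : 0 ≤ mfun x₀ x := le_max_right _ _

lemma mfun_le (x₀ x : ℝ) : mfun x₀ x ≤ x₀^2/4 := by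
  apply max_le (by nlinarith [sq_nonneg x]) (by positivity)

lemma mfun_eq_zero {x₀ x : ℝ} (h : x₀^2/4 ≤ x^2) : mfun x₀ x = 0 :=
  max_eq_right (by linarith)

lemma ffun_contDiff (x₀ : ℝ) : ContDiff ℝ 1 (ffun x₀) := by
  unfold ffun mfun
  have h1 : ContDiff ℝ 1 (fun x : ℝ => x₀^2/4 - x^2) :=
    contDiff_const.sub (contDiff_id.pow 2)
  have h2 : ContDiff ℝ 1 (fun x : ℝ => max (x₀^2/4 - x^2) 0 ^ 2) := maxsq_contDiff.comp h1
  have h3 : ContDiff ℝ 1 (fun x : ℝ => x*(x - x₀)^2) :=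
    contDiff_id.mul ((contDiff_id.sub contDiff_const).pow 2)
  exact h3.sub (contDiff_const.mul (contDiff_id.mul h2))

lemma ffun_hasDerivAt (x₀ x : ℝ) : HasDerivAt (ffun x₀) (Ffun x₀ x) x := by
  have h2 : HasDerivAt (fun x : ℝ => x₀^2/4 - x^2) (0 - 2*x^1) x :=
    (hasDerivAt_const x (x₀^2/4)).sub (hasDerivAt_pow 2 x)
  have h3 : HasDerivAt (fun x : ℝ => max (x₀^2/4 - x^2) 0 ^ 2)
      (2 * max (x₀^2/4 - x^2) 0 * (0 - 2*x^1)) x := by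
    have := (maxsq_hasDerivAt (x₀^2/4 - x^2)).comp x h2
    simpa [Function.comp_def] using this
  have h4 : HasDerivAt (fun x : ℝ => x * (max (x₀^2/4 - x^2) 0)^2)
      (1 * (max (x₀^2/4 - x^2) 0)^2 + x * (2 * max (x₀^2/4 - x^2) 0 * (0 - 2*x^1))) x :=
    (hasDerivAt_id x).mul h3
  have h5 : HasDerivAt (fun x : ℝ => x*(x - x₀)^2)
      (1 * (x - x₀)^2 + x * (2 * (x - x₀)^1 * 1)) x :=
    (hasDerivAt_id x).mul (((hasDerivAt_id x).sub_const x₀).pow 2)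
  have h6 := h5.sub ((hasDerivAt_const x (2/x₀^2)).mul h4)
  have h7 : HasDerivAt (fun x : ℝ => x*(x-x₀)^2 - (2/x₀^2)*(x*(max (x₀^2/4 - x^2) 0)^2))
      (1 * (x - x₀)^2 + x * (2 * (x - x₀)^1 * 1) -
        (0 * (x * (max (x₀^2/4 - x^2) 0)^2) +
          (2/x₀^2) * (1 * (max (x₀^2/4 - x^2) 0)^2 +
            x * (2 * max (x₀^2/4 - x^2) 0 * (0 - 2*x^1))))) x := by
    simpa [Pi.sub_def, Pi.mul_def] using h6
  have : ffun x₀ = fun x : ℝ => x*(x-x₀)^2 - (2/x₀^2)*(x*(max (x₀^2/4 - x^2) 0)^2) := by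
    funext y; unfold ffun mfun; ring
  rw [this]
  convert h7 using 1
  unfold Ffun mfun
  ring

lemma ffun_delta {x₀ : ℝ} (hx₀ : 0 < x₀) : Delta0Zero (ffun x₀) := by
  have hbr : ∀ x : ℝ, 0 ≤ (x - x₀)^2 - (2/x₀^2)*(mfun x₀ x)^2 := by
    intro x
    rcases le_or_gt (x₀^2/4) (x^2) with h | h
    · rw [mfun_eq_zero h]
      nlinarith [sq_nonneg (x - x₀)]
    · have hm : mfun x₀ x = x₀^2/4 - x^2 := max_eq_left (by linarith)
      have hxle : x ≤ x₀/2 := by nlinarith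
      have h3 : (x₀/2)^2 ≤ (x₀ - x)^2 := by nlinarith
      have h4 : (mfun x₀ x)^2 ≤ (x₀^2/4)^2 := by
        rw [hm]; nlinarith [sq_nonneg x]
      have h5 : (2/x₀^2)*(mfun x₀ x)^2 ≤ x₀^2/8 := by
        rw [div_mul_eq_mul_div, div_le_iff₀ (by positivity)]
        nlinarith
      have h6 : (x - x₀)^2 = (x₀ - x)^2 := by ring
      nlinarith [sq_nonneg x₀]
  constructor
  · intro x hx
    have : ffun x₀ x = x*((x - x₀)^2 - (2/x₀^2)*(mfun x₀ x)^2) := by unfold ffun; ring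
    rw [this]
    exact mul_nonpos_of_nonpos_of_nonneg hx.2 (hbr x)
  · intro x hx
    have : ffun x₀ x = x*((x - x₀)^2 - (2/x₀^2)*(mfun x₀ x)^2) := by unfold ffun; ring
    rw [this]
    exact mul_nonneg hx.1 (hbr x)

lemma wbound {x₀ : ℝ} (hx₀ : 0 < x₀) (y : ℝ) :
    |(mfun x₀ y)^2 - 4*y^2*(mfun x₀ y)| ≤ x₀^4/4 := by
  have hm0 := mfun_nonneg x₀ y
  have hm1 := mfun_le x₀ y
  rcases eq_or_lt_of_le hm0 with h | h
  · rw [← h]; norm_num; positivity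
  · have hy2 : y^2 ≤ x₀^2/4 := by
      by_contra hc
      push_neg at hc
      rw [mfun_eq_zero hc.le] at h
      exact lt_irrefl _ h
    have key : 4*y^2*(mfun x₀ y) ≤ 4*(x₀^2/4)*(x₀^2/4) := by
      have := mul_le_mul hy2 hm1 hm0 (by positivity : (0:ℝ) ≤ x₀^2/4)
      nlinarith
    rw [abs_le]
    constructor
    · nlinarith [sq_nonneg (mfun x₀ y)]
    · nlinarith [sq_nonneg (mfun x₀ y), mul_nonneg (mul_nonneg (by norm_num : (0:ℝ) ≤ 4) (sq_nonneg y)) hm0]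


lemma iterderiv_eq (x₀ : ℝ) {x : ℝ} (hx : x ∈ Set.Icc (-1:ℝ) 1) :
    iteratedDerivWithin 1 (ffun x₀) (Set.Icc (-1:ℝ) 1) x = Ffun x₀ x := by
  have hu : UniqueDiffWithinAt ℝ (Set.Icc (-1:ℝ) 1) x :=
    (uniqueDiffOn_Icc (by norm_num)).uniqueDiffWithinAt hx
  rw [iteratedDerivWithin_one]
  exact ((ffun_hasDerivAt x₀ x).hasDerivWithinAt).derivWithin hu

lemma omega_bound {x₀ : ℝ} (hx₀ : 0 < x₀) :
    omegaK (iteratedDerivWithin 1 (ffun x₀) (Set.Icc (-1:ℝ) 1)) 3 1 (-1) 1 ≤ 4*x₀^2 := by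
  apply Real.sSup_le _ (by positivity)
  rintro w ⟨h, x, hh0, hht, hx, hxh, rfl⟩
  push_cast at hxh
  have e0 := iterderiv_eq x₀ (show x ∈ Set.Icc (-1:ℝ) 1 from ⟨by linarith, by linarith⟩)
  have e1 := iterderiv_eq x₀ (show x + h ∈ Set.Icc (-1:ℝ) 1 from ⟨by linarith, by linarith⟩)
  have e2 := iterderiv_eq x₀ (show x + 2*h ∈ Set.Icc (-1:ℝ) 1 from ⟨by linarith, by linarith⟩)
  have e3 := iterderiv_eq x₀ (show x + 3*h ∈ Set.Icc (-1:ℝ) 1 from ⟨by linarith, by linarith⟩)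
  have hsum : ∑ i ∈ Finset.range (3 + 1),
      (-1 : ℝ) ^ (3 - i) * ((Nat.choose 3 i : ℕ):ℝ) *
        (iteratedDerivWithin 1 (ffun x₀) (Set.Icc (-1:ℝ) 1) (x + (i:ℝ)*h))
      = -Ffun x₀ x + 3*Ffun x₀ (x+h) - 3*Ffun x₀ (x+2*h) + Ffun x₀ (x+3*h) := by
    rw [Finset.sum_range_succ, Finset.sum_range_succ, Finset.sum_range_succ,
      Finset.sum_range_succ, Finset.sum_range_zero]
    norm_num
    rw [iteratedDerivWithin_one] at e0 e1 e2 e3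
    rw [e0, e1, e2, e3]
    ring
  rw [hsum]
  have hid : -Ffun x₀ x + 3*Ffun x₀ (x+h) - 3*Ffun x₀ (x+2*h) + Ffun x₀ (x+3*h)
      = -(2/x₀^2) * (-((mfun x₀ x)^2 - 4*x^2*(mfun x₀ x))
        + 3*((mfun x₀ (x+h))^2 - 4*(x+h)^2*(mfun x₀ (x+h)))
        - 3*((mfun x₀ (x+2*h))^2 - 4*(x+2*h)^2*(mfun x₀ (x+2*h)))
        + ((mfun x₀ (x+3*h))^2 - 4*(x+3*h)^2*(mfun x₀ (x+3*h)))) := by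
    unfold Ffun; ring
  rw [hid, abs_mul]
  have habs : |-(2/x₀^2)| = 2/x₀^2 := by
    rw [abs_neg, abs_of_nonneg (by positivity)]
  rw [habs]
  have b0 := wbound hx₀ x
  have b1 := wbound hx₀ (x+h)
  have b2 := wbound hx₀ (x+2*h)
  have b3 := wbound hx₀ (x+3*h)
  rw [abs_le] at b0 b1 b2 b3
  have hS : |(-((mfun x₀ x)^2 - 4*x^2*(mfun x₀ x))
        + 3*((mfun x₀ (x+h))^2 - 4*(x+h)^2*(mfun x₀ (x+h)))
        - 3*((mfun x₀ (x+2*h))^2 - 4*(x+2*h)^2*(mfun x₀ (x+2*h)))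
        + ((mfun x₀ (x+3*h))^2 - 4*(x+3*h)^2*(mfun x₀ (x+3*h))))| ≤ 2*x₀^4 := by
    rw [abs_le]
    constructor <;> [linarith [b0.1, b0.2, b1.1, b1.2, b2.1, b2.2, b3.1, b3.2];
      linarith [b0.1, b0.2, b1.1, b1.2, b2.1, b2.2, b3.1, b3.2]]
  calc (2/x₀^2) * |(-((mfun x₀ x)^2 - 4*x^2*(mfun x₀ x))
        + 3*((mfun x₀ (x+h))^2 - 4*(x+h)^2*(mfun x₀ (x+h)))
        - 3*((mfun x₀ (x+2*h))^2 - 4*(x+2*h)^2*(mfun x₀ (x+2*h)))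
        + ((mfun x₀ (x+3*h))^2 - 4*(x+3*h)^2*(mfun x₀ (x+3*h))))|
      ≤ (2/x₀^2) * (2*x₀^4) := mul_le_mul_of_nonneg_left hS (by positivity)
    _ = 4*x₀^2 := by field_simp; ring

set_option maxHeartbeats 2000000 in
/-- Copositive approximation with interpolation at `Y_s = {0}`, negative result for
`f ∈ C¹`: for any `n ∈ ℕ` and `A > 0`, there is `f ∈ C¹[-1,1] ∩ Δ^(0)({0})` such that
any polynomial of degree ≤ n, nonnegative on `(0, 1/n)`, with `P_n(0) = f(0)` and
`P_n'(0) = f'(0)`, satisfies `‖f - P_n‖ > A ω₃(f', 1)`. -/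
theorem statement14 (n : ℕ) (hn : 1 ≤ n) (A : ℝ) (hA : 0 < A) :
    ∃ f : ℝ → ℝ, ContDiffOn ℝ 1 f (Set.Icc (-1 : ℝ) 1) ∧ Delta0Zero f ∧
      ∀ P : Polynomial ℝ, P.natDegree ≤ n →
        (∀ x ∈ Set.Ioo (0 : ℝ) (1 / n : ℝ), 0 ≤ P.eval x) →
        P.eval 0 = f 0 →
        (Polynomial.derivative P).eval 0
          = iteratedDerivWithin 1 f (Set.Icc (-1 : ℝ) 1) 0 →
        A * omegaK (iteratedDerivWithin 1 f (Set.Icc (-1 : ℝ) 1)) 3 1 (-1) 1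
          < supNorm (fun x => f x - P.eval x) (-1) 1 := by
  have hn1 : (1:ℝ) ≤ (n:ℝ) := by exact_mod_cast hn
  obtain ⟨κ, hκdef⟩ : ∃ c : ℝ, c = (n:ℝ) + 1 := ⟨_, rfl⟩
  have hκpos : 0 < κ := by rw [hκdef]; linarith
  have hκ2 : 2 ≤ κ := by rw [hκdef]; linarith
  obtain ⟨B, hBdef⟩ : ∃ c : ℝ, c = (2*κ)^n := ⟨_, rfl⟩
  have hBpos : 0 < B := by rw [hBdef]; positivity
  have hB1 : 1 ≤ B := by rw [hBdef]; exact one_le_pow₀ (by linarith : (1:ℝ) ≤ 2*κ)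
  obtain ⟨d, hddef⟩ : ∃ c : ℝ, c = 4*(n:ℝ) + κ^2*B + 64*A*κ^3*B + 1 := ⟨_, rfl⟩
  have h64 : 0 < 64*A*κ^3*B := by
    apply mul_pos (mul_pos (by linarith) (by positivity)) hBpos
  have hκ2B : 0 < κ^2*B := by positivity
  have hdpos : 0 < d := by nlinarith [h64, hκ2B, hn1, hddef]
  obtain ⟨x₀, hx₀def⟩ : ∃ c : ℝ, c = 1/d := ⟨_, rfl⟩
  have hx₀pos : 0 < x₀ := by rw [hx₀def]; positivity
  have hdn : (n:ℝ) < d := by nlinarith [h64, hκ2B, hn1, hddef]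
  have hx₀n : x₀ < 1/(n:ℝ) := by
    rw [hx₀def]; exact one_div_lt_one_div_of_lt (by linarith) hdn
  have hκd : κ ≤ d := by nlinarith [h64, hκ2B, hn1, hddef, hκdef]
  have hx₀κ : x₀*κ ≤ 1 := by
    rw [hx₀def, div_mul_eq_mul_div, one_mul, div_le_one hdpos]; exact hκd
  have hd1 : 1 ≤ d := by linarith
  have hx₀1 : x₀ ≤ 1 := by
    rw [hx₀def]; exact le_trans (one_div_le_one_div_of_le (by norm_num) hd1) (by norm_num)
  obtain ⟨μ, hμdef⟩ : ∃ c : ℝ, c = x₀^2/8 := ⟨_, rfl⟩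
  have hμpos : 0 < μ := by rw [hμdef]; positivity
  -- the nodes
  obtain ⟨v, hvj⟩ : ∃ w : ℕ → ℝ, ∀ j : ℕ, w j = -((j:ℝ)+1)/κ := ⟨_, fun _ => rfl⟩
  have hvneg : ∀ j : ℕ, v j ≤ -(1/κ) := by
    intro j
    rw [hvj j]
    have h1 : (1:ℝ) ≤ (j:ℝ)+1 := by have : (0:ℝ) ≤ (j:ℝ) := Nat.cast_nonneg j; linarith
    rw [neg_div]
    apply neg_le_neg
    gcongr
  have hvge : ∀ j ∈ Finset.range (n+1), -1 ≤ v j := by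
    intro j hj
    have hj' : (j:ℝ)+1 ≤ κ := by
      rw [hκdef]
      have := Finset.mem_range.mp hj
      have : (j:ℝ) ≤ (n:ℝ) := by exact_mod_cast Nat.lt_succ_iff.mp this
      linarith
    rw [hvj j, neg_div]
    rw [neg_le, neg_neg]
    rw [div_le_one hκpos]
    exact hj'
  have hvlt0 : ∀ j : ℕ, v j < 0 := by
    intro j
    have := hvneg j
    have h2 : 0 < 1/κ := by positivity
    linarith
  have hvne0 : ∀ j : ℕ, v j ≠ 0 := fun j => (hvlt0 j).ne
  have hvsq : ∀ j : ℕ, 1/κ^2 ≤ (v j)^2 := by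
    intro j
    have h1 := hvneg j
    have h2 : 0 < 1/κ := by positivity
    have h3 : (1/κ)^2 ≤ (v j)^2 := by nlinarith [sq_nonneg (v j + 1/κ)]
    calc 1/κ^2 = (1/κ)^2 := by rw [div_pow, one_pow]
      _ ≤ (v j)^2 := h3
  have hInj : Set.InjOn v ↑(Finset.range (n+1)) := by
    intro i _ j _ hij
    rw [hvj i, hvj j] at hij
    have hκne : κ ≠ 0 := hκpos.ne'
    field_simp at hij
    exact_mod_cast (by linarith : (i:ℝ) = j)
  -- use f = ffun x₀
  refine ⟨ffun x₀, (ffun_contDiff x₀).contDiffOn, ffun_delta hx₀pos, ?_⟩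
  intro P hdeg hpos hP0 hP1
  have hf0 : ffun x₀ 0 = 0 := by unfold ffun; ring
  -- decompose P
  have hb0 : iteratedDerivWithin 1 (ffun x₀) (Set.Icc (-1:ℝ) 1) 0 = x₀^2 - μ := by
    rw [iterderiv_eq x₀ (by constructor <;> norm_num)]
    unfold Ffun mfun
    have hmax : max (x₀^2/4 - (0:ℝ)^2) 0 = x₀^2/4 := by
      rw [show x₀^2/4 - (0:ℝ)^2 = x₀^2/4 by norm_num]
      exact max_eq_left (by positivity)
    rw [hmax, hμdef]
    field_simp
    ring
  have hP00 : P.eval 0 = 0 := by rw [hP0, hf0]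
  obtain ⟨P₁, rfl⟩ : Polynomial.X ∣ P :=
    Polynomial.X_dvd_iff.mpr (by rwa [Polynomial.coeff_zero_eq_eval_zero])
  have hP₁0 : P₁.eval 0 = x₀^2 - μ := by
    rw [hb0] at hP1
    rw [Polynomial.derivative_mul, Polynomial.derivative_X] at hP1
    simpa using hP1
  obtain ⟨R, hRdef⟩ : Polynomial.X ∣ (P₁ - Polynomial.C (x₀^2 - μ)) := by
    apply Polynomial.X_dvd_iff.mpr
    simp [Polynomial.coeff_zero_eq_eval_zero, hP₁0]
  have hP₁ : P₁ = Polynomial.C (x₀^2 - μ) + Polynomial.X * R := by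
    rw [← hRdef]; ring
  have evalP : ∀ y : ℝ, (Polynomial.X*P₁).eval y = y*((x₀^2 - μ) + y*R.eval y) := by
    intro y
    rw [hP₁]
    simp [Polynomial.eval_mul, Polynomial.eval_add]
  -- degree bound on R
  have hndR : R.natDegree ≤ n := by
    by_cases hR0 : R = 0
    · simp [hR0]
    · have h1 : (Polynomial.X*R : Polynomial ℝ).natDegree = 1 + R.natDegree := by
        rw [Polynomial.natDegree_mul Polynomial.X_ne_zero hR0, Polynomial.natDegree_X]
      have h2 : P₁.natDegree = 1 + R.natDegree := by
        rw [hP₁, Polynomial.natDegree_add_eq_right_of_natDegree_lt, h1]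
        rw [h1, Polynomial.natDegree_C]
        omega
      have hP₁ne : P₁ ≠ 0 := by
        intro hc
        rw [hc, Polynomial.natDegree_zero] at h2
        omega
      have h3 : (Polynomial.X*P₁).natDegree = 1 + P₁.natDegree := by
        rw [Polynomial.natDegree_mul Polynomial.X_ne_zero hP₁ne, Polynomial.natDegree_X]
      omega
  -- the auxiliary polynomial D
  obtain ⟨D, hDdef⟩ : ∃ q : Polynomial ℝ, q = R - (Polynomial.X - Polynomial.C (2*x₀)) := ⟨_, rfl⟩
  have hDdeg : D.degree < ((Finset.range (n+1)).card : WithBot ℕ) := by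
    rw [Finset.card_range]
    have h4 : D.natDegree ≤ n := by
      rw [hDdef]
      refine le_trans (Polynomial.natDegree_sub_le _ _) ?_
      rw [Polynomial.natDegree_X_sub_C]
      exact max_le (by omega) (by omega)
    refine lt_of_le_of_lt Polynomial.degree_le_natDegree ?_
    exact_mod_cast Nat.lt_succ_of_le h4
  have hinterp := Lagrange.eq_interpolate (f := D) hInj hDdeg
  have hDx₀ := congrArg (Polynomial.eval x₀) hinterp
  rw [Lagrange.interpolate_apply, Polynomial.eval_finset_sum] at hDx₀
  simp only [Polynomial.eval_mul, Polynomial.eval_C] at hDx₀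
  -- sup-norm facts
  have hcont : Continuous fun x : ℝ => |ffun x₀ x - (Polynomial.X*P₁).eval x| :=
    ((ffun_contDiff x₀).continuous.sub (Polynomial.X*P₁).continuous).abs
  have hbdd : BddAbove ((fun x => |ffun x₀ x - (Polynomial.X*P₁).eval x|) '' Set.Icc (-1:ℝ) 1) :=
    isCompact_Icc.bddAbove_image hcont.continuousOn
  obtain ⟨E, hEdef⟩ : ∃ c : ℝ, c = supNorm (fun x => ffun x₀ x - (Polynomial.X*P₁).eval x) (-1) 1 := ⟨_, rfl⟩
  have hEb : ∀ x ∈ Set.Icc (-1:ℝ) 1, |ffun x₀ x - (Polynomial.X*P₁).eval x| ≤ E := by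
    intro x hx
    rw [hEdef]
    exact le_csSup hbdd ⟨x, hx, rfl⟩
  have hE0 : 0 ≤ E := le_trans (abs_nonneg _) (hEb 0 (by norm_num))
  -- pointwise bounds on D at the nodes
  have hvmem : ∀ j ∈ Finset.range (n+1), v j ∈ Set.Icc (-1:ℝ) 1 := by
    intro j hj
    refine ⟨hvge j hj, ?_⟩
    have := hvlt0 j
    linarith
  have hfvj : ∀ j : ℕ, ffun x₀ (v j) = (v j)*((v j) - x₀)^2 := by
    intro j
    have h5 : x₀^2/4 ≤ (v j)^2 := by
      have h6 := hvsq j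
      have h7 : x₀ ≤ 1/κ := by rw [le_div_iff₀ hκpos]; exact hx₀κ
      have h8 : x₀^2 ≤ (1/κ)^2 := pow_le_pow_left₀ hx₀pos.le h7 2
      rw [div_pow, one_pow] at h8
      nlinarith [sq_nonneg x₀]
    unfold ffun
    rw [mfun_eq_zero h5]
    ring
  have hDval : ∀ j ∈ Finset.range (n+1), |Polynomial.eval (v j) D| ≤ κ^2*E + κ*μ := by
    intro j hj
    have hy0 := hvne0 j
    have hy2 := hvsq j
    have hyabs : 1/κ ≤ |v j| := by
      rw [abs_of_neg (hvlt0 j)]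
      have := hvneg j
      linarith
    have hDev : Polynomial.eval (v j) D =
        ((Polynomial.X*P₁).eval (v j) - ffun x₀ (v j))/(v j)^2 + μ/(v j) := by
      have h8 : Polynomial.eval (v j) D = R.eval (v j) - ((v j) - 2*x₀) := by
        rw [hDdef]; simp
      rw [h8, hfvj j]
      have hev := evalP (v j)
      have hXP : Polynomial.eval (v j) (Polynomial.X*P₁) = (v j) * Polynomial.eval (v j) P₁ := by
        simp
      field_simp
      linear_combination (-1)*hev
    rw [hDev]
    refine le_trans (abs_add_le _ _) ?_
    have hband : |((Polynomial.X*P₁).eval (v j) - ffun x₀ (v j))/(v j)^2| ≤ κ^2*E := by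
      rw [abs_div, abs_of_nonneg (sq_nonneg (v j) : (0:ℝ) ≤ (v j)^2)]
      rw [div_le_iff₀ (by positivity)]
      have h9 : |(Polynomial.X*P₁).eval (v j) - ffun x₀ (v j)| ≤ E := by
        rw [abs_sub_comm]; exact hEb (v j) (hvmem j hj)
      have h10 : 1 ≤ (v j)^2 * κ^2 := (div_le_iff₀ (by positivity)).mp hy2
      nlinarith [abs_nonneg ((Polynomial.X*P₁).eval (v j) - ffun x₀ (v j)), hE0, h9, h10]
    have hband2 : |μ/(v j)| ≤ κ*μ := by
      rw [abs_div, abs_of_nonneg hμpos.le]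
      rw [div_le_iff₀ (abs_pos.mpr hy0)]
      have h10 : 1 ≤ |v j| * κ := (div_le_iff₀ hκpos).mp hyabs
      nlinarith [h10, hμpos.le, hκpos]
    linarith
  -- basis bound
  have hbasis : ∀ j ∈ Finset.range (n+1),
      |Polynomial.eval x₀ (Lagrange.basis (Finset.range (n+1)) v j)| ≤ B := by
    intro j hj
    unfold Lagrange.basis
    rw [Polynomial.eval_prod, Finset.abs_prod]
    have hle : ∀ i ∈ (Finset.range (n+1)).erase j,
        |Polynomial.eval x₀ (Lagrange.basisDivisor (v j) (v i))| ≤ 2*κ := by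
      intro i hi
      obtain ⟨hij, hirange⟩ := Finset.mem_erase.mp hi
      have h1 : Polynomial.eval x₀ (Lagrange.basisDivisor (v j) (v i))
          = (v j - v i)⁻¹ * (x₀ - v i) := by
        simp [Lagrange.basisDivisor]
      rw [h1, abs_mul, abs_inv]
      have hijr : (1:ℝ) ≤ |(i:ℝ) - (j:ℝ)| := by
        have hijZ : ((i:ℤ)) ≠ ((j:ℤ)) := by exact_mod_cast hij
        have h2 : (1:ℤ) ≤ |(i:ℤ) - (j:ℤ)| := Int.one_le_abs (sub_ne_zero.mpr hijZ)
        have h3 : ((|(i:ℤ) - (j:ℤ)| : ℤ) : ℝ) = |(i:ℝ) - (j:ℝ)| := by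
          push_cast [Int.cast_abs]
          ring_nf
        have h4 : ((1:ℤ):ℝ) ≤ ((|(i:ℤ) - (j:ℤ)| : ℤ) : ℝ) := by exact_mod_cast h2
        rw [h3] at h4
        simpa using h4
      have hvji : 1/κ ≤ |v j - v i| := by
        have : v j - v i = ((i:ℝ) - (j:ℝ))/κ := by
          rw [hvj i, hvj j]; field_simp; ring
        rw [this, abs_div, abs_of_pos hκpos]
        rw [div_le_div_iff₀ hκpos hκpos]
        nlinarith [hijr, hκpos]
      have h2 : |v j - v i|⁻¹ ≤ κ := by
        rw [inv_eq_one_div]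
        have h2a : 0 < |v j - v i| := lt_of_lt_of_le (by positivity) hvji
        calc 1/|v j - v i| ≤ 1/(1/κ) := one_div_le_one_div_of_le (by positivity) hvji
          _ = κ := one_div_one_div κ
      have h3 : |x₀ - v i| ≤ 2 := by
        rw [abs_le]
        have h3a := hvge i hirange
        have h3b := hvlt0 i
        constructor <;> linarith
      calc |v j - v i|⁻¹ * |x₀ - v i| ≤ κ * 2 :=
            mul_le_mul h2 h3 (abs_nonneg _) hκpos.le
        _ = 2*κ := by ring
    calc ∏ i ∈ (Finset.range (n+1)).erase j,
          |Polynomial.eval x₀ (Lagrange.basisDivisor (v j) (v i))|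
        ≤ ∏ _i ∈ (Finset.range (n+1)).erase j, (2*κ) :=
          Finset.prod_le_prod (fun i _ => abs_nonneg _) hle
      _ = (2*κ)^(((Finset.range (n+1)).erase j).card) := Finset.prod_const _
      _ = B := by
          rw [Finset.card_erase_of_mem hj, Finset.card_range]
          simpa using hBdef.symm
  -- sum bound
  have hsumb : |Polynomial.eval x₀ D| ≤ κ*((κ^2*E + κ*μ)*B) := by
    rw [hDx₀]
    refine le_trans (Finset.abs_sum_le_sum_abs _ _)
      (le_trans (Finset.sum_le_sum (g := fun _ => (κ^2*E + κ*μ)*B) (fun j hj => ?_)) ?_)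
    · show |Polynomial.eval (v j) D * Polynomial.eval x₀ (Lagrange.basis (Finset.range (n+1)) v j)|
        ≤ (κ^2*E + κ*μ)*B
      rw [abs_mul]
      refine mul_le_mul (hDval j hj) (hbasis j hj) (abs_nonneg _) ?_
      have : 0 ≤ κ*μ := mul_nonneg hκpos.le hμpos.le
      have h11 : 0 ≤ κ^2*E := mul_nonneg (by positivity) hE0
      linarith
    · rw [Finset.sum_const, Finset.card_range, nsmul_eq_mul]
      push_cast
      rw [← hκdef]
  -- key positivity: D(x₀) ≥ μ/x₀
  have h5 : 0 ≤ (Polynomial.X*P₁).eval x₀ := hpos x₀ ⟨hx₀pos, hx₀n⟩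
  have h6 : Polynomial.eval x₀ D = R.eval x₀ + x₀ := by
    rw [hDdef]; simp; ring
  have h7 : μ/x₀ ≤ Polynomial.eval x₀ D := by
    rw [h6, div_le_iff₀ hx₀pos]
    have h8 : 0 ≤ x₀*((x₀^2 - μ) + x₀*R.eval x₀) := by rw [← evalP x₀]; exact h5
    nlinarith [hx₀pos]
  -- final chain
  have hchain : μ*d ≤ κ^3*B*E + κ^2*B*μ := by
    have h9 := le_trans h7 (le_trans (le_abs_self _) hsumb)
    have h10 : μ/x₀ = μ*d := by
      rw [hx₀def, div_div_eq_mul_div, div_one]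
    rw [h10] at h9
    nlinarith [h9]
  have hAE : 64*A*μ < E := by
    have h11 : 0 < κ^3*B := by positivity
    have h12 : 64*A*μ*(κ^3*B) < E*(κ^3*B) := by
      nlinarith [hμpos, hn1, hκ2B, hchain, hddef]
    exact lt_of_mul_lt_mul_right h12 h11.le
  rw [← hEdef]
  calc A * omegaK (iteratedDerivWithin 1 (ffun x₀) (Set.Icc (-1:ℝ) 1)) 3 1 (-1) 1
      ≤ A * (4*x₀^2) := mul_le_mul_of_nonneg_left (omega_bound hx₀pos) hA.le
    _ = 32*A*μ := by rw [hμdef]; ring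
    _ < 64*A*μ := by nlinarith [hμpos, hA]
    _ < E := hAE
end

section
/- For any n ∈ ℕ and any A > 0, there exists f ∈ C² ∩ Δ^(0)({0}) such that, for every polynomial P_n of degree ≤ n with P_n ∈ Δ^(0)({0}) and satisfying P_n(0) = f(0) and P_n'(0) = f'(0), one has ‖f - P_n‖ > A ω₄(f'', 1). Hence copositive approximation with first-order Hermite interpolation at the sign-change point 0 cannot achieve the rate ω₄(f'', 1) for f ∈ C². -/
open Set Filter

lemma q_deriv_aux (k : ℕ) (hk : 2 ≤ k) (t : ℝ) :
    HasDerivAt (fun t : ℝ => (max t 0)^k) ((k:ℝ) * (max t 0)^(k-1)) t := by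
  rcases lt_trichotomy t 0 with ht | rfl | ht
  · have h0 : HasDerivAt (fun _ : ℝ => (0:ℝ)) 0 t := hasDerivAt_const _ _
    have he : (fun t : ℝ => (max t 0)^k) =ᶠ[nhds t] fun _ => (0:ℝ) := by
      filter_upwards [Iio_mem_nhds ht] with y hy
      rw [max_eq_right (mem_Iio.mp hy).le, zero_pow (by omega)]
    rw [max_eq_right ht.le, zero_pow (by omega), mul_zero]
    exact h0.congr_of_eventuallyEq he
  · rw [hasDerivAt_iff_tendsto_slope]
    have hb : ∀ y : ℝ, y ∈ ({(0:ℝ)}ᶜ : Set ℝ) →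
        ‖slope (fun t : ℝ => (max t 0)^k) 0 y‖ ≤ |y|^(k-1) := by
      intro y hy
      have hy0 : y ≠ 0 := hy
      simp only [slope_def_field, max_self, zero_pow (show k ≠ 0 by omega), sub_zero]
      rw [div_eq_mul_inv, Real.norm_eq_abs, abs_mul, abs_pow, abs_inv]
      have h2 : |max y 0| ≤ |y| := by
        rcases le_or_gt y 0 with h | h
        · rw [max_eq_right h]; simp
        · rw [max_eq_left h.le]
      calc |max y 0| ^ k * |y|⁻¹ ≤ |y|^k * |y|⁻¹ := by
            gcongr
        _ = |y|^(k-1) := by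
            rw [← pow_sub_one_mul (by omega : k ≠ 0) |y|]
            field_simp
    have hlim : Tendsto (fun y : ℝ => |y|^(k-1)) (nhdsWithin 0 {(0:ℝ)}ᶜ) (nhds 0) := by
      have : Tendsto (fun y : ℝ => |y|^(k-1)) (nhds 0) (nhds (|(0:ℝ)|^(k-1))) :=
        ((continuous_abs.pow (k-1)).tendsto (0:ℝ))
      rw [abs_zero, zero_pow (by omega)] at this
      exact this.mono_left nhdsWithin_le_nhds
    rw [max_self, zero_pow (by omega), mul_zero]
    exact squeeze_zero_norm' (eventually_nhdsWithin_of_forall hb) hlim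
  · have hx : HasDerivAt (fun y : ℝ => y^k) ((k:ℝ) * t^(k-1)) t := by
      simpa using hasDerivAt_pow k t
    have he : (fun t : ℝ => (max t 0)^k) =ᶠ[nhds t] fun y => y^k := by
      filter_upwards [Ioi_mem_nhds ht] with y hy
      rw [max_eq_left (mem_Ioi.mp hy).le]
    rw [max_eq_left ht.le]
    exact hx.congr_of_eventuallyEq he

noncomputable def mm (e x : ℝ) : ℝ := max (1 - x^2/(2*e^2)) 0
noncomputable def ff (e x : ℝ) : ℝ := x^5 - e^2*x^3 + 2*e^2*x^3*(mm e x)^3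
noncomputable def FF1 (e x : ℝ) : ℝ := 5*x^4 - 3*e^2*x^2 + 6*e^2*x^2*(mm e x)^3 - 6*x^4*(mm e x)^2
noncomputable def FF2 (e x : ℝ) : ℝ :=
  20*x^3 - 6*e^2*x + 12*e^2*x*(mm e x)^3 - 42*x^3*(mm e x)^2 + 12*x^5*(mm e x)/e^2

variable {e : ℝ}

lemma hasDerivAt_w (he : e ≠ 0) (x : ℝ) :
    HasDerivAt (fun x : ℝ => 1 - x^2/(2*e^2)) (-x/e^2) x := by
  have : HasDerivAt (fun x : ℝ => 1 - x^2/(2*e^2)) (0 - (2*x^1)/(2*e^2)) x := by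
    exact (hasDerivAt_const x 1).sub ((hasDerivAt_pow 2 x).div_const _)
  convert this using 1
  have : e^2 ≠ 0 := pow_ne_zero _ he
  field_simp
  ring

lemma hasDerivAt_m3 (he : e ≠ 0) (x : ℝ) :
    HasDerivAt (fun x => (mm e x)^3) (3*(mm e x)^2 * (-x/e^2)) x := by
  have := (q_deriv_aux 3 (by norm_num) (1 - x^2/(2*e^2))).comp x (hasDerivAt_w he x)
  simpa [mm, Function.comp_def] using this

lemma hasDerivAt_m2 (he : e ≠ 0) (x : ℝ) :
    HasDerivAt (fun x => (mm e x)^2) (2*(mm e x) * (-x/e^2)) x := by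
  have := (q_deriv_aux 2 (by norm_num) (1 - x^2/(2*e^2))).comp x (hasDerivAt_w he x)
  simpa [mm, Function.comp_def] using this

lemma hasDerivAt_ff (he : e ≠ 0) (x : ℝ) : HasDerivAt (ff e) (FF1 e x) x := by
  have h1 : HasDerivAt (fun x : ℝ => x^5 - e^2*x^3) (5*x^4 - e^2*(3*x^2)) x := by
    simpa [Pi.sub_def] using (hasDerivAt_pow 5 x).sub ((hasDerivAt_pow 3 x).const_mul (e^2))
  have h2 : HasDerivAt (fun x : ℝ => 2*e^2*x^3*(mm e x)^3)
      ((2*e^2*(3*x^2))*(mm e x)^3 + 2*e^2*x^3*(3*(mm e x)^2 * (-x/e^2))) x := by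
    have ha : HasDerivAt (fun x : ℝ => 2*e^2*x^3) (2*e^2*(3*x^2)) x := by
      simpa using (hasDerivAt_pow 3 x).const_mul (2*e^2)
    exact ha.mul (hasDerivAt_m3 he x)
  have := h1.add h2
  have he2 : e^2 ≠ 0 := pow_ne_zero _ he
  refine this.congr_deriv ?_
  unfold FF1
  field_simp
  ring

lemma hasDerivAt_FF1 (he : e ≠ 0) (x : ℝ) : HasDerivAt (FF1 e) (FF2 e x) x := by
  have h1 : HasDerivAt (fun x : ℝ => 5*x^4 - 3*e^2*x^2) (5*(4*x^3) - 3*e^2*(2*x)) x := by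
    have := ((hasDerivAt_pow 4 x).const_mul (5:ℝ)).sub ((hasDerivAt_pow 2 x).const_mul (3*e^2))
    refine this.congr_deriv ?_; ring
  have h2 : HasDerivAt (fun x : ℝ => 6*e^2*x^2*(mm e x)^3)
      ((6*e^2*(2*x))*(mm e x)^3 + 6*e^2*x^2*(3*(mm e x)^2 * (-x/e^2))) x := by
    have ha : HasDerivAt (fun x : ℝ => 6*e^2*x^2) (6*e^2*(2*x)) x := by
      simpa using (hasDerivAt_pow 2 x).const_mul (6*e^2)
    exact ha.mul (hasDerivAt_m3 he x)
  have h3 : HasDerivAt (fun x : ℝ => 6*x^4*(mm e x)^2)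
      ((6*(4*x^3))*(mm e x)^2 + 6*x^4*(2*(mm e x) * (-x/e^2))) x := by
    have ha : HasDerivAt (fun x : ℝ => 6*x^4) (6*(4*x^3)) x := by
      simpa using (hasDerivAt_pow 4 x).const_mul (6:ℝ)
    exact ha.mul (hasDerivAt_m2 he x)
  have := (h1.add h2).sub h3
  have he2 : e^2 ≠ 0 := pow_ne_zero _ he
  have heq : FF2 e x = (5*(4*x^3) - 3*e^2*(2*x) + ((6*e^2*(2*x))*(mm e x)^3 + 6*e^2*x^2*(3*(mm e x)^2 * (-x/e^2))) - ((6*(4*x^3))*(mm e x)^2 + 6*x^4*(2*(mm e x) * (-x/e^2)))) := by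
    unfold FF2
    field_simp
    ring
  rw [show FF1 e = fun x => 5*x^4 - 3*e^2*x^2 + 6*e^2*x^2*(mm e x)^3 - 6*x^4*(mm e x)^2 from rfl]
  rw [heq]
  exact this

lemma continuous_FF2 (he : e ≠ 0) : Continuous (FF2 e) := by
  have hm : Continuous (mm e) := by
    unfold mm
    fun_prop
  unfold FF2
  fun_prop

lemma contDiff_ff (he : e ≠ 0) : ContDiff ℝ 2 (ff e) := by
  have hd : deriv (ff e) = FF1 e := funext fun x => (hasDerivAt_ff he x).deriv
  rw [show (2 : WithTop ℕ∞) = 1 + 1 by norm_num, contDiff_succ_iff_deriv]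
  refine ⟨fun x => (hasDerivAt_ff he x).differentiableAt, by simp, ?_⟩
  rw [hd, contDiff_one_iff_deriv]
  refine ⟨fun x => (hasDerivAt_FF1 he x).differentiableAt, ?_⟩
  rw [funext fun x => (hasDerivAt_FF1 he x).deriv]
  exact continuous_FF2 he

lemma itderiv2 (he : e ≠ 0) (x : ℝ) (hx : x ∈ Icc (-1:ℝ) 1) :
    iteratedDerivWithin 2 (ff e) (Icc (-1:ℝ) 1) x = FF2 e x := by
  have hu : UniqueDiffOn ℝ (Icc (-1:ℝ) 1) := uniqueDiffOn_Icc (by norm_num)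
  rw [iteratedDerivWithin_succ]
  have h1 : Set.EqOn (iteratedDerivWithin 1 (ff e) (Icc (-1:ℝ) 1)) (FF1 e) (Icc (-1:ℝ) 1) := by
    intro y hy
    rw [iteratedDerivWithin_one,
      (hasDerivAt_ff he y).differentiableAt.derivWithin (hu y hy)]
    exact (hasDerivAt_ff he y).deriv
  rw [derivWithin_congr h1 (h1 hx)]
  rw [(hasDerivAt_FF1 he x).differentiableAt.derivWithin (hu x hx)]
  exact (hasDerivAt_FF1 he x).deriv

lemma itderiv1 (he : e ≠ 0) :
    iteratedDerivWithin 1 (ff e) (Icc (-1:ℝ) 1) 0 = 0 := by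
  have hu : UniqueDiffOn ℝ (Icc (-1:ℝ) 1) := uniqueDiffOn_Icc (by norm_num)
  have h0 : (0:ℝ) ∈ Icc (-1:ℝ) 1 := by norm_num
  rw [iteratedDerivWithin_one,
    (hasDerivAt_ff he 0).differentiableAt.derivWithin (hu 0 h0),
    (hasDerivAt_ff he 0).deriv]
  unfold FF1
  norm_num

lemma psi_nonneg (he : 0 < e) (x : ℝ) : 0 ≤ x^2 - e^2 + 2*e^2*(mm e x)^3 := by
  have he2 : (0:ℝ) < e^2 := by positivity
  rcases le_or_gt (2*e^2) (x^2) with h | h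
  · have hm : 0 ≤ (mm e x)^3 := by
      have : 0 ≤ mm e x := le_max_right _ _
      positivity
    nlinarith
  · have hw : mm e x = 1 - x^2/(2*e^2) := by
      apply max_eq_left
      rw [sub_nonneg, div_le_one (by positivity)]
      exact h.le
    set u : ℝ := x^2/(2*e^2) with hu
    have hu0 : 0 ≤ u := by positivity
    have hu1 : u < 1 := by
      rw [hu, div_lt_one (by positivity)]
      exact h
    have hx2 : x^2 = 2*e^2*u := by
      rw [hu]; field_simp
    rw [hw, hx2]
    have key : 0 ≤ 1 - 4*u + 6*u^2 - 2*u^3 := by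
      nlinarith [sq_nonneg (1-2*u), mul_nonneg (mul_nonneg hu0 hu0) (sub_nonneg.mpr hu1.le)]
    nlinarith [key]

lemma ff_eq_cube_mul (x : ℝ) : ff e x = x^3 * (x^2 - e^2 + 2*e^2*(mm e x)^3) := by
  unfold ff; ring

lemma delta0_ff (he : 0 < e) : Delta0Zero (ff e) := by
  constructor
  · intro x hx
    rw [ff_eq_cube_mul]
    apply mul_nonpos_of_nonpos_of_nonneg
    · have hx0 : x ≤ 0 := hx.2
      nlinarith [sq_nonneg x, mul_nonneg (sq_nonneg x) (neg_nonneg.mpr hx0)]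
    · exact psi_nonneg he x
  · intro x hx
    rw [ff_eq_cube_mul]
    apply mul_nonneg
    · have : 0 ≤ x := hx.1
      positivity
    · exact psi_nonneg he x

noncomputable def eta (e x : ℝ) : ℝ :=
  12*e^2*x*(mm e x)^3 - 42*x^3*(mm e x)^2 + 12*x^5*(mm e x)/e^2

lemma FF2_eq (x : ℝ) : FF2 e x = 20*x^3 - 6*e^2*x + eta e x := by
  unfold FF2 eta; ring

lemma eta_bound (he : 0 < e) (x : ℝ) : |eta e x| ≤ 300*e^3 := by
  have he2 : (0:ℝ) < e^2 := by positivity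
  rcases lt_or_ge (2*e^2) (x^2) with h | h
  · have hm : mm e x = 0 := by
      apply max_eq_right
      rw [sub_nonpos, le_div_iff₀ (by positivity)]
      nlinarith
    unfold eta
    rw [hm]
    simp
    positivity
  · -- |x| ≤ 1.5 e
    have hax : |x| ≤ 1.5*e := by
      nlinarith [sq_abs x, abs_nonneg x]
    have hm0 : 0 ≤ mm e x := le_max_right _ _
    have hm1 : mm e x ≤ 1 := by
      apply max_le _ (by norm_num)
      have : 0 ≤ x^2/(2*e^2) := by positivity
      linarith
    set m := mm e x
    have h1 : |12*e^2*x*m^3| ≤ 18*e^3 := by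
      rw [abs_mul]
      have : |12*e^2*x| = 12*e^2*|x| := by
        rw [abs_mul, abs_of_nonneg (by positivity : (0:ℝ) ≤ 12*e^2)]
      rw [this, abs_pow, abs_of_nonneg hm0]
      have hmp : m^3 ≤ 1 := by
        calc m^3 ≤ 1^3 := pow_le_pow_left₀ hm0 hm1 3
        _ = 1 := one_pow 3
      nlinarith [mul_nonneg (by positivity : (0:ℝ) ≤ 12*e^2) (abs_nonneg x)]
    have h2 : |42*x^3*m^2| ≤ 142*e^3 := by
      rw [abs_mul, abs_mul, abs_pow, abs_pow, abs_of_nonneg hm0]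
      have hx3 : |x|^3 ≤ (1.5*e)^3 := pow_le_pow_left₀ (abs_nonneg x) hax 3
      have hmp : m^2 ≤ 1 := by
        calc m^2 ≤ 1^2 := pow_le_pow_left₀ hm0 hm1 2
        _ = 1 := one_pow 2
      have h42 : |(42:ℝ)| = 42 := by norm_num
      rw [h42]
      nlinarith [pow_nonneg (abs_nonneg x) 3, sq_nonneg m]
    have h3 : |12*x^5*m/e^2| ≤ 92*e^3 := by
      rw [abs_div, abs_mul, abs_mul, abs_pow, abs_of_nonneg hm0,
        abs_of_nonneg he2.le]
      have hx5 : |x|^5 ≤ (1.5*e)^5 := pow_le_pow_left₀ (abs_nonneg x) hax 5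
      rw [div_le_iff₀ he2]
      have h12 : |(12:ℝ)| = 12 := by norm_num
      rw [h12]
      have : (1.5*e)^5 = 7.59375*e^5 := by ring
      nlinarith [pow_nonneg (abs_nonneg x) 5]
    unfold eta
    calc |12*e^2*x*(mm e x)^3 - 42*x^3*(mm e x)^2 + 12*x^5*(mm e x)/e^2|
        ≤ |12*e^2*x*(mm e x)^3 - 42*x^3*(mm e x)^2| + |12*x^5*(mm e x)/e^2| := abs_add_le _ _
      _ ≤ |12*e^2*x*(mm e x)^3| + |42*x^3*(mm e x)^2| + |12*x^5*(mm e x)/e^2| := by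
          have := abs_sub (12*e^2*x*(mm e x)^3) (42*x^3*(mm e x)^2)
          linarith
      _ ≤ 18*e^3 + 142*e^3 + 92*e^3 := by
          have := h1; have := h2; have := h3
          linarith
      _ ≤ 300*e^3 := by nlinarith [pow_pos he 3]

lemma omegaK_bound (he : 0 < e) :
    omegaK (iteratedDerivWithin 2 (ff e) (Icc (-1:ℝ) 1)) 4 1 (-1) 1 ≤ 4800*e^3 := by
  unfold omegaK
  apply Real.sSup_le
  · rintro v ⟨h, x, hh0, hh1, hx1, hx2, rfl⟩
    have hmem : ∀ i : ℕ, i ∈ Finset.range 5 → x + (i:ℝ)*h ∈ Icc (-1:ℝ) 1 := by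
      intro i hi
      have hi4 : (i:ℝ) ≤ 4 := by
        have := Finset.mem_range.mp hi
        exact_mod_cast Nat.lt_succ_iff.mp this
      constructor
      · have : 0 ≤ (i:ℝ)*h := mul_nonneg (Nat.cast_nonneg i) hh0.le
        linarith
      · have h4 : (i:ℝ)*h ≤ 4*h := mul_le_mul_of_nonneg_right hi4 hh0.le
        have : x + (4:ℕ)*h ≤ 1 := hx2
        push_cast at this
        linarith
    have hrw : ∑ i ∈ Finset.range (4 + 1),
        (-1 : ℝ) ^ (4 - i) * ((4:ℕ).choose i : ℝ) *
          iteratedDerivWithin 2 (ff e) (Icc (-1:ℝ) 1) (x + (i : ℝ) * h)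
        = ∑ i ∈ Finset.range 5,
        (-1 : ℝ) ^ (4 - i) * ((4:ℕ).choose i : ℝ) * FF2 e (x + (i : ℝ) * h) := by
      apply Finset.sum_congr rfl
      intro i hi
      rw [itderiv2 he.ne' _ (hmem i hi)]
    rw [hrw]
    have hsum : ∑ i ∈ Finset.range 5,
        (-1 : ℝ) ^ (4 - i) * ((4:ℕ).choose i : ℝ) * FF2 e (x + (i : ℝ) * h)
        = eta e x - 4*eta e (x+h) + 6*eta e (x+2*h) - 4*eta e (x+3*h) + eta e (x+4*h) := by
      simp only [Finset.sum_range_succ, Finset.sum_range_zero, FF2_eq]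
      norm_num [Nat.choose]
      ring
    rw [hsum]
    have b0 := abs_le.mp (eta_bound he x)
    have b1 := abs_le.mp (eta_bound he (x+h))
    have b2 := abs_le.mp (eta_bound he (x+2*h))
    have b3 := abs_le.mp (eta_bound he (x+3*h))
    have b4 := abs_le.mp (eta_bound he (x+4*h))
    rw [abs_le]
    constructor <;> [nlinarith [b0.1, b0.2, b1.1, b1.2, b2.1, b2.2, b3.1, b3.2, b4.1, b4.2];
      nlinarith [b0.1, b0.2, b1.1, b1.2, b2.1, b2.2, b3.1, b3.2, b4.1, b4.2]]
  · positivity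

lemma supNorm_ge (g : ℝ → ℝ) (hg : ContinuousOn g (Icc (-1:ℝ) 1)) (x : ℝ)
    (hx : x ∈ Icc (-1:ℝ) 1) : |g x| ≤ supNorm g (-1) 1 := by
  apply le_csSup
  · exact (isCompact_Icc.image_of_continuousOn (continuous_abs.comp_continuousOn hg)).bddAbove
  · exact ⟨x, hx, rfl⟩

lemma coeff3_nonneg (P : Polynomial ℝ) (h0 : P.coeff 0 = 0) (h1 : P.coeff 1 = 0)
    (hneg : ∀ x ∈ Icc (-1:ℝ) 0, P.eval x ≤ 0) (hpos : ∀ x ∈ Icc (0:ℝ) 1, 0 ≤ P.eval x) :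
    0 ≤ P.coeff 3 := by
  have hdvd : (Polynomial.X : Polynomial ℝ)^2 ∣ P := by
    rw [Polynomial.X_pow_dvd_iff]
    intro d hd
    interval_cases d <;> assumption
  obtain ⟨S, hS⟩ := hdvd
  have hSpos : ∀ x : ℝ, x ∈ Ioc (0:ℝ) 1 → 0 ≤ S.eval x := by
    intro x hx
    have hP : 0 ≤ P.eval x := hpos x ⟨hx.1.le, hx.2⟩
    rw [hS, Polynomial.eval_mul, Polynomial.eval_pow, Polynomial.eval_X] at hP
    have hx0 : (0:ℝ) < x := hx.1
    exact nonneg_of_mul_nonneg_right hP (by positivity)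
  have hSneg : ∀ x : ℝ, x ∈ Ico (-1:ℝ) 0 → S.eval x ≤ 0 := by
    intro x hx
    have hP : P.eval x ≤ 0 := hneg x ⟨hx.1, hx.2.le⟩
    rw [hS, Polynomial.eval_mul, Polynomial.eval_pow, Polynomial.eval_X] at hP
    have hx2 : 0 < x^2 := by
      have : x ≠ 0 := ne_of_lt hx.2
      positivity
    nlinarith
  have hScont : Continuous fun x : ℝ => S.eval x := S.continuous
  haveI : (nhdsWithin (0:ℝ) (Ioi 0)).NeBot := nhdsGT_neBot 0
  haveI : (nhdsWithin (0:ℝ) (Iio 0)).NeBot := nhdsLT_neBot 0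
  have hS0a : 0 ≤ S.eval 0 := by
    apply ge_of_tendsto ((hScont.tendsto 0).mono_left
      (nhdsWithin_le_nhds : nhdsWithin (0:ℝ) (Ioi 0) ≤ nhds 0))
    filter_upwards [Ioc_mem_nhdsGT_of_mem (by norm_num : (0:ℝ) ∈ Ico (0:ℝ) 1)] with y hy
    exact hSpos y hy
  have hS0b : S.eval 0 ≤ 0 := by
    apply le_of_tendsto ((hScont.tendsto 0).mono_left
      (nhdsWithin_le_nhds : nhdsWithin (0:ℝ) (Iio 0) ≤ nhds 0))
    filter_upwards [Ico_mem_nhdsLT_of_mem (by norm_num : (0:ℝ) ∈ Ioc (-1:ℝ) 0)] with y hy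
    exact hSneg y hy
  have hS0 : S.eval 0 = 0 := le_antisymm hS0b hS0a
  have hXdvd : (Polynomial.X : Polynomial ℝ) ∣ S := by
    rw [Polynomial.X_dvd_iff, Polynomial.coeff_zero_eq_eval_zero]
    exact hS0
  obtain ⟨R, hR⟩ := hXdvd
  have hP3 : P = Polynomial.X^3 * R := by
    rw [hS, hR]; ring
  have hc : P.coeff 3 = R.coeff 0 := by
    rw [hP3]
    have := Polynomial.coeff_X_pow_mul R 3 0
    simpa using this
  rw [hc, Polynomial.coeff_zero_eq_eval_zero]
  have hRpos : ∀ x : ℝ, x ∈ Ioc (0:ℝ) 1 → 0 ≤ R.eval x := by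
    intro x hx
    have hP : 0 ≤ P.eval x := hpos x ⟨hx.1.le, hx.2⟩
    rw [hP3, Polynomial.eval_mul, Polynomial.eval_pow, Polynomial.eval_X] at hP
    have hx0 : (0:ℝ) < x := hx.1
    have hx3 : (0:ℝ) < x^3 := by positivity
    exact nonneg_of_mul_nonneg_right hP hx3
  apply ge_of_tendsto ((R.continuous.tendsto 0).mono_left
    (nhdsWithin_le_nhds : nhdsWithin (0:ℝ) (Ioi 0) ≤ nhds 0))
  filter_upwards [Ioc_mem_nhdsGT_of_mem (by norm_num : (0:ℝ) ∈ Ico (0:ℝ) 1)] with y hy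
  exact hRpos y hy

lemma FD (N : ℕ) : ∃ C : ℝ, 0 < C ∧ ∀ U : Polynomial ℝ, U.natDegree ≤ N →
    ∀ E : ℝ, 0 ≤ E → (∀ x ∈ Icc (1/2:ℝ) 1, |U.eval x| ≤ E) → |U.coeff 3| ≤ C * E := by
  classical
  set s : Finset ℕ := Finset.range (N+1) with hs
  set v : ℕ → ℝ := fun i => 1/2 + (i:ℝ)/(2*(N+1)) with hv
  have hvmem : ∀ i ∈ s, v i ∈ Icc (1/2:ℝ) 1 := by
    intro i hi
    have hiN : (i:ℝ) ≤ N := by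
      have := Finset.mem_range.mp hi
      exact_mod_cast Nat.lt_succ_iff.mp this
    have hden : (0:ℝ) < 2*(N+1) := by positivity
    constructor
    · have : (0:ℝ) ≤ (i:ℝ)/(2*(N+1)) := by positivity
      simp only [hv]; linarith
    · simp only [hv]
      have : (i:ℝ)/(2*(N+1)) ≤ 1/2 := by
        rw [div_le_div_iff₀ hden (by norm_num)]
        linarith
      linarith
  have hinj : Set.InjOn v s := by
    intro i _ j _ hij
    simp only [hv] at hij
    have hden : (2*((N:ℝ)+1)) ≠ 0 := by positivity
    have : (i:ℝ) = j := by
      field_simp at hij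
      linarith
    exact_mod_cast this
  refine ⟨∑ i ∈ s, |(Lagrange.basis s v i).coeff 3| + 1, by positivity, ?_⟩
  intro U hU E hE hbound
  have hdeg : U.degree < s.card := by
    rw [hs, Finset.card_range]
    calc U.degree ≤ (U.natDegree : WithBot ℕ) := Polynomial.degree_le_natDegree
    _ < ((N+1 : ℕ) : WithBot ℕ) := by
        exact_mod_cast Nat.lt_succ_of_le hU
  have heq := Lagrange.eq_interpolate hinj hdeg
  have hc3 : U.coeff 3 = ∑ i ∈ s, U.eval (v i) * (Lagrange.basis s v i).coeff 3 := by
    conv_lhs => rw [heq]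
    rw [Lagrange.interpolate_apply, Polynomial.finset_sum_coeff]
    simp only [Polynomial.coeff_C_mul]
  rw [hc3]
  calc |∑ i ∈ s, U.eval (v i) * (Lagrange.basis s v i).coeff 3|
      ≤ ∑ i ∈ s, |U.eval (v i) * (Lagrange.basis s v i).coeff 3| := Finset.abs_sum_le_sum_abs _ _
    _ ≤ ∑ i ∈ s, E * |(Lagrange.basis s v i).coeff 3| := by
        apply Finset.sum_le_sum
        intro i hi
        rw [abs_mul]
        exact mul_le_mul_of_nonneg_right (hbound _ (hvmem i hi)) (abs_nonneg _)
    _ = (∑ i ∈ s, |(Lagrange.basis s v i).coeff 3|) * E := by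
        rw [Finset.sum_mul]
        congr 1
        ext i
        ring
    _ ≤ (∑ i ∈ s, |(Lagrange.basis s v i).coeff 3| + 1) * E := by
        apply mul_le_mul_of_nonneg_right _ hE
        linarith

/-- Copositive approximation with interpolation at `Y_s = {0}`, negative result for
`f ∈ C²`: for any `n ∈ ℕ` and `A > 0`, there is `f ∈ C²[-1,1] ∩ Δ^(0)({0})` such that
any polynomial of degree ≤ n in `Δ^(0)({0})` with `P_n(0) = f(0)` and `P_n'(0) = f'(0)`
satisfies `‖f - P_n‖ > A ω₄(f'', 1)`. -/
theorem statement15 (n : ℕ) (hn : 1 ≤ n) (A : ℝ) (hA : 0 < A) :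
    ∃ f : ℝ → ℝ, ContDiffOn ℝ 2 f (Set.Icc (-1 : ℝ) 1) ∧ Delta0Zero f ∧
      ∀ P : Polynomial ℝ, P.natDegree ≤ n →
        Delta0Zero (fun x => P.eval x) →
        P.eval 0 = f 0 →
        (Polynomial.derivative P).eval 0
          = iteratedDerivWithin 1 f (Set.Icc (-1 : ℝ) 1) 0 →
        A * omegaK (iteratedDerivWithin 2 f (Set.Icc (-1 : ℝ) 1)) 4 1 (-1) 1
          < supNorm (fun x => f x - P.eval x) (-1) 1 := by
  obtain ⟨C, hC, hFD⟩ := FD (max n 5)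
  set e : ℝ := min (1/4) (1/(9600*A*C)) with he_def
  have he : 0 < e := lt_min (by norm_num) (by positivity)
  have he4 : e ≤ 1/4 := min_le_left _ _
  have heAC : 9600*A*C*e ≤ 1 := by
    have h1 : e ≤ 1/(9600*A*C) := min_le_right _ _
    have h2 : (0:ℝ) < 9600*A*C := by positivity
    calc 9600*A*C*e ≤ 9600*A*C*(1/(9600*A*C)) := by
          exact mul_le_mul_of_nonneg_left h1 h2.le
      _ = 1 := by field_simp
  refine ⟨ff e, (contDiff_ff he.ne').contDiffOn, delta0_ff he, ?_⟩
  intro P hPdeg hPcop hP0 hP1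
  have hff0 : ff e 0 = 0 := by simp [ff]
  have hP0' : P.eval 0 = 0 := by rw [hP0, hff0]
  have hc0 : P.coeff 0 = 0 := by rw [Polynomial.coeff_zero_eq_eval_zero]; exact hP0'
  have hP1' : (Polynomial.derivative P).eval 0 = 0 := by rw [hP1, itderiv1 he.ne']
  have hc1 : P.coeff 1 = 0 := by
    have hder := Polynomial.coeff_derivative P 0
    rw [Polynomial.coeff_zero_eq_eval_zero, hP1'] at hder
    simpa using hder.symm
  have ha3 : 0 ≤ P.coeff 3 := coeff3_nonneg P hc0 hc1 hPcop.1 hPcop.2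
  set U : Polynomial ℝ := P - Polynomial.X^5 + Polynomial.C (e^2) * Polynomial.X^3 with hU_def
  have hU3 : U.coeff 3 = P.coeff 3 + e^2 := by
    rw [hU_def, Polynomial.coeff_add, Polynomial.coeff_sub, Polynomial.coeff_C_mul,
      Polynomial.coeff_X_pow, Polynomial.coeff_X_pow]
    norm_num
  have hUdeg : U.natDegree ≤ max n 5 := by
    apply le_trans (Polynomial.natDegree_add_le _ _)
    apply max_le
    · apply le_trans (Polynomial.natDegree_sub_le _ _)
      apply max_le (le_max_of_le_left hPdeg)
      rw [Polynomial.natDegree_X_pow]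
      exact le_max_right _ _
    · apply le_trans (Polynomial.natDegree_C_mul_le _ _)
      rw [Polynomial.natDegree_X_pow]
      exact le_trans (by norm_num) (le_max_right n 5)
  set E := supNorm (fun x => ff e x - P.eval x) (-1) 1 with hE_def
  have hcontfp : ContinuousOn (fun x => ff e x - P.eval x) (Icc (-1:ℝ) 1) :=
    ((contDiff_ff he.ne').continuous.sub P.continuous).continuousOn
  have hpt : ∀ x ∈ Icc (-1:ℝ) 1, |ff e x - P.eval x| ≤ E := fun x hx =>
    supNorm_ge _ hcontfp x hx
  have hE0 : 0 ≤ E := le_trans (abs_nonneg _) (hpt 1 (by norm_num))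
  have hUbound : ∀ x ∈ Icc (1/2:ℝ) 1, |U.eval x| ≤ E := by
    intro x hx
    have hx' : x ∈ Icc (-1:ℝ) 1 := ⟨by linarith [hx.1], hx.2⟩
    have hm0 : mm e x = 0 := by
      apply max_eq_right
      rw [sub_nonpos, le_div_iff₀ (by positivity)]
      have hx1 : (1/2:ℝ) ≤ x := hx.1
      nlinarith
    have heval : U.eval x = -(ff e x - P.eval x) := by
      simp only [hU_def, Polynomial.eval_add, Polynomial.eval_sub, Polynomial.eval_mul,
        Polynomial.eval_pow, Polynomial.eval_X, Polynomial.eval_C]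
      unfold ff
      rw [hm0]
      ring
    rw [heval, abs_neg]
    exact hpt x hx'
  have hUc : e^2 ≤ C * E := by
    have hb := hFD U hUdeg E hE0 hUbound
    rw [hU3, abs_of_nonneg (by positivity)] at hb
    linarith
  have hlt : A * (4800*e^3) < E := by
    have hEdiv : e^2/C ≤ E := by
      rw [div_le_iff₀ hC]
      linarith [hUc, mul_comm C E]
    have hstrict : A*(4800*e^3) < e^2/C := by
      rw [lt_div_iff₀ hC]
      nlinarith [pow_pos he 2, pow_pos he 3, mul_pos (mul_pos hA hC) (pow_pos he 3)]
    linarith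
  calc A * omegaK (iteratedDerivWithin 2 (ff e) (Set.Icc (-1 : ℝ) 1)) 4 1 (-1) 1
      ≤ A * (4800*e^3) := mul_le_mul_of_nonneg_left (omegaK_bound he) hA.le
    _ < E := hlt
end
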